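/- arXiv:2204.01304 — 8 statements merged into one kernel-verified Lean document; each statement's English description precedes it below -/
import Mathlib

section
/- Let μ be a Borel probability measure on ℝ^d and (B_n) a μ-asymptotically covering sequence of balls with radii tending to 0. Then for every open set Ω and every g∈ℕ, there exists a subsequence of pairwise disjoint balls from {B_n : n≥g}, all contained in Ω, whose union has μ-measure equal to μ(Ω). -/
open MeasureTheory Metric Set Filter
open scoped ENNReal Topology

/-- A sequence of balls `B n = closedBall (x n) (r n)` is `μ`-asymptotically covering:
there is `C > 0` such that for every open set `Ω` and every `g`, finitely many pairwise
disjoint balls of index `≥ g` lie in `Ω` and their union has `μ`-measure `≥ C * μ Ω`. -/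
def muAC {d : ℕ} (μ : Measure (Fin d → ℝ)) (x : ℕ → Fin d → ℝ) (r : ℕ → ℝ) : Prop :=
  ∃ C : ℝ≥0∞, 0 < C ∧ ∀ Ω : Set (Fin d → ℝ), IsOpen Ω → ∀ g : ℕ,
    ∃ F : Finset ℕ, (∀ n ∈ F, g ≤ n) ∧
      (∀ n ∈ F, closedBall (x n) (r n) ⊆ Ω) ∧
      ((F : Set ℕ).Pairwise fun m n =>
        Disjoint (closedBall (x m) (r m)) (closedBall (x n) (r n))) ∧
      C * μ Ω ≤ μ (⋃ n ∈ F, closedBall (x n) (r n))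

/-- if `(B_n)` is `μ`-a.c. with radii tending to `0`, then every open set `Ω`
can be covered, up to a `μ`-null set, by pairwise disjoint balls of the sequence with
indices `≥ g`, all contained in `Ω`. -/
theorem stmt2 {d : ℕ} (μ : Measure (Fin d → ℝ)) [IsProbabilityMeasure μ]
    (x : ℕ → Fin d → ℝ) (r : ℕ → ℝ) (hr0 : ∀ n, 0 < r n)
    (hr : Tendsto r atTop (𝓝 0)) (hac : muAC μ x r)
    (Ω : Set (Fin d → ℝ)) (hΩ : IsOpen Ω) (g : ℕ) :
    ∃ S : Set ℕ, (∀ n ∈ S, g ≤ n) ∧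
      (∀ n ∈ S, closedBall (x n) (r n) ⊆ Ω) ∧
      (S.Pairwise fun m n =>
        Disjoint (closedBall (x m) (r m)) (closedBall (x n) (r n))) ∧
      μ (⋃ n ∈ S, closedBall (x n) (r n)) = μ Ω := by
    classical
  obtain ⟨C, hC, H⟩ := hac
  choose F hg hsub hdisj hmeas using H
  -- iterated construction of open sets
  let Os : ℕ → {O : Set (Fin d → ℝ) // IsOpen O} := fun k =>
    Nat.rec ⟨Ω, hΩ⟩
      (fun _ O => ⟨O.1 \ ⋃ n ∈ F O.1 O.2 g, closedBall (x n) (r n),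
        O.2.sdiff (isClosed_biUnion_finset fun n _ => isClosed_closedBall)⟩) k
  set Fk : ℕ → Finset ℕ := fun k => F (Os k).1 (Os k).2 g with hFk
  have hOs : ∀ k, (Os (k+1)).1 = (Os k).1 \ ⋃ n ∈ Fk k, closedBall (x n) (r n) :=
    fun k => rfl
  have hOsΩ : ∀ k, (Os k).1 ⊆ Ω := by
    intro k
    induction k with
    | zero => exact subset_rfl
    | succ k ih => rw [hOs]; exact (diff_subset).trans ih
  have hmono : ∀ j k, j ≤ k → (Os k).1 ⊆ (Os j).1 := by
    intro j k
    induction k with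
    | zero => intro hjk; obtain rfl := Nat.le_zero.mp hjk; exact subset_rfl
    | succ k ih =>
      intro hjk
      rcases Nat.lt_or_ge j (k+1) with h | h
      · exact (by rw [hOs]; exact diff_subset : (Os (k+1)).1 ⊆ (Os k).1).trans
          (ih (Nat.lt_succ_iff.mp h))
      · obtain rfl := le_antisymm hjk h
        exact subset_rfl
  set S : Set ℕ := ⋃ k, ((Fk k : Finset ℕ) : Set ℕ) with hS
  have hmemS : ∀ {n}, n ∈ S → ∃ k, n ∈ Fk k := by
    intro n hn; simpa [hS] using hn
  refine ⟨S, ?_, ?_, ?_, ?_⟩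
  · intro n hn; obtain ⟨k, hk⟩ := hmemS hn; exact hg _ _ _ _ hk
  · intro n hn; obtain ⟨k, hk⟩ := hmemS hn
    exact (hsub _ _ _ _ hk).trans (hOsΩ k)
  · -- pairwise disjoint
    have key : ∀ j k, j < k → ∀ m ∈ Fk j, ∀ n ∈ Fk k,
        Disjoint (closedBall (x m) (r m)) (closedBall (x n) (r n)) := by
      intro j k hjk m hm n hn
      have h1 : closedBall (x n) (r n) ⊆ (Os k).1 := hsub _ _ _ _ hn
      have h2 : (Os k).1 ⊆ (Os (j+1)).1 := hmono _ _ hjk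
      rw [Set.disjoint_right]
      intro a ha
      have : a ∈ (Os (j+1)).1 := h2 (h1 ha)
      rw [hOs] at this
      exact fun hab => this.2 (Set.mem_biUnion hm hab)
    intro m hm n hn hmn
    obtain ⟨j, hj⟩ := hmemS hm
    obtain ⟨k, hk⟩ := hmemS hn
    rcases lt_trichotomy j k with h | h | h
    · exact key j k h m hj n hk
    · subst h; exact hdisj _ _ _ hj hk hmn
    · exact (key k j h n hk m hj).symm
  · -- measure equality
    have hUm : ∀ k, MeasurableSet (⋃ n ∈ Fk k, closedBall (x n) (r n)) :=
      fun k => (Fk k).measurableSet_biUnion fun n _ => measurableSet_closedBall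
    have hdec : ∀ k, μ (Os (k+1)).1 ≤ (1 - C) * μ (Os k).1 := by
      intro k
      rw [hOs, measure_diff (fun a ha => by
            obtain ⟨s, ⟨n, rfl⟩, hs⟩ := ha
            obtain ⟨t, ht, hat⟩ := hs
            simp only [Set.mem_range] at ht
            exact hsub _ _ _ _ (by simpa using ht.choose) (by
              obtain ⟨hn, rfl⟩ := ht; exact hat))
          (hUm k).nullMeasurableSet (measure_ne_top μ _)]
      have := hmeas (Os k).1 (Os k).2 g
      calc μ (Os k).1 - μ (⋃ n ∈ Fk k, closedBall (x n) (r n))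
          ≤ μ (Os k).1 - C * μ (Os k).1 := tsub_le_tsub_left this _
        _ = (1 - C) * μ (Os k).1 := by
            rw [ENNReal.sub_mul (fun _ _ => measure_ne_top μ _), one_mul]
    have hpow : ∀ k, μ (Os k).1 ≤ (1 - C) ^ k * μ Ω := by
      intro k
      induction k with
      | zero => simpa [show (Os 0).1 = Ω from rfl] using le_refl (μ Ω)
      | succ k ih =>
        calc μ (Os (k+1)).1 ≤ (1 - C) * μ (Os k).1 := hdec k
          _ ≤ (1 - C) * ((1 - C) ^ k * μ Ω) := by gcongr
          _ = (1 - C) ^ (k+1) * μ Ω := by ring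
    have h1C : (1 : ℝ≥0∞) - C < 1 :=
      ENNReal.sub_lt_self ENNReal.one_ne_top one_ne_zero hC.ne'
    have htend : Tendsto (fun k => (1 - C) ^ k * μ Ω) atTop (𝓝 0) := by
      have := ENNReal.tendsto_pow_atTop_nhds_zero_of_lt_one h1C
      simpa using ENNReal.Tendsto.mul_const this (Or.inr (measure_ne_top μ Ω))
    set U : Set (Fin d → ℝ) := ⋃ n ∈ S, closedBall (x n) (r n) with hU
    have hDk : ∀ k, Ω \ U ⊆ (Os k).1 := by
      intro k
      induction k with
      | zero => exact diff_subset
      | succ k ih =>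
        intro a ha
        rw [hOs]
        refine ⟨ih ha, fun hmem => ?_⟩
        obtain ⟨s, ⟨n, rfl⟩, hs⟩ := hmem
        obtain ⟨t, ht, hat⟩ := hs
        simp only [Set.mem_range] at ht
        obtain ⟨hn, rfl⟩ := ht
        exact ha.2 (Set.mem_biUnion (Set.mem_iUnion.mpr ⟨k, hn⟩) hat)
    have hD0 : μ (Ω \ U) = 0 := by
      refine le_antisymm (ge_of_tendsto' htend fun k => ?_) zero_le
      exact (measure_mono (hDk k)).trans (hpow k)
    have hUΩ : U ⊆ Ω := by
      intro a ha
      obtain ⟨s, ⟨n, rfl⟩, hs⟩ := ha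
      obtain ⟨t, ht, hat⟩ := hs
      simp only [Set.mem_range] at ht
      obtain ⟨hn, rfl⟩ := ht
      obtain ⟨k, hk⟩ := hmemS hn
      exact (hsub _ _ _ _ hk).trans (hOsΩ k) hat
    refine le_antisymm (measure_mono hUΩ) ?_
    calc μ Ω ≤ μ (U ∪ (Ω \ U)) := measure_mono (fun a ha => by
          by_cases h : a ∈ U
          · exact Or.inl h
          · exact Or.inr ⟨ha, h⟩)
      _ ≤ μ U + μ (Ω \ U) := measure_union_le _ _
      _ = μ U := by rw [hD0, add_zero]
end

section
/- Let μ be a Borel probability measure on ℝ^d and (B_n) a sequence of balls with radii tending to 0. If (B_n) is μ-asymptotically covering, then μ(limsup_{n→∞} B_n) = 1. -/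
/-!
Already each tail union `E g = ⋃_{n ≥ g} B_n` has full measure: by outer regularity the
complement of `E g` is almost an open set `U`, while the covering property puts a proportion `C`
of the mass of `U` inside `E g ∩ U`, which is nearly null.
-/

open MeasureTheory Metric Set Filter
open scoped ENNReal Topology

theorem MeasureTheory.measure_eq_zero_of_forall_isOpen_superset {α : Type*}
    [TopologicalSpace α] [MeasurableSpace α] {μ : Measure α} [μ.OuterRegular] {A : Set α}
    (hA : MeasurableSet A) (hA_fin : μ A ≠ ∞) {C : ℝ≥0∞} (hC : C ≠ 0)
    (h : ∀ U, IsOpen U → A ⊆ U → C * μ U ≤ μ (U \ A)) : μ A = 0 := by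
  suffices C * μ A = 0 by simpa [hC] using this
  refine le_antisymm (ENNReal.le_of_forall_pos_le_add fun ε hε _ => ?_) (zero_le)
  obtain ⟨U, hAU, hU, hμU⟩ := exists_isOpen_lt_add A hA_fin (ENNReal.coe_ne_zero.2 hε.ne')
  calc C * μ A ≤ C * μ U := by gcongr
    _ ≤ μ (U \ A) := h U hU hAU
    _ = μ U - μ A := measure_sdiff hAU hA.nullMeasurableSet hA_fin
    _ ≤ 0 + ε := by rw [zero_add]; exact tsub_le_iff_left.2 hμU.le

theorem muAC.measure_compl_tail_eq_zero {d : ℕ} {μ : Measure (Fin d → ℝ)} [IsFiniteMeasure μ]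
    {x : ℕ → Fin d → ℝ} {r : ℕ → ℝ} (hac : muAC μ x r) (g : ℕ) :
    μ (⋃ n, ⋃ _ : g ≤ n, closedBall (x n) (r n))ᶜ = 0 := by
  obtain ⟨C, hC, hcover⟩ := hac
  refine measure_eq_zero_of_forall_isOpen_superset (by measurability) (measure_ne_top μ _)
    hC.ne' fun U hU _ => ?_
  obtain ⟨F, hFg, hFU, -, hμF⟩ := hcover U hU g
  refine hμF.trans (measure_mono ?_)
  simp only [iUnion_subset_iff]
  intro n hn y hy
  exact ⟨hFU n hn hy, not_not.2 (mem_iUnion₂.2 ⟨n, hFg n hn, hy⟩)⟩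

theorem stmt3_general {d : ℕ} (μ : Measure (Fin d → ℝ)) [IsProbabilityMeasure μ]
    (x : ℕ → Fin d → ℝ) (r : ℕ → ℝ) (hac : muAC μ x r) :
    μ (⋂ g : ℕ, ⋃ n, ⋃ _ : g ≤ n, closedBall (x n) (r n)) = 1 := by
  rw [← prob_compl_eq_zero_iff (by measurability), compl_iInter]
  exact measure_iUnion_null hac.measure_compl_tail_eq_zero

/-- if `(B_n)` is `μ`-a.c. with radii tending to `0`, then
`μ(limsup B_n) = 1`. -/
theorem stmt3 {d : ℕ} (μ : Measure (Fin d → ℝ)) [IsProbabilityMeasure μ]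
    (x : ℕ → Fin d → ℝ) (r : ℕ → ℝ) (hr0 : ∀ n, 0 < r n)
    (hr : Tendsto r atTop (𝓝 0)) (hac : muAC μ x r) :
    μ (⋂ g : ℕ, ⋃ n, ⋃ _ : g ≤ n, closedBall (x n) (r n)) = 1 :=
  stmt3_general μ x r hac
end

section
/- Let μ be a Borel probability measure on ℝ^d and (B_n = B(x_n, r_n)) a sequence of balls with r_n → 0. If there exists v<1 such that μ(limsup_{n→∞} vB_n) = 1, then (B_n) is μ-asymptotically covering. -/
open MeasureTheory Metric Set Filter
open scoped ENNReal Topology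

lemma packing {d : ℕ} (R ε : ℝ) (hε : 0 < ε) :
    ∃ M : ℕ, ∀ S : Finset (Fin d → ℝ),
      (∀ p ∈ S, dist p 0 ≤ R) → (∀ p ∈ S, ∀ q ∈ S, p ≠ q → ε ≤ dist p q) →
      S.card ≤ M := by
  obtain ⟨t, ht⟩ := (isCompact_closedBall (0 : Fin d → ℝ) R).elim_finite_subcover
    (fun c : (Fin d → ℝ) => ball c (ε/3)) (fun c => isOpen_ball)
    (fun z hz => mem_iUnion.2 ⟨z, mem_ball_self (by positivity)⟩)
  refine ⟨t.card, fun S hS hsep => ?_⟩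
  have hf : ∀ p ∈ S, ∃ c ∈ t, p ∈ ball c (ε/3) := by
    intro p hp
    have := ht (mem_closedBall.2 (hS p hp))
    simpa using this
  choose f hf1 hf2 using hf
  refine Finset.card_le_card_of_injOn (fun p => if h : p ∈ S then f p h else Classical.arbitrary _) ?_ ?_
  · intro p hp; have hp' : p ∈ S := hp; simp only [hp', dif_pos]; exact hf1 p hp'
  · intro p hp q hq hpq
    simp only [Finset.mem_coe] at hp hq
    simp only [hp, hq, dif_pos] at hpq
    by_contra hne
    have h1 := hf2 p hp
    have h2 := hf2 q hq
    rw [hpq] at h1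
    have : dist p q < ε := by
      calc dist p q ≤ dist p (f q hq) + dist (f q hq) q := dist_triangle _ _ _
        _ < ε/3 + ε/3 := by
            rw [mem_ball] at h1 h2
            exact add_lt_add h1 (by rw [dist_comm]; exact h2)
        _ < ε := by linarith
    exact absurd (hsep p hp q hq hne) (not_le.2 this)
lemma aux_big (v ρ : ℝ) (hv0 : 0 < v) (hv1 : v < 1) (hbig : 16/(1-v)^2 < ρ) :
    16 < (1-v) * ρ := by
  have hw : 0 < 1 - v := by linarith
  have h1 : (1-v) * (16/(1-v)^2) < (1-v) * ρ := by
    exact mul_lt_mul_of_pos_left hbig hw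
  have h2 : (1-v) * (16/(1-v)^2) = 16/(1-v) := by
    field_simp
  have h3 : (16:ℝ) ≤ 16/(1-v) := by
    rw [le_div_iff₀ hw]; nlinarith
  linarith [h2 ▸ h1]

lemma class_escape (v : ℝ) (hv0 : 0 < v) (hv1 : v < 1)
    (ρi ρj ci cj yj σ : ℝ) (hσ : |σ| = 1)
    (hbigi : 16/(1-v)^2 < ρi) (hbigj : 16/(1-v)^2 < ρj)
    (hij : ρj ≤ (1 + (1-v)/8) * ρi)
    (hci : (1+v)/2 * ρi < σ * ci) (hcj : (1+v)/2 * ρj < σ * cj)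
    (hciub : |ci| ≤ ρi + 1) (hcjub : |cj| ≤ ρj + 1)
    (hyj : |yj - cj| ≤ v * ρj) :
    |yj - ci| ≤ ρi := by
  have hw : 0 < 1 - v := by linarith
  have k1 := aux_big v ρi hv0 hv1 hbigi
  have k2 := aux_big v ρj hv0 hv1 hbigj
  have e : |σ * yj - σ * cj| ≤ v * ρj := by
    rw [show σ * yj - σ * cj = σ * (yj - cj) by ring, abs_mul, hσ, one_mul]
    exact hyj
  obtain ⟨e1, e2⟩ := abs_le.1 e
  have hciub' : σ * ci ≤ ρi + 1 := by
    calc σ * ci ≤ |σ * ci| := le_abs_self _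
      _ = |ci| := by rw [abs_mul, hσ, one_mul]
      _ ≤ ρi + 1 := hciub
  have hcjub' : σ * cj ≤ ρj + 1 := by
    calc σ * cj ≤ |σ * cj| := le_abs_self _
      _ = |cj| := by rw [abs_mul, hσ, one_mul]
      _ ≤ ρj + 1 := hcjub
  have u1 : (1+v)*ρj ≤ (1+v)*((1 + (1-v)/8) * ρi) :=
    mul_le_mul_of_nonneg_left hij (by linarith)
  have u2 : (1+v)*((1 + (1-v)/8) * ρi) = (3+v)/2*ρi - ((1-v)*(3-v)/8)*ρi := by ring
  have u3 : 2*((1-v)*ρi) ≤ (1-v)*(3-v)*ρi := by nlinarith [sq_nonneg (1-v), mul_pos hw (by nlinarith : (0:ℝ) < ρi)]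
  have hub : σ * yj - σ * ci ≤ ρi := by nlinarith
  have hlb : -(ρi) ≤ σ * yj - σ * ci := by nlinarith
  have habs : |σ * yj - σ * ci| ≤ ρi := abs_le.2 ⟨hlb, hub⟩
  have heq : |σ * yj - σ * ci| = |yj - ci| := by
    rw [show σ * yj - σ * ci = σ * (yj - ci) by ring, abs_mul, hσ, one_mul]
  rwa [heq] at habs

lemma deep_pushout (v ρ0 ρj cj yj ya c0a : ℝ) (hv0 : 0 < v) (hv1 : v < 1)
    (hbig : 16/(1-v)^2 < ρ0)
    (hgt : ρ0 < |ya - c0a|) (hc0 : |c0a| ≤ (1+v)/2 * ρ0)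
    (hya : |ya - cj| ≤ v * ρj) (hcj : |cj| ≤ ρj + 1) (hρj : 0 < ρj) :
    (1-v)/8 * ρ0 ≤ ρj := by
  have hw : 0 < 1 - v := by linarith
  have k1 := aux_big v ρ0 hv0 hv1 hbig
  have hρ0 : 0 < ρ0 := lt_trans (by positivity) hbig
  have h1 : |ya| ≥ ρ0 - (1+v)/2 * ρ0 := by
    have : |ya - c0a| ≤ |ya| + |c0a| := abs_sub _ _
    linarith
  have h2 : |ya| ≤ (1+v)*ρj + 1 := by
    have t : |ya| ≤ |ya - cj| + |cj| := by
      calc |ya| = |(ya - cj) + cj| := by ring_nf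
        _ ≤ |ya - cj| + |cj| := abs_add_le _ _
    nlinarith
  have t1 : (1-v)/2 * ρ0 ≤ (1+v)*ρj + 1 := by linarith
  have t2 : 2*((1-v)*ρ0) ≤ (1-v)*ρ0*(3-v) := by
    nlinarith [mul_nonneg (mul_nonneg hw.le hρ0.le) hw.le]
  have t3 : (1+v)*((1-v)/8*ρ0) = (1-v)/2*ρ0 - (1-v)*ρ0*(3-v)/8 := by ring
  have t4 : (1+v)*((1-v)/8*ρ0) ≤ (1+v)*ρj := by linarith
  exact le_of_mul_le_mul_left t4 (by linarith)

lemma cube_count {d : ℕ} (v : ℝ) (hv0 : 0 < v) (hv1 : v < 1) (A : Finset (Fin d)) :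
    ∃ N : ℕ, 0 < N ∧ ∀ (G : Finset ℕ) (c y : ℕ → Fin d → ℝ) (ρ : ℕ → ℝ),
      (∀ i ∈ G, 0 < ρ i) →
      (∀ i ∈ G, ∀ a ∈ A, |c i a| ≤ ρ i + 1) →
      (∀ i ∈ G, 1 ≤ (1 + (1-v)/8) * ρ i) →
      (∀ i ∈ G, ∀ j ∈ G, i < j → ρ j ≤ (1 + (1-v)/8) * ρ i) →
      (∀ i ∈ G, ∀ a ∈ A, |y i a - c i a| ≤ v * ρ i) →
      (∀ i ∈ G, ∀ j ∈ G, i < j → ∃ a ∈ A, ρ i < |y j a - c i a|) →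
      G.card ≤ N := by
  classical
  induction A using Finset.strongInduction with
  | _ A ih =>
  have hw : 0 < 1 - v := by linarith
  choose! Nf hNf0 hNf using fun (a : Fin d) (ha : a ∈ A) => ih (A.erase a) (Finset.erase_ssubset ha)
  set N' : ℕ := A.sup Nf with hN'def
  set Λ : ℝ := 16/(1-v)^2 with hΛdef
  have hΛ16 : (16:ℝ) ≤ Λ := by
    rw [hΛdef, le_div_iff₀ (by positivity)]; nlinarith [sq_nonneg v]
  obtain ⟨M₁, hM₁⟩ := packing (d := d) ((1+v)*Λ + 1) ((1-v)/2) (by positivity)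
  obtain ⟨M₂, hM₂⟩ := packing (d := d) 5 ((1-v)*((1-v)/8)) (by positivity)
  refine ⟨M₁ + M₂ + 2*d*N' + 1, by omega, ?_⟩
  intro G c y ρ h1 h2 h3 h4 h5 h6
  have hτ1 : (1:ℝ) < 1 + (1-v)/8 := by nlinarith
  have hτ2 : (1:ℝ) + (1-v)/8 ≤ 2 := by nlinarith
  -- half lower bound on radii
  have hρhalf : ∀ i ∈ G, 1/2 ≤ ρ i := by
    intro i hi
    have := h3 i hi
    nlinarith [h1 i hi]
  -- separation of anchors
  have hsep : ∀ i ∈ G, ∀ j ∈ G, i < j → ∃ a ∈ A, (1-v) * ρ i < |y j a - y i a| := by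
    intro i hi j hj hij
    obtain ⟨a, ha, hgt⟩ := h6 i hi j hj hij
    refine ⟨a, ha, ?_⟩
    have h5i := h5 i hi a ha
    have htri : |y j a - c i a| ≤ |y j a - y i a| + |y i a - c i a| := abs_sub_le _ _ _
    nlinarith [h1 i hi]
  set yA : ℕ → Fin d → ℝ := fun i a => if a ∈ A then y i a else 0 with hyAdef
  have hyA_sep : ∀ i ∈ G, ∀ j ∈ G, i < j → (1-v) * ρ i < dist (yA j) (yA i) := by
    intro i hi j hj hij
    obtain ⟨a, ha, hgt⟩ := hsep i hi j hj hij
    have hc : dist (yA j a) (yA i a) ≤ dist (yA j) (yA i) := dist_le_pi_dist _ _ _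
    rw [Real.dist_eq] at hc
    simp only [hyAdef, if_pos ha] at hc
    linarith
  have hyA_ne : ∀ i ∈ G, ∀ j ∈ G, i ≠ j → yA i ≠ yA j := by
    intro i hi j hj hij heq
    rcases Nat.lt_or_ge i j with h | h
    · have := hyA_sep i hi j hj h
      rw [heq] at this
      simp only [dist_self] at this
      nlinarith [h1 i hi]
    · have hji : j < i := lt_of_le_of_ne h (Ne.symm hij)
      have := hyA_sep j hj i hi hji
      rw [heq] at this
      simp only [dist_self] at this
      nlinarith [h1 j hj]
  have hinjG : ∀ F : Finset ℕ, F ⊆ G → Set.InjOn yA F := by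
    intro F hF i hi j hj heq
    rw [Finset.mem_coe] at hi hj
    by_contra hne
    exact hyA_ne i (hF hi) j (hF hj) hne heq
  have hyA_bound : ∀ i ∈ G, ∀ a, |yA i a| ≤ (1+v) * ρ i + 1 := by
    intro i hi a
    simp only [hyAdef]
    split
    · rename_i ha
      have h2' := h2 i hi a ha
      have h5' := h5 i hi a ha
      have htri : |y i a| ≤ |y i a - c i a| + |c i a| := by
        calc |y i a| = |(y i a - c i a) + c i a| := by ring_nf
          _ ≤ |y i a - c i a| + |c i a| := abs_add_le _ _
      nlinarith [h1 i hi]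
    · simp only [abs_zero]
      nlinarith [h1 i hi]
  -- classes
  set Sm : Finset ℕ := G.filter (fun i => ρ i ≤ Λ) with hSmdef
  set Dp : Finset ℕ := G.filter (fun i => Λ < ρ i ∧ ∀ a ∈ A, |c i a| ≤ (1+v)/2 * ρ i) with hDpdef
  set Nb : Finset ℕ := G.filter (fun i => Λ < ρ i ∧ ¬(∀ a ∈ A, |c i a| ≤ (1+v)/2 * ρ i)) with hNbdef
  have hSmG : Sm ⊆ G := Finset.filter_subset _ _
  have hNbG : Nb ⊆ G := Finset.filter_subset _ _
  -- small count
  have hSm : Sm.card ≤ M₁ := by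
    rw [← Finset.card_image_of_injOn (hinjG Sm hSmG)]
    apply hM₁
    · intro p hp
      obtain ⟨i, hi, rfl⟩ := Finset.mem_image.1 hp
      have hiG : i ∈ G := hSmG hi
      have hiΛ : ρ i ≤ Λ := (Finset.mem_filter.1 hi).2
      rw [dist_pi_le_iff (by positivity)]
      intro b
      rw [Real.dist_eq, Pi.zero_apply, sub_zero]
      have := hyA_bound i hiG b
      nlinarith [h1 i hiG]
    · intro p hp q hq hpq
      obtain ⟨i, hi, rfl⟩ := Finset.mem_image.1 hp
      obtain ⟨j, hj, rfl⟩ := Finset.mem_image.1 hq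
      have hiG : i ∈ G := hSmG hi
      have hjG : j ∈ G := hSmG hj
      rcases lt_trichotomy i j with h | h | h
      · have := hyA_sep i hiG j hjG h
        have := hρhalf i hiG
        rw [dist_comm]
        nlinarith
      · exact absurd (by rw [h]) hpq
      · have := hyA_sep j hjG i hiG h
        have := hρhalf j hjG
        nlinarith
  -- class bound
  have hClass : ∀ a ∈ A, ∀ σ : ℝ, |σ| = 1 →
      (Nb.filter (fun i => (1+v)/2 * ρ i < σ * c i a)).card ≤ N' := by
    intro a ha σ hσ
    set Cl := Nb.filter (fun i => (1+v)/2 * ρ i < σ * c i a) with hCldef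
    have hClG : ∀ i ∈ Cl, i ∈ G := fun i hi => hNbG (Finset.mem_of_mem_filter _ hi)
    have hClbig : ∀ i ∈ Cl, Λ < ρ i := by
      intro i hi
      exact (Finset.mem_filter.1 (Finset.mem_of_mem_filter _ hi)).2.1
    have hClc : ∀ i ∈ Cl, (1+v)/2 * ρ i < σ * c i a := fun i hi => (Finset.mem_filter.1 hi).2
    have key : Cl.card ≤ Nf a := by
      apply hNf a ha Cl c y ρ
      · intro i hi; exact h1 i (hClG i hi)
      · intro i hi b hb; exact h2 i (hClG i hi) b (Finset.mem_of_mem_erase hb)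
      · intro i hi; exact h3 i (hClG i hi)
      · intro i hi j hj hij; exact h4 i (hClG i hi) j (hClG j hj) hij
      · intro i hi b hb; exact h5 i (hClG i hi) b (Finset.mem_of_mem_erase hb)
      · intro i hi j hj hij
        obtain ⟨b, hb, hgt⟩ := h6 i (hClG i hi) j (hClG j hj) hij
        by_cases hba : b = a
        · exfalso
          subst hba
          have habs := class_escape v hv0 hv1 (ρ i) (ρ j) (c i b) (c j b) (y j b) σ hσ
            (by rw [← hΛdef]; exact hClbig i hi) (by rw [← hΛdef]; exact hClbig j hj)
            (h4 i (hClG i hi) j (hClG j hj) hij)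
            (hClc i hi) (hClc j hj)
            (h2 i (hClG i hi) b hb) (h2 j (hClG j hj) b hb)
            (h5 j (hClG j hj) b hb)
          linarith
        · exact ⟨b, Finset.mem_erase.2 ⟨hba, hb⟩, hgt⟩
    exact le_trans key (Finset.le_sup ha)
  have hNb : Nb.card ≤ 2 * d * N' := by
    have hsub : Nb ⊆ A.biUnion (fun a =>
        (Nb.filter (fun i => (1+v)/2 * ρ i < (1:ℝ) * c i a)) ∪
        (Nb.filter (fun i => (1+v)/2 * ρ i < (-1:ℝ) * c i a))) := by
      intro i hi
      have hcond := (Finset.mem_filter.1 hi).2.2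
      push_neg at hcond
      obtain ⟨a, ha, hgt⟩ := hcond
      rw [Finset.mem_biUnion]
      refine ⟨a, ha, ?_⟩
      rcases lt_abs.1 hgt with h | h
      · exact Finset.mem_union_left _ (Finset.mem_filter.2 ⟨hi, by linarith⟩)
      · exact Finset.mem_union_right _ (Finset.mem_filter.2 ⟨hi, by linarith⟩)
    calc Nb.card ≤ _ := Finset.card_le_card hsub
      _ ≤ ∑ a ∈ A, ((Nb.filter (fun i => (1+v)/2 * ρ i < (1:ℝ) * c i a)) ∪
          (Nb.filter (fun i => (1+v)/2 * ρ i < (-1:ℝ) * c i a))).card := Finset.card_biUnion_le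
      _ ≤ ∑ a ∈ A, (2 * N') := by
          apply Finset.sum_le_sum
          intro a ha
          calc _ ≤ (Nb.filter (fun i => (1+v)/2 * ρ i < (1:ℝ) * c i a)).card +
              (Nb.filter (fun i => (1+v)/2 * ρ i < (-1:ℝ) * c i a)).card := Finset.card_union_le _ _
            _ ≤ N' + N' := Nat.add_le_add (hClass a ha 1 (by norm_num)) (hClass a ha (-1) (by norm_num))
            _ = 2 * N' := by omega
      _ = A.card * (2 * N') := by rw [Finset.sum_const, smul_eq_mul]
      _ ≤ d * (2 * N') := by
          apply Nat.mul_le_mul_right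
          calc A.card ≤ (Finset.univ : Finset (Fin d)).card := Finset.card_le_univ A
            _ = d := by simp
      _ = 2 * d * N' := by ring
  -- deep case
  by_cases hDp : Dp.Nonempty
  · set i₀ := Dp.min' hDp with hi₀def
    have hi₀Dp : i₀ ∈ Dp := Finset.min'_mem _ hDp
    have hi₀G : i₀ ∈ G := Finset.mem_of_mem_filter _ hi₀Dp
    have hi₀big : Λ < ρ i₀ := (Finset.mem_filter.1 hi₀Dp).2.1
    have hi₀deep : ∀ a ∈ A, |c i₀ a| ≤ (1+v)/2 * ρ i₀ := (Finset.mem_filter.1 hi₀Dp).2.2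
    have hρ0pos : 0 < ρ i₀ := h1 i₀ hi₀G
    set Post : Finset ℕ := G.filter (fun j => i₀ < j) with hPostdef
    have hPostG : Post ⊆ G := Finset.filter_subset _ _
    have hPostρ : ∀ j ∈ Post, (1-v)/8 * ρ i₀ ≤ ρ j := by
      intro j hj
      have hjG : j ∈ G := hPostG hj
      have hij : i₀ < j := (Finset.mem_filter.1 hj).2
      obtain ⟨a, ha, hgt⟩ := h6 i₀ hi₀G j hjG hij
      exact deep_pushout v (ρ i₀) (ρ j) (c j a) (y j a) (y j a) (c i₀ a) hv0 hv1
        (by rw [← hΛdef]; exact hi₀big) hgt (hi₀deep a ha) (h5 j hjG a ha) (h2 j hjG a ha) (h1 j hjG)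
    have hPost : Post.card ≤ M₂ := by
      have hinj2 : Set.InjOn (fun i => (ρ i₀)⁻¹ • yA i) Post := by
        intro i hi j hj heq
        apply hinjG Post hPostG hi hj
        have := smul_right_injective (Fin d → ℝ) (inv_ne_zero (ne_of_gt hρ0pos)) heq
        exact this
      rw [← Finset.card_image_of_injOn hinj2]
      apply hM₂
      · intro p hp
        obtain ⟨i, hi, rfl⟩ := Finset.mem_image.1 hp
        have hiG : i ∈ G := hPostG hi
        have hii : i₀ < i := (Finset.mem_filter.1 hi).2
        have hρi : ρ i ≤ (1 + (1-v)/8) * ρ i₀ := h4 i₀ hi₀G i hiG hii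
        rw [dist_pi_le_iff (by norm_num)]
        intro b
        rw [Real.dist_eq, Pi.zero_apply, sub_zero, Pi.smul_apply, smul_eq_mul, abs_mul,
          abs_inv, abs_of_pos hρ0pos]
        have hb := hyA_bound i hiG b
        rw [inv_mul_le_iff₀ hρ0pos]
        have h2' : (1+v) * ρ i + 1 ≤ 5 * ρ i₀ := by nlinarith
        linarith
      · intro p hp q hq hpq
        obtain ⟨i, hi, rfl⟩ := Finset.mem_image.1 hp
        obtain ⟨j, hj, rfl⟩ := Finset.mem_image.1 hq
        have hiG : i ∈ G := hPostG hi
        have hjG : j ∈ G := hPostG hj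
        have hdd : ∀ u w : ℕ, dist ((ρ i₀)⁻¹ • yA u) ((ρ i₀)⁻¹ • yA w) = (ρ i₀)⁻¹ * dist (yA u) (yA w) := by
          intro u w
          rw [dist_smul₀, Real.norm_eq_abs, abs_inv, abs_of_pos hρ0pos]
        have hkey : ∀ u ∈ Post, ∀ w ∈ Post, u < w →
            (1-v) * ((1-v)/8) ≤ dist ((ρ i₀)⁻¹ • yA w) ((ρ i₀)⁻¹ • yA u) := by
          intro u hu w hww huw
          rw [hdd]
          have hs := hyA_sep u (hPostG hu) w (hPostG hww) huw
          have hρu := hPostρ u hu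
          have hd2 : (1-v) * ((1-v)/8) * ρ i₀ ≤ dist (yA w) (yA u) := by nlinarith
          calc (1-v) * ((1-v)/8) = (ρ i₀)⁻¹ * ((1-v) * ((1-v)/8) * ρ i₀) := by
                field_simp
            _ ≤ (ρ i₀)⁻¹ * dist (yA w) (yA u) :=
                mul_le_mul_of_nonneg_left hd2 (by positivity)
        rcases lt_trichotomy i j with h | h | h
        · rw [dist_comm]
          exact hkey i hi j hj h
        · exact absurd (by rw [h]) hpq
        · exact hkey j hj i hi h
    -- combine
    have hsub : G ⊆ Sm ∪ Nb ∪ Post ∪ {i₀} := by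
      intro i hi
      by_cases hsm : ρ i ≤ Λ
      · exact Finset.mem_union_left _ (Finset.mem_union_left _ (Finset.mem_union_left _
          (Finset.mem_filter.2 ⟨hi, hsm⟩)))
      · by_cases hdp : ∀ a ∈ A, |c i a| ≤ (1+v)/2 * ρ i
        · have hiDp : i ∈ Dp := Finset.mem_filter.2 ⟨hi, lt_of_not_ge hsm, hdp⟩
          rcases eq_or_lt_of_le (Finset.min'_le _ _ hiDp) with h | h
          · exact Finset.mem_union_right _ (Finset.mem_singleton.2 (h.symm.trans hi₀def.symm))
          · exact Finset.mem_union_left _ (Finset.mem_union_right _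
              (Finset.mem_filter.2 ⟨hi, h⟩))
        · exact Finset.mem_union_left _ (Finset.mem_union_left _ (Finset.mem_union_right _
            (Finset.mem_filter.2 ⟨hi, lt_of_not_ge hsm, hdp⟩)))
    calc G.card ≤ (Sm ∪ Nb ∪ Post ∪ {i₀}).card := Finset.card_le_card hsub
      _ ≤ (Sm ∪ Nb ∪ Post).card + 1 := by
          apply le_trans (Finset.card_union_le _ _)
          simp
      _ ≤ (Sm ∪ Nb).card + Post.card + 1 := by
          have := Finset.card_union_le (Sm ∪ Nb) Post
          omega
      _ ≤ Sm.card + Nb.card + Post.card + 1 := by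
          have := Finset.card_union_le Sm Nb
          omega
      _ ≤ M₁ + 2*d*N' + M₂ + 1 := by omega
      _ ≤ M₁ + M₂ + 2*d*N' + 1 := by omega
  · have hsub : G ⊆ Sm ∪ Nb := by
      intro i hi
      by_cases hsm : ρ i ≤ Λ
      · exact Finset.mem_union_left _ (Finset.mem_filter.2 ⟨hi, hsm⟩)
      · by_cases hdp : ∀ a ∈ A, |c i a| ≤ (1+v)/2 * ρ i
        · exact absurd ⟨i, Finset.mem_filter.2 ⟨hi, lt_of_not_ge hsm, hdp⟩⟩ hDp
        · exact Finset.mem_union_right _ (Finset.mem_filter.2 ⟨hi, lt_of_not_ge hsm, hdp⟩)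
    calc G.card ≤ (Sm ∪ Nb).card := Finset.card_le_card hsub
      _ ≤ Sm.card + Nb.card := Finset.card_union_le _ _
      _ ≤ M₁ + M₂ + 2*d*N' + 1 := by omega

attribute [local instance] Classical.propDecidable

/-- Goodness of candidate `p` w.r.t. already selected list `L`. -/
def GoodF {d : ℕ} (x : ℕ → Fin d → ℝ) (r : ℕ → ℝ) (τ : ℝ)
    (cand : Set ((Fin d → ℝ) × ℕ)) (L : List ((Fin d → ℝ) × ℕ))
    (p : (Fin d → ℝ) × ℕ) : Prop :=
  p ∈ cand ∧ (∀ q ∈ L, p.1 ∉ closedBall (x q.2) (r q.2)) ∧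
    (∀ q ∈ cand, (∀ s ∈ L, q.1 ∉ closedBall (x s.2) (r s.2)) → r q.2 ≤ τ * r p.2)

/-- Greedy selection states. -/
noncomputable def stF {d : ℕ} (x : ℕ → Fin d → ℝ) (r : ℕ → ℝ) (τ : ℝ)
    (cand : Set ((Fin d → ℝ) × ℕ)) : ℕ → List ((Fin d → ℝ) × ℕ)
  | 0 => []
  | k+1 => if h : ∃ p, GoodF x r τ cand (stF x r τ cand k) p
      then stF x r τ cand k ++ [h.choose] else stF x r τ cand k

section stF_lemmas
variable {d : ℕ} (x : ℕ → Fin d → ℝ) (r : ℕ → ℝ) (τ : ℝ) (cand : Set ((Fin d → ℝ) × ℕ))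

lemma stF_prefix : ∀ k, stF x r τ cand k <+: stF x r τ cand (k+1) := by
  intro k
  rw [stF]
  split
  · exact List.prefix_append _ _
  · exact List.prefix_rfl

lemma stF_prefix_le {k l : ℕ} (h : k ≤ l) : stF x r τ cand k <+: stF x r τ cand l := by
  induction l with
  | zero => simp_all
  | succ l ih =>
    rcases Nat.eq_or_lt_of_le h with h' | h'
    · rw [h']
    · exact (ih (Nat.lt_succ_iff.1 h')).trans (stF_prefix x r τ cand l)

lemma stF_len_add : ∀ a b, (stF x r τ cand (a+b)).length ≤ (stF x r τ cand a).length + b := by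
  intro a b
  induction b with
  | zero => simp
  | succ b ih =>
    have : (stF x r τ cand (a+b+1)).length ≤ (stF x r τ cand (a+b)).length + 1 := by
      rw [stF]
      split
      · simp
      · simp
    have : a + (b+1) = (a+b)+1 := by omega
    rw [this]
    omega

lemma stF_len_le : ∀ k, (stF x r τ cand k).length ≤ k := by
  intro k
  have := stF_len_add x r τ cand 0 k
  simpa [stF] using this

lemma stF_stall {k : ℕ} (h : stF x r τ cand (k+1) = stF x r τ cand k) :
    ∀ l, k ≤ l → stF x r τ cand l = stF x r τ cand k := by
  have hng : ¬ ∃ p, GoodF x r τ cand (stF x r τ cand k) p := by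
    intro hex
    rw [stF, dif_pos hex] at h
    simpa using congrArg List.length h
  intro l hl
  induction l with
  | zero => have : k = 0 := by omega
            rw [this]
  | succ l ih =>
    rcases Nat.eq_or_lt_of_le hl with h' | h'
    · rw [← h']
    · have hll : k ≤ l := by omega
      have hsl := ih hll
      rw [stF, hsl, dif_neg hng]

noncomputable def itmF (k : ℕ) : (Fin d → ℝ) × ℕ := (stF x r τ cand (k+1)).getD k default

def activeF (k : ℕ) : Prop := k < (stF x r τ cand (k+1)).length

lemma stF_len_lt_stall : ∀ k, (stF x r τ cand k).length < k →
    stF x r τ cand (k+1) = stF x r τ cand k ∧ ¬∃ p, GoodF x r τ cand (stF x r τ cand k) p := by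
  intro k
  induction k with
  | zero => simp
  | succ k ih =>
    intro hlen
    by_cases hex : ∃ p, GoodF x r τ cand (stF x r τ cand k) p
    · exfalso
      rw [stF, dif_pos hex] at hlen
      simp only [List.length_append, List.length_singleton] at hlen
      have hk : (stF x r τ cand k).length < k := by omega
      obtain ⟨heq, hng⟩ := ih hk
      rw [stF, dif_pos hex] at heq
      have := congrArg List.length heq
      simp at this
    · have heq : stF x r τ cand (k+1) = stF x r τ cand k := by rw [stF, dif_neg hex]
      constructor
      · rw [stF]
        rw [heq]
        rw [dif_neg hex]
      · rw [heq]; exact hex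

lemma activeF_len (k : ℕ) (h : activeF x r τ cand k) :
    (stF x r τ cand (k+1)).length = k+1 ∧ (stF x r τ cand k).length = k := by
  have h1 := stF_len_le x r τ cand (k+1)
  have h2 : (stF x r τ cand (k+1)).length ≤ (stF x r τ cand k).length + 1 := by
    rw [stF]; split <;> simp
  have h3 := stF_len_le x r τ cand k
  unfold activeF at h
  omega

lemma activeF_step (k : ℕ) (h : activeF x r τ cand k) :
    GoodF x r τ cand (stF x r τ cand k) (itmF x r τ cand k) ∧
      stF x r τ cand (k+1) = stF x r τ cand k ++ [itmF x r τ cand k] := by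
  obtain ⟨hl1, hl0⟩ := activeF_len x r τ cand k h
  by_cases hex : ∃ p, GoodF x r τ cand (stF x r τ cand k) p
  · have heq : stF x r τ cand (k+1) = stF x r τ cand k ++ [hex.choose] := by
      rw [stF, dif_pos hex]
    have hitm : itmF x r τ cand k = hex.choose := by
      rw [itmF, heq]
      rw [List.getD_eq_getElem?_getD]
      rw [List.getElem?_append_right (by omega)]
      rw [hl0]
      simp
    rw [hitm, heq]
    exact ⟨hex.choose_spec, rfl⟩
  · exfalso
    rw [stF, dif_neg hex] at hl1
    omega

lemma activeF_mono {i j : ℕ} (hij : i ≤ j) (h : activeF x r τ cand j) :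
    activeF x r τ cand i := by
  by_contra hni
  unfold activeF at h hni
  have : j + 1 = (i+1) + (j - i) := by omega
  rw [this] at h
  have := stF_len_add x r τ cand (i+1) (j-i)
  omega

lemma itmF_mem {j l : ℕ} (h : activeF x r τ cand j) (hl : j + 1 ≤ l) :
    itmF x r τ cand j ∈ stF x r τ cand l := by
  have h1 : itmF x r τ cand j ∈ stF x r τ cand (j+1) := by
    rw [itmF, List.getD_eq_getElem?_getD]
    have hlen : j < (stF x r τ cand (j+1)).length := h
    rw [List.getElem?_eq_getElem hlen]
    simp only [Option.getD_some]
    exact List.getElem_mem _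
  exact (stF_prefix_le x r τ cand hl).subset h1

lemma stF_mem_itm {p : (Fin d → ℝ) × ℕ} {k : ℕ} (h : p ∈ stF x r τ cand k) :
    ∃ j, j < k ∧ activeF x r τ cand j ∧ itmF x r τ cand j = p := by
  induction k with
  | zero => simp [stF] at h
  | succ k ih =>
    by_cases hex : ∃ q, GoodF x r τ cand (stF x r τ cand k) q
    · rw [stF, dif_pos hex, List.mem_append] at h
      rcases h with h | h
      · obtain ⟨j, hj, hja, hji⟩ := ih h
        exact ⟨j, by omega, hja, hji⟩
      · rw [List.mem_singleton] at h
        have hlen : ¬ (stF x r τ cand k).length < k := by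
          intro hlt
          exact (stF_len_lt_stall x r τ cand k hlt).2 hex
        have hlk : (stF x r τ cand k).length = k := by
          have := stF_len_le x r τ cand k
          omega
        have hact : activeF x r τ cand k := by
          unfold activeF
          rw [stF, dif_pos hex]
          simp [hlk]
        refine ⟨k, by omega, hact, ?_⟩
        have := (activeF_step x r τ cand k hact).2
        rw [stF, dif_pos hex] at this
        have h2 := List.append_inj_right this (rfl : (stF x r τ cand k).length = (stF x r τ cand k).length)
        simp at h2
        rw [← h2, h]
    · rw [stF, dif_neg hex] at h
      obtain ⟨j, hj, hja, hji⟩ := ih h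
      exact ⟨j, by omega, hja, hji⟩

lemma exists_goodF (hc2 : ∀ p ∈ cand, 0 < r p.2 ∧ r p.2 ≤ 1) (hτ : 1 < τ)
    (L : List ((Fin d → ℝ) × ℕ))
    (h : ∃ p ∈ cand, ∀ s ∈ L, p.1 ∉ closedBall (x s.2) (r s.2)) :
    ∃ p, GoodF x r τ cand L p := by
  obtain ⟨p₀, hp₀c, hp₀⟩ := h
  set A : Set ℝ := (fun p => r p.2) '' {p | p ∈ cand ∧ ∀ s ∈ L, p.1 ∉ closedBall (x s.2) (r s.2)} with hAdef
  have hA0 : r p₀.2 ∈ A := ⟨p₀, ⟨hp₀c, hp₀⟩, rfl⟩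
  have hAne : A.Nonempty := ⟨_, hA0⟩
  have hAbdd : BddAbove A := by
    refine ⟨1, ?_⟩
    rintro t ⟨p, hp, rfl⟩
    exact (hc2 p hp.1).2
  set s := sSup A with hsdef
  have hs0 : 0 < s := lt_of_lt_of_le (hc2 p₀ hp₀c).1 (le_csSup hAbdd hA0)
  have hlt : s / τ < s := div_lt_self hs0 hτ
  obtain ⟨t, htA, hts⟩ := exists_lt_of_lt_csSup hAne hlt
  obtain ⟨p, hp, rfl⟩ := htA
  refine ⟨p, hp.1, hp.2, ?_⟩
  intro q hq hql
  have h1 : r q.2 ≤ s := le_csSup hAbdd ⟨q, ⟨hq, hql⟩, rfl⟩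
  have h2 : s < τ * r p.2 := by
    rw [div_lt_iff₀ (by linarith)] at hts
    linarith [hts]
  linarith

end stF_lemmas

/-- Greedy coloring lists. -/
noncomputable def colLF {N : ℕ} (Cf : ℕ → Finset ℕ) : ℕ → List (Fin (N+1))
  | 0 => []
  | j+1 => colLF Cf j ++
      [if h : ∃ c : Fin (N+1), c ∉ (Cf j).image (fun i => (colLF Cf j).getD i default)
        then h.choose else default]

lemma colLF_len {N : ℕ} (Cf : ℕ → Finset ℕ) : ∀ k, (colLF (N := N) Cf k).length = k := by
  intro k
  induction k with
  | zero => simp [colLF]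
  | succ k ih => rw [colLF]; simp [ih]

noncomputable def colFn {N : ℕ} (Cf : ℕ → Finset ℕ) (j : ℕ) : Fin (N+1) :=
  (colLF (N := N) Cf (j+1)).getD j default

lemma colLF_getD {N : ℕ} (Cf : ℕ → Finset ℕ) : ∀ k i, i < k →
    (colLF (N := N) Cf k).getD i default = colFn (N := N) Cf i := by
  intro k
  induction k with
  | zero => omega
  | succ k ih =>
    intro i hi
    rcases Nat.lt_or_ge i k with h | h
    · rw [colLF, List.getD_eq_getElem?_getD, List.getElem?_append_left (by rw [colLF_len]; omega),
        ← List.getD_eq_getElem?_getD]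
      exact ih i h
    · have hik : i = k := by omega
      subst hik
      rfl

lemma colFn_eq {N : ℕ} (Cf : ℕ → Finset ℕ) (j : ℕ) :
    colFn (N := N) Cf j =
      if h : ∃ c : Fin (N+1), c ∉ (Cf j).image (fun i => (colLF (N := N) Cf j).getD i default)
        then h.choose else default := by
  rw [colFn, colLF, List.getD_eq_getElem?_getD,
    List.getElem?_append_right (by rw [colLF_len])]
  rw [colLF_len]
  simp

lemma coloring {N : ℕ} (Cf : ℕ → Finset ℕ) (hCf : ∀ j, Cf j ⊆ Finset.range j)
    (hcard : ∀ j, (Cf j).card ≤ N) :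
    ∀ j, ∀ i ∈ Cf j, colFn (N := N) Cf i ≠ colFn (N := N) Cf j := by
  intro j i hi
  set used := (Cf j).image (fun i => (colLF (N := N) Cf j).getD i default) with husdef
  have hex : ∃ c : Fin (N+1), c ∉ used := by
    by_contra hno
    push_neg at hno
    have : (Finset.univ : Finset (Fin (N+1))) ⊆ used := fun c _ => hno c
    have hc1 := Finset.card_le_card this
    have hc2 : used.card ≤ (Cf j).card := Finset.card_image_le
    have := hcard j
    simp only [Finset.card_univ, Fintype.card_fin] at hc1
    omega
  have hj : colFn (N := N) Cf j = hex.choose := by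
    rw [colFn_eq, dif_pos hex]
  have hmem : colFn (N := N) Cf i ∈ used := by
    rw [husdef]
    apply Finset.mem_image.2
    refine ⟨i, hi, ?_⟩
    have hilt : i < j := Finset.mem_range.1 (hCf j hi)
    exact colLF_getD Cf j i hilt
  intro heq
  exact hex.choose_spec (by rw [← hj, ← heq]; exact hmem)

open MeasureTheory in
theorem coreCover {d : ℕ} (μ : Measure (Fin d → ℝ)) [IsProbabilityMeasure μ]
    (v : ℝ) (hv0 : 0 < v) (hv1 : v < 1) :
    ∃ N : ℕ, 0 < N ∧ ∀ (x : ℕ → Fin d → ℝ) (r : ℕ → ℝ) (E' : Set (Fin d → ℝ)) (R : ℝ)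
      (cand : Set ((Fin d → ℝ) × ℕ)),
      (∀ p ∈ cand, p.1 ∈ E') →
      (∀ p ∈ cand, 0 < r p.2 ∧ r p.2 ≤ 1 ∧ dist p.1 (x p.2) ≤ v * r p.2) →
      (∀ z ∈ E', dist z 0 ≤ R) →
      (∀ z ∈ E', ∃ n, (z, n) ∈ cand) →
      ∃ T : Finset ℕ, (∀ n ∈ T, ∃ z, (z, n) ∈ cand) ∧
        ((T : Set ℕ).Pairwise fun m n =>
          Disjoint (closedBall (x m) (r m)) (closedBall (x n) (r n))) ∧
        μ E' ≤ ((2 * N : ℕ) : ℝ≥0∞) * μ (⋃ n ∈ T, closedBall (x n) (r n)) := by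
  classical
  obtain ⟨Nc, hNc0, hcube⟩ := cube_count v hv0 hv1 (Finset.univ : Finset (Fin d))
  refine ⟨Nc, hNc0, ?_⟩
  intro x r E' R cand hc1 hc2 hER hEc
  set τ : ℝ := 1 + (1-v)/8 with hτdef
  have hw : 0 < 1 - v := by linarith
  have hτ1 : 1 < τ := by rw [hτdef]; nlinarith
  have hτ0 : 0 < τ := by linarith
  set itm := itmF x r τ cand with hitmdef
  set act := activeF x r τ cand with hactdef
  set B : ℕ → Set (Fin d → ℝ) :=
    fun j => closedBall (x (itm j).2) (r (itm j).2) with hBdef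
  -- basic facts about selected items
  have hGood : ∀ j, act j → GoodF x r τ cand (stF x r τ cand j) (itm j) :=
    fun j hj => (activeF_step x r τ cand j hj).1
  have hinv1 : ∀ j, act j → itm j ∈ cand := fun j hj => (hGood j hj).1
  have hrpos : ∀ j, act j → 0 < r (itm j).2 := fun j hj => (hc2 _ (hinv1 j hj)).1
  have havoid : ∀ i j, act i → act j → i < j →
      (itm j).1 ∉ closedBall (x (itm i).2) (r (itm i).2) := by
    intro i j hi hj hij
    exact (hGood j hj).2.1 (itm i) (itmF_mem x r τ cand hi hij)
  have hgrow : ∀ i j, act i → act j → i < j → r (itm j).2 ≤ τ * r (itm i).2 := by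
    intro i j hi hj hij
    apply (hGood i hi).2.2 (itm j) (hinv1 j hj)
    intro s hs
    exact (hGood j hj).2.1 s ((stF_prefix_le x r τ cand (by omega : i ≤ j)).subset hs)
  -- Step A : E' is covered by the selected balls
  have hcov : ∀ z ∈ E', ∃ j, act j ∧ z ∈ B j := by
    intro z hzE
    by_contra hno
    push_neg at hno
    have hz' : ∀ k, ∀ s ∈ stF x r τ cand k, z ∉ closedBall (x s.2) (r s.2) := by
      intro k s hs
      obtain ⟨j, hjk, hja, hji⟩ := stF_mem_itm x r τ cand hs
      rw [← hji] at *
      exact hno j hja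
    obtain ⟨nz, hnz⟩ := hEc z hzE
    have hr0 : 0 < r nz := (hc2 _ hnz).1
    have hlenk : ∀ k, (stF x r τ cand k).length = k := by
      intro k
      induction k with
      | zero => simp [stF]
      | succ k ih =>
        have hex : ∃ p, GoodF x r τ cand (stF x r τ cand k) p := by
          apply exists_goodF x r τ cand (fun p hp => ⟨(hc2 p hp).1, (hc2 p hp).2.1⟩) hτ1
          exact ⟨(z, nz), hnz, hz' k⟩
        rw [stF, dif_pos hex]
        simp [ih]
    have hact : ∀ k, act k := by
      intro k
      rw [hactdef]
      unfold activeF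
      rw [hlenk]
      omega
    -- radii of all selected balls are at least r nz / τ
    have hrlow : ∀ j, r nz ≤ τ * r (itm j).2 := by
      intro j
      exact (hGood j (hact j)).2.2 (z, nz) hnz (hz' j)
    -- anchors are separated
    have hsep : ∀ i j, i < j → (1-v) * (r nz / τ) ≤ dist (itm j).1 (itm i).1 := by
      intro i j hij
      have h1 : r (itm i).2 < dist (itm j).1 (x (itm i).2) := by
        have := havoid i j (hact i) (hact j) hij
        simpa [mem_closedBall, not_le] using this
      have h2 : dist (itm i).1 (x (itm i).2) ≤ v * r (itm i).2 := (hc2 _ (hinv1 i (hact i))).2.2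
      have h3 : dist (itm j).1 (x (itm i).2) ≤ dist (itm j).1 (itm i).1 + dist (itm i).1 (x (itm i).2) :=
        dist_triangle _ _ _
      have h4 : r nz / τ ≤ r (itm i).2 := by
        rw [div_le_iff₀ hτ0]
        calc r nz ≤ τ * r (itm i).2 := hrlow i
          _ = r (itm i).2 * τ := by ring
      have h5 : 0 < r (itm i).2 := hrpos i (hact i)
      nlinarith
    obtain ⟨M, hM⟩ := packing (d := d) R ((1-v) * (r nz / τ)) (by positivity)
    have hinj : Set.InjOn (fun j => (itm j).1) (Finset.range (M+1)) := by
      intro i hi j hj heq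
      simp only at heq
      by_contra hne
      rcases lt_trichotomy i j with h | h | h
      · have := hsep i j h
        rw [heq] at this
        simp only [dist_self] at this
        have hp : 0 < (1-v) * (r nz / τ) := by positivity
        linarith
      · exact hne h
      · have := hsep j i h
        rw [heq] at this
        simp only [dist_self] at this
        have hp : 0 < (1-v) * (r nz / τ) := by positivity
        linarith
    have hcard := hM ((Finset.range (M+1)).image (fun j => (itm j).1))
      (by
        intro p hp
        obtain ⟨j, hj, rfl⟩ := Finset.mem_image.1 hp
        exact hER _ (hc1 _ (hinv1 j (hact j))))
      (by
        intro p hp q hq hpq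
        obtain ⟨i, hi, rfl⟩ := Finset.mem_image.1 hp
        obtain ⟨j, hj, rfl⟩ := Finset.mem_image.1 hq
        rcases lt_trichotomy i j with h | h | h
        · rw [dist_comm]; exact hsep i j h
        · exact absurd (by rw [h]) hpq
        · exact hsep j i h)
    rw [Finset.card_image_of_injOn hinj, Finset.card_range] at hcard
    omega
  -- Step B : conflict bound
  set Cf : ℕ → Finset ℕ := fun j => if act j then
      (Finset.range j).filter (fun i => ¬ Disjoint (B i) (B j)) else ∅ with hCfdef
  have hCfsub : ∀ j, Cf j ⊆ Finset.range j := by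
    intro j
    simp only [hCfdef]
    split
    · exact Finset.filter_subset _ _
    · simp
  have hCfcard : ∀ j, (Cf j).card ≤ Nc - 1 := by
    intro j
    by_cases hj : act j
    · have hCfj : Cf j = (Finset.range j).filter (fun i => ¬ Disjoint (B i) (B j)) := by
        rw [hCfdef]; simp [hj]
      set G : Finset ℕ := Cf j ∪ {j} with hGdef
      have hjG : ∀ i ∈ G, act i ∧ i ≤ j := by
        intro i hi
        rw [hGdef, Finset.mem_union] at hi
        rcases hi with hi | hi
        · have : i < j := Finset.mem_range.1 (hCfsub j hi)
          exact ⟨activeF_mono x r τ cand (le_of_lt this) hj, le_of_lt this⟩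
        · rw [Finset.mem_singleton] at hi
          subst hi
          exact ⟨hj, le_rfl⟩
      have hrj : 0 < r (itm j).2 := hrpos j hj
      -- the normalized configuration
      have hGcard : G.card ≤ Nc := by
        apply hcube G
          (fun i => fun a => (x (itm i).2 a - x (itm j).2 a) / r (itm j).2)
          (fun i => fun a => ((itm i).1 a - x (itm j).2 a) / r (itm j).2)
          (fun i => r (itm i).2 / r (itm j).2)
        · intro i hi
          exact div_pos (hrpos i (hjG i hi).1) hrj
        · -- h2 : conflict with ball j
          intro i hi a _
          rcases eq_or_lt_of_le (hjG i hi).2 with hij | hij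
          · subst hij
            simp only [sub_self, zero_div, abs_zero]
            positivity
          · have hiCf : i ∈ Cf j := by
              rw [hGdef, Finset.mem_union] at hi
              rcases hi with hi | hi
              · exact hi
              · rw [Finset.mem_singleton] at hi; omega
            rw [hCfj, Finset.mem_filter] at hiCf
            obtain ⟨z', hz1, hz2⟩ := Set.not_disjoint_iff.1 hiCf.2
            have hdist : dist (x (itm i).2) (x (itm j).2) ≤ r (itm i).2 + r (itm j).2 := by
              calc dist (x (itm i).2) (x (itm j).2)
                  ≤ dist (x (itm i).2) z' + dist z' (x (itm j).2) := dist_triangle _ _ _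
                _ ≤ r (itm i).2 + r (itm j).2 := by
                    rw [hBdef] at hz1 hz2
                    simp only [mem_closedBall] at hz1 hz2
                    rw [dist_comm (x (itm i).2) z']
                    exact add_le_add hz1 hz2
            have hcoord : |x (itm i).2 a - x (itm j).2 a| ≤ r (itm i).2 + r (itm j).2 := by
              have := dist_le_pi_dist (x (itm i).2) (x (itm j).2) a
              rw [Real.dist_eq] at this
              linarith
            rw [abs_div, abs_of_pos hrj, div_le_iff₀ hrj]
            have : (r (itm i).2 / r (itm j).2 + 1) * r (itm j).2 = r (itm i).2 + r (itm j).2 := by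
              field_simp
            rw [this]
            exact hcoord
        · -- h3 : smallest ball comparable
          intro i hi
          rcases eq_or_lt_of_le (hjG i hi).2 with hij | hij
          · subst hij
            rw [div_self (ne_of_gt hrj)]
            linarith
          · have h := hgrow i j (hjG i hi).1 hj hij
            rw [show τ * (r (itm i).2 / r (itm j).2) = (τ * r (itm i).2) / r (itm j).2 by ring,
              le_div_iff₀ hrj]
            linarith
        · -- h4 : radii quasi-decreasing
          intro i hi j' hj' hij'
          have hj'j : j' ≤ j := (hjG j' hj').2
          have h := hgrow i j' (hjG i hi).1 (hjG j' hj').1 hij'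
          rw [show τ * (r (itm i).2 / r (itm j).2) = (τ * r (itm i).2) / r (itm j).2 by ring]
          gcongr
        · -- h5 : anchors near centers
          intro i hi a _
          have h := (hc2 _ (hinv1 i (hjG i hi).1)).2.2
          have hcoord : |(itm i).1 a - x (itm i).2 a| ≤ v * r (itm i).2 := by
            have := dist_le_pi_dist ((itm i).1) (x (itm i).2) a
            rw [Real.dist_eq] at this
            linarith
          have heq : ((itm i).1 a - x (itm j).2 a) / r (itm j).2 -
              (x (itm i).2 a - x (itm j).2 a) / r (itm j).2 =
              ((itm i).1 a - x (itm i).2 a) / r (itm j).2 := by ring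
          rw [heq, abs_div, abs_of_pos hrj, div_le_iff₀ hrj]
          have : v * (r (itm i).2 / r (itm j).2) * r (itm j).2 = v * r (itm i).2 := by
            field_simp
          rw [this]
          exact hcoord
        · -- h6 : later anchors escape earlier balls
          intro i hi j' hj' hij'
          have hesc := havoid i j' (hjG i hi).1 (hjG j' hj').1 hij'
          simp only [mem_closedBall, not_le] at hesc
          have hri : (0:ℝ) ≤ r (itm i).2 := le_of_lt (hrpos i (hjG i hi).1)
          have : ¬ (dist ((itm j').1) (x (itm i).2) ≤ r (itm i).2) := not_le.2 hesc
          rw [dist_pi_le_iff hri] at this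
          push_neg at this
          obtain ⟨a, ha⟩ := this
          refine ⟨a, Finset.mem_univ a, ?_⟩
          rw [Real.dist_eq] at ha
          have heq : ((itm j').1 a - x (itm j).2 a) / r (itm j).2 -
              (x (itm i).2 a - x (itm j).2 a) / r (itm j).2 =
              ((itm j').1 a - x (itm i).2 a) / r (itm j).2 := by ring
          rw [heq, abs_div, abs_of_pos hrj, lt_div_iff₀ hrj]
          calc r (itm i).2 / r (itm j).2 * r (itm j).2 = r (itm i).2 := by field_simp
            _ < |(itm j').1 a - x (itm i).2 a| := ha
      have hjnotin : j ∉ Cf j := by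
        intro hjin
        have := Finset.mem_range.1 (hCfsub j hjin)
        omega
      have : G.card = (Cf j).card + 1 := by
        rw [hGdef, Finset.card_union_of_disjoint (by simp [hjnotin]), Finset.card_singleton]
      omega
    · simp only [hCfdef, if_neg hj, Finset.card_empty]
      omega
  -- Step C : coloring and measure estimate
  set col : ℕ → Fin (Nc - 1 + 1) := colFn (N := Nc - 1) Cf with hcoldef
  have hcol : ∀ j, ∀ i ∈ Cf j, col i ≠ col j := coloring Cf hCfsub hCfcard
  have hdisj : ∀ i j, act i → act j → i < j → col i = col j → Disjoint (B i) (B j) := by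
    intro i j hi hj hij hceq
    by_contra hnd
    have hiCf : i ∈ Cf j := by
      simp only [hCfdef, if_pos hj]
      exact Finset.mem_filter.2 ⟨Finset.mem_range.2 hij, hnd⟩
    exact hcol j i hiCf hceq
  set U : Fin (Nc - 1 + 1) → Set (Fin d → ℝ) :=
    fun cc => ⋃ (j : ℕ) (_ : act j ∧ col j = cc), B j with hUdef
  have hEU : E' ⊆ ⋃ cc, U cc := by
    intro z hz
    obtain ⟨j, hja, hjb⟩ := hcov z hz
    exact mem_iUnion.2 ⟨col j, mem_iUnion.2 ⟨j, mem_iUnion.2 ⟨⟨hja, rfl⟩, hjb⟩⟩⟩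
  have hsum : μ E' ≤ ∑ cc : Fin (Nc - 1 + 1), μ (U cc) := by
    calc μ E' ≤ μ (⋃ cc, U cc) := measure_mono hEU
      _ ≤ ∑ cc : Fin (Nc - 1 + 1), μ (U cc) := measure_iUnion_fintype_le μ U
  obtain ⟨c₀, _, hc₀⟩ := Finset.exists_max_image (Finset.univ : Finset (Fin (Nc-1+1)))
    (fun cc => μ (U cc)) ⟨⟨0, by omega⟩, Finset.mem_univ _⟩
  have hsum2 : μ E' ≤ (Nc : ℝ≥0∞) * μ (U c₀) := by
    calc μ E' ≤ ∑ cc : Fin (Nc - 1 + 1), μ (U cc) := hsum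
      _ ≤ (Finset.univ : Finset (Fin (Nc-1+1))).card • μ (U c₀) :=
          Finset.sum_le_card_nsmul _ _ _ (fun cc _ => hc₀ cc (Finset.mem_univ cc))
      _ = (Nc : ℝ≥0∞) * μ (U c₀) := by
          rw [nsmul_eq_mul]
          congr 1
          simp only [Finset.card_univ, Fintype.card_fin]
          norm_cast
          omega
  by_cases hU0 : μ (U c₀) = 0
  · refine ⟨∅, by simp, by simp, ?_⟩
    have hE0 : μ E' = 0 := by
      rw [hU0, mul_zero] at hsum2
      exact le_antisymm hsum2 zero_le
    simp [hE0]
  · set Up : ℕ → Set (Fin d → ℝ) :=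
      fun m => ⋃ (j : ℕ) (_ : j < m ∧ act j ∧ col j = c₀), B j with hUpdef
    have hUpmono : Monotone Up := by
      intro m m' hmm' z hz
      simp only [hUpdef, mem_iUnion] at hz ⊢
      obtain ⟨j, ⟨h1, h2, h3⟩, hzb⟩ := hz
      exact ⟨j, ⟨by omega, h2, h3⟩, hzb⟩
    have hUpU : ⋃ m, Up m = U c₀ := by
      ext z
      simp only [hUpdef, hUdef, mem_iUnion]
      constructor
      · rintro ⟨m, j, ⟨h1, h2, h3⟩, hz⟩
        exact ⟨j, ⟨h2, h3⟩, hz⟩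
      · rintro ⟨j, ⟨h2, h3⟩, hz⟩
        exact ⟨j+1, j, ⟨by omega, h2, h3⟩, hz⟩
    have htend := tendsto_measure_iUnion_atTop (μ := μ) hUpmono
    rw [hUpU] at htend
    have hhalf : μ (U c₀) / 2 < μ (U c₀) := ENNReal.half_lt_self hU0 (measure_ne_top μ _)
    obtain ⟨m, hm⟩ := (htend.eventually (eventually_gt_nhds hhalf)).exists
    set T : Finset ℕ :=
      ((Finset.range m).filter (fun j => act j ∧ col j = c₀)).image (fun j => (itm j).2) with hTdef
    have hTmem : ∀ n ∈ T, ∃ j, j < m ∧ act j ∧ col j = c₀ ∧ (itm j).2 = n := by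
      intro n hn
      rw [hTdef, Finset.mem_image] at hn
      obtain ⟨j, hj, rfl⟩ := hn
      rw [Finset.mem_filter, Finset.mem_range] at hj
      exact ⟨j, hj.1, hj.2.1, hj.2.2, rfl⟩
    refine ⟨T, ?_, ?_, ?_⟩
    · intro n hn
      obtain ⟨j, _, hja, _, rfl⟩ := hTmem n hn
      exact ⟨(itm j).1, by rw [Prod.mk.eta]; exact hinv1 j hja⟩
    · intro n1 hn1 n2 hn2 hne
      obtain ⟨j1, _, hj1a, hj1c, rfl⟩ := hTmem n1 (Finset.mem_coe.1 hn1)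
      obtain ⟨j2, _, hj2a, hj2c, rfl⟩ := hTmem n2 (Finset.mem_coe.1 hn2)
      have hjne : j1 ≠ j2 := by
        intro h
        exact hne (by rw [h])
      rcases lt_or_gt_of_ne hjne with h | h
      · exact hdisj j1 j2 hj1a hj2a h (by rw [hj1c, hj2c])
      · exact (hdisj j2 j1 hj2a hj1a h (by rw [hj1c, hj2c])).symm
    · have hTU : (⋃ n ∈ T, closedBall (x n) (r n)) = Up m := by
        ext z
        simp only [mem_iUnion, hUpdef]
        constructor
        · rintro ⟨n, hn, hz⟩
          obtain ⟨j, hjm, hja, hjc, rfl⟩ := hTmem n hn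
          exact ⟨j, ⟨hjm, hja, hjc⟩, hz⟩
        · rintro ⟨j, ⟨hjm, hja, hjc⟩, hz⟩
          refine ⟨(itm j).2, ?_, hz⟩
          rw [hTdef, Finset.mem_image]
          exact ⟨j, Finset.mem_filter.2 ⟨Finset.mem_range.2 hjm, hja, hjc⟩, rfl⟩
      rw [hTU]
      have h2m : μ (U c₀) ≤ 2 * μ (Up m) := by
        calc μ (U c₀) = μ (U c₀) / 2 * 2 :=
              (ENNReal.div_mul_cancel (by norm_num) (by norm_num)).symm
          _ ≤ μ (Up m) * 2 := mul_le_mul_left (le_of_lt hm) 2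
          _ = 2 * μ (Up m) := mul_comm _ _
      calc μ E' ≤ (Nc : ℝ≥0∞) * μ (U c₀) := hsum2
        _ ≤ (Nc : ℝ≥0∞) * (2 * μ (Up m)) := mul_le_mul_right h2m _
        _ = ((2 * Nc : ℕ) : ℝ≥0∞) * μ (Up m) := by push_cast; ring

open MeasureTheory Filter in
open scoped Topology in
theorem stmt4' {d : ℕ} (μ : Measure (Fin d → ℝ)) [IsProbabilityMeasure μ]
    (x : ℕ → Fin d → ℝ) (r : ℕ → ℝ) (hr0 : ∀ n, 0 < r n)
    (hr : Tendsto r atTop (𝓝 0)) (v : ℝ) (hv0 : 0 < v) (hv1 : v < 1)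
    (hfull : μ (⋂ g : ℕ, ⋃ n, ⋃ _ : g ≤ n, closedBall (x n) (v * r n)) = 1) :
    ∃ C : ℝ≥0∞, 0 < C ∧ ∀ Ω : Set (Fin d → ℝ), IsOpen Ω → ∀ g : ℕ,
      ∃ F : Finset ℕ, (∀ n ∈ F, g ≤ n) ∧
        (∀ n ∈ F, closedBall (x n) (r n) ⊆ Ω) ∧
        ((F : Set ℕ).Pairwise fun m n =>
          Disjoint (closedBall (x m) (r m)) (closedBall (x n) (r n))) ∧
        C * μ Ω ≤ μ (⋃ n ∈ F, closedBall (x n) (r n)) := by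
  classical
  obtain ⟨Nco, hN0, hcore⟩ := coreCover μ v hv0 hv1
  set C : ℝ≥0∞ := (((4 * Nco : ℕ) : ℝ≥0∞))⁻¹ with hCdef
  have hC4nz : ((4 * Nco : ℕ) : ℝ≥0∞) ≠ 0 := by
    simp only [ne_eq, Nat.cast_eq_zero]
    omega
  have hC4nt : ((4 * Nco : ℕ) : ℝ≥0∞) ≠ ⊤ := ENNReal.natCast_ne_top _
  refine ⟨C, ?_, ?_⟩
  · rw [hCdef]
    simp only [ENNReal.inv_pos]
    exact hC4nt
  intro Ω hΩ g
  by_cases hΩ0 : μ Ω = 0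
  · refine ⟨∅, by simp, by simp, by simp, ?_⟩
    simp [hΩ0]
  set K : Set (Fin d → ℝ) := ⋂ g : ℕ, ⋃ n, ⋃ _ : g ≤ n, closedBall (x n) (v * r n) with hKdef
  have hKmeas : MeasurableSet K := by
    apply MeasurableSet.iInter
    intro g'
    apply MeasurableSet.iUnion
    intro n
    apply MeasurableSet.iUnion
    intro _
    exact measurableSet_closedBall
  have hKc : μ Kᶜ = 0 := (prob_compl_eq_zero_iff hKmeas).2 hfull
  set E : Set (Fin d → ℝ) := Ω ∩ K with hEdef
  have hμE : μ E = μ Ω := measure_inter_conull hKc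
  have hE0 : μ E ≠ 0 := by rw [hμE]; exact hΩ0
  -- choose a bounded core
  have hEun : ⋃ R : ℕ, (E ∩ closedBall (0 : Fin d → ℝ) R) = E := by
    ext z
    simp only [mem_iUnion, mem_inter_iff, mem_closedBall]
    constructor
    · rintro ⟨R, hz, _⟩; exact hz
    · intro hz
      obtain ⟨R, hR⟩ := exists_nat_ge (dist z 0)
      exact ⟨R, hz, hR⟩
  have hEmono : Monotone (fun R : ℕ => E ∩ closedBall (0 : Fin d → ℝ) R) := by
    intro a b hab z hz
    exact ⟨hz.1, closedBall_subset_closedBall (by exact_mod_cast hab) hz.2⟩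
  have htend := tendsto_measure_iUnion_atTop (μ := μ) hEmono
  rw [hEun] at htend
  have hhalf : μ E / 2 < μ E := ENNReal.half_lt_self hE0 (measure_ne_top μ _)
  obtain ⟨R, hR⟩ := (htend.eventually (eventually_gt_nhds hhalf)).exists
  set E' : Set (Fin d → ℝ) := E ∩ closedBall (0 : Fin d → ℝ) R with hE'def
  set cand : Set ((Fin d → ℝ) × ℕ) := {p | p.1 ∈ E' ∧ g ≤ p.2 ∧ r p.2 ≤ 1 ∧
    p.1 ∈ closedBall (x p.2) (v * r p.2) ∧ closedBall (x p.2) (r p.2) ⊆ Ω} with hcanddef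
  have hc1 : ∀ p ∈ cand, p.1 ∈ E' := fun p hp => hp.1
  have hc2 : ∀ p ∈ cand, 0 < r p.2 ∧ r p.2 ≤ 1 ∧ dist p.1 (x p.2) ≤ v * r p.2 := by
    intro p hp
    exact ⟨hr0 p.2, hp.2.2.1, mem_closedBall.1 hp.2.2.2.1⟩
  have hER : ∀ z ∈ E', dist z 0 ≤ (R : ℝ) := fun z hz => mem_closedBall.1 hz.2
  have hEc : ∀ z ∈ E', ∃ n, (z, n) ∈ cand := by
    intro z hz
    have hzΩ : z ∈ Ω := hz.1.1
    have hzK : z ∈ K := hz.1.2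
    obtain ⟨ε, hε, hball⟩ := Metric.isOpen_iff.1 hΩ z hzΩ
    set δ : ℝ := min (ε/3) 1 with hδdef
    have hδ0 : 0 < δ := by
      apply lt_min (by linarith) one_pos
    obtain ⟨N₀, hN₀⟩ := Metric.tendsto_atTop.1 hr δ hδ0
    have hzK' : z ∈ ⋃ n, ⋃ _ : max g N₀ ≤ n, closedBall (x n) (v * r n) := by
      rw [hKdef] at hzK
      exact mem_iInter.1 hzK (max g N₀)
    simp only [mem_iUnion] at hzK'
    obtain ⟨n, hn, hzn⟩ := hzK'
    have hrn : r n < δ := by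
      have := hN₀ n (le_trans (le_max_right _ _) hn)
      rw [Real.dist_eq, sub_zero, abs_of_pos (hr0 n)] at this
      exact this
    refine ⟨n, hz, le_trans (le_max_left _ _) hn, le_of_lt (lt_of_lt_of_le hrn (min_le_right _ _)), hzn, ?_⟩
    intro w hw
    apply hball
    rw [mem_ball]
    have h1 : dist w (x n) ≤ r n := mem_closedBall.1 hw
    have h2 : dist z (x n) ≤ v * r n := mem_closedBall.1 hzn
    have h3 : dist w z ≤ dist w (x n) + dist (x n) z := dist_triangle _ _ _
    rw [dist_comm (x n) z] at h3
    have hrnε : r n < ε/3 := lt_of_lt_of_le hrn (min_le_left _ _)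
    have : dist w z ≤ (1 + v) * r n := by nlinarith
    have h4 : (1 + v) * r n < ε := by nlinarith [hr0 n]
    linarith
  obtain ⟨T, hT1, hT2, hT3⟩ := hcore x r E' R cand hc1 hc2 hER hEc
  refine ⟨T, ?_, ?_, hT2, ?_⟩
  · intro n hn
    obtain ⟨z, hz⟩ := hT1 n hn
    exact hz.2.1
  · intro n hn
    obtain ⟨z, hz⟩ := hT1 n hn
    exact hz.2.2.2.2
  · have hch1 : μ Ω ≤ 2 * μ E' := by
      rw [← hμE]
      calc μ E = μ E / 2 * 2 := (ENNReal.div_mul_cancel (by norm_num) (by norm_num)).symm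
        _ ≤ μ E' * 2 := mul_le_mul_left (le_of_lt hR) 2
        _ = 2 * μ E' := mul_comm _ _
    have hch2 : μ Ω ≤ ((4 * Nco : ℕ) : ℝ≥0∞) * μ (⋃ n ∈ T, closedBall (x n) (r n)) := by
      calc μ Ω ≤ 2 * μ E' := hch1
        _ ≤ 2 * (((2 * Nco : ℕ) : ℝ≥0∞) * μ (⋃ n ∈ T, closedBall (x n) (r n))) :=
            mul_le_mul_right hT3 2
        _ = ((4 * Nco : ℕ) : ℝ≥0∞) * μ (⋃ n ∈ T, closedBall (x n) (r n)) := by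
            push_cast
            ring
    calc C * μ Ω ≤ C * (((4 * Nco : ℕ) : ℝ≥0∞) * μ (⋃ n ∈ T, closedBall (x n) (r n))) :=
          mul_le_mul_right hch2 _
      _ = (C * ((4 * Nco : ℕ) : ℝ≥0∞)) * μ (⋃ n ∈ T, closedBall (x n) (r n)) :=
          (mul_assoc _ _ _).symm
      _ = 1 * μ (⋃ n ∈ T, closedBall (x n) (r n)) := by
          rw [hCdef, ENNReal.inv_mul_cancel hC4nz hC4nt]
      _ = μ (⋃ n ∈ T, closedBall (x n) (r n)) := one_mul _


/-- if `μ(limsup v B_n) = 1` for some `v < 1` and the radii tend to `0`,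
then `(B_n)` is `μ`-asymptotically covering. -/
theorem stmt4 {d : ℕ} (μ : Measure (Fin d → ℝ)) [IsProbabilityMeasure μ]
    (x : ℕ → Fin d → ℝ) (r : ℕ → ℝ) (hr0 : ∀ n, 0 < r n)
    (hr : Tendsto r atTop (𝓝 0)) (v : ℝ) (hv0 : 0 < v) (hv1 : v < 1)
    (hfull : μ (⋂ g : ℕ, ⋃ n, ⋃ _ : g ≤ n, closedBall (x n) (v * r n)) = 1) :
    muAC μ x r := by
  exact stmt4' μ x r hr0 hr v hv0 hv1 hfull
end

section
/- Let μ be a Borel probability measure on ℝ^d and (B_n) a μ-asymptotically covering sequence of balls. Then for every Borel set E, every ε>0, and every g∈ℕ, there exists a pairwise disjoint subfamily of balls from {B_n : n≥g} whose union covers E up to a μ-null set (i.e., μ(∪ of the chosen balls ∩ E) = μ(E)) and has total μ-measure at most μ(E)+ε. -/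
open MeasureTheory Metric Set Filter
open scoped ENNReal Topology

/-- if `(B_n)` is `μ`-a.c., then any Borel set `E` can be covered, up to a
`μ`-null set, by pairwise disjoint balls of indices `≥ g` whose union has measure at most
`μ E + ε`. -/
theorem stmt5 {d : ℕ} (μ : Measure (Fin d → ℝ)) [IsProbabilityMeasure μ]
    (x : ℕ → Fin d → ℝ) (r : ℕ → ℝ) (hr0 : ∀ n, 0 < r n)
    (hr : Tendsto r atTop (𝓝 0)) (hac : muAC μ x r)
    (E : Set (Fin d → ℝ)) (hE : MeasurableSet E) (ε : ℝ≥0∞) (hε : 0 < ε) (g : ℕ) :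
    ∃ S : Set ℕ, (∀ n ∈ S, g ≤ n) ∧
      (S.Pairwise fun m n =>
        Disjoint (closedBall (x m) (r m)) (closedBall (x n) (r n))) ∧
      μ ((⋃ n ∈ S, closedBall (x n) (r n)) ∩ E) = μ E ∧
      μ (⋃ n ∈ S, closedBall (x n) (r n)) ≤ μ E + ε := by
  classical
  obtain ⟨C, hC, hCov⟩ := hac
  have hμE : μ E ≠ ∞ := (measure_lt_top μ E).ne
  have hlt : μ E < μ E + ε := ENNReal.lt_add_right hμE hε.ne'
  obtain ⟨U, hEU, hUopen, hUlt⟩ := E.exists_isOpen_lt_of_lt _ hlt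
  have hCov' : ∀ Ω : Set (Fin d → ℝ), ∃ F : Finset ℕ, IsOpen Ω →
      (∀ n ∈ F, g ≤ n) ∧ (∀ n ∈ F, closedBall (x n) (r n) ⊆ Ω) ∧
      ((F : Set ℕ).Pairwise fun m n =>
        Disjoint (closedBall (x m) (r m)) (closedBall (x n) (r n))) ∧
      C * μ Ω ≤ μ (⋃ n ∈ F, closedBall (x n) (r n)) := by
    intro Ω
    by_cases h : IsOpen Ω
    · obtain ⟨F, h1, h2, h3, h4⟩ := hCov Ω h g
      exact ⟨F, fun _ => ⟨h1, h2, h3, h4⟩⟩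
    · exact ⟨∅, fun h' => absurd h' h⟩
  choose Fc hFc using hCov'
  set Om : ℕ → Set (Fin d → ℝ) := fun k =>
    Nat.rec U (fun _ O => O \ ⋃ n ∈ Fc O, closedBall (x n) (r n)) k with hOmdef
  have hOmS : ∀ k, Om (k + 1) = Om k \ ⋃ n ∈ Fc (Om k), closedBall (x n) (r n) :=
    fun k => rfl
  have hOpen : ∀ k, IsOpen (Om k) := by
    intro k
    induction k with
    | zero => exact hUopen
    | succ k ih =>
      rw [hOmS]
      exact ih.sdiff (isClosed_biUnion_finset fun n _ => isClosed_closedBall)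
  have hball_sub : ∀ k, ∀ n ∈ Fc (Om k), closedBall (x n) (r n) ⊆ Om k :=
    fun k => (hFc (Om k) (hOpen k)).2.1
  have hAnti : Antitone Om := by
    refine antitone_nat_of_succ_le fun k => ?_
    rw [hOmS]; exact diff_subset
  have hOmU : ∀ k, Om k ⊆ U := fun k => hAnti (Nat.zero_le k)
  -- the chosen index set
  set S : Set ℕ := ⋃ k, (Fc (Om k) : Set ℕ) with hSdef
  set T : Set (Fin d → ℝ) := ⋃ n ∈ S, closedBall (x n) (r n) with hTdef
  have hScount : S.Countable := countable_iUnion fun k => (Fc (Om k)).countable_toSet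
  have hTmeas : MeasurableSet T :=
    MeasurableSet.biUnion hScount fun n _ => measurableSet_closedBall
  have hTU : T ⊆ U := by
    refine iUnion₂_subset fun n hn => ?_
    obtain ⟨k, hk⟩ := mem_iUnion.mp hn
    exact (hball_sub k n hk).trans (hOmU k)
  -- disjointness across stages
  have hdisj : ∀ j k, j < k → ∀ m ∈ Fc (Om j), ∀ n ∈ Fc (Om k),
      Disjoint (closedBall (x m) (r m)) (closedBall (x n) (r n)) := by
    intro j k hjk m hm n hn
    have h1 : closedBall (x n) (r n) ⊆ Om k := hball_sub k n hn
    have h2 : Om k ⊆ Om (j + 1) := hAnti hjk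
    refine Set.disjoint_left.mpr fun p hpm hpn => ?_
    have hp : p ∈ Om (j + 1) := h2 (h1 hpn)
    rw [hOmS] at hp
    exact hp.2 (Set.mem_iUnion₂.2 ⟨m, hm, hpm⟩)
  -- geometric decay
  set C' : ℝ≥0∞ := min C 1 with hC'def
  have hC'0 : 0 < C' := lt_min hC zero_lt_one
  set t : ℝ≥0∞ := 1 - C' with htdef
  have ht1 : t < 1 := ENNReal.sub_lt_self ENNReal.one_ne_top one_ne_zero hC'0.ne'
  have hstep : ∀ k, μ (Om (k + 1)) ≤ t * μ (Om k) := by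
    intro k
    have hm : MeasurableSet (⋃ n ∈ Fc (Om k), closedBall (x n) (r n)) :=
      (Fc (Om k)).measurableSet_biUnion fun n _ => measurableSet_closedBall
    have hsub : (⋃ n ∈ Fc (Om k), closedBall (x n) (r n)) ⊆ Om k :=
      iUnion₂_subset (hball_sub k)
    have hfin : μ (⋃ n ∈ Fc (Om k), closedBall (x n) (r n)) ≠ ∞ := (measure_lt_top _ _).ne
    rw [hOmS, measure_diff hsub hm.nullMeasurableSet hfin]
    have hCmu : C' * μ (Om k) ≤ μ (⋃ n ∈ Fc (Om k), closedBall (x n) (r n)) :=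
      le_trans (mul_le_mul_left (min_le_left _ _) _) ((hFc _ (hOpen k)).2.2.2)
    calc μ (Om k) - μ (⋃ n ∈ Fc (Om k), closedBall (x n) (r n))
        ≤ μ (Om k) - C' * μ (Om k) := tsub_le_tsub_left hCmu _
      _ = t * μ (Om k) := by
          rw [htdef, ENNReal.sub_mul fun _ _ => (measure_lt_top μ _).ne, one_mul]
  have hdecay : ∀ k, μ (Om k) ≤ t ^ k := by
    intro k
    induction k with
    | zero => simpa using prob_le_one
    | succ k ih =>
      calc μ (Om (k + 1)) ≤ t * μ (Om k) := hstep k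
        _ ≤ t * t ^ k := mul_le_mul_right ih t
        _ = t ^ (k + 1) := by rw [pow_succ, mul_comm]
  -- the uncovered part of U is null
  have hUT : ∀ k, U \ T ⊆ Om k := by
    intro k
    induction k with
    | zero => exact diff_subset
    | succ k ih =>
      intro p hp
      rw [hOmS]
      refine ⟨ih hp, fun hmem => ?_⟩
      obtain ⟨n, hn, hpn⟩ := Set.mem_iUnion₂.mp hmem
      exact hp.2 (Set.mem_iUnion₂.2 ⟨n, mem_iUnion.2 ⟨k, hn⟩, hpn⟩)
  have hnull : μ (U \ T) = 0 := by
    have hle : ∀ k, μ (U \ T) ≤ t ^ k := fun k => (measure_mono (hUT k)).trans (hdecay k)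
    have htt : Tendsto (fun k => t ^ k) atTop (𝓝 0) :=
      ENNReal.tendsto_pow_atTop_nhds_zero_of_lt_one ht1
    exact le_zero_iff.mp (ge_of_tendsto' htt hle)
  refine ⟨S, ?_, ?_, ?_, ?_⟩
  · intro n hn
    obtain ⟨k, hk⟩ := mem_iUnion.mp hn
    exact (hFc (Om k) (hOpen k)).1 n hk
  · intro m hm n hn hmn
    obtain ⟨j, hj⟩ := mem_iUnion.mp hm
    obtain ⟨k, hk⟩ := mem_iUnion.mp hn
    rcases lt_trichotomy j k with h | h | h
    · exact hdisj j k h m hj n hk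
    · subst h
      exact (hFc (Om j) (hOpen j)).2.2.1 hj hk hmn
    · exact (hdisj k j h n hk m hj).symm
  · have h0 : μ (E \ T) = 0 :=
      measure_mono_null (diff_subset_diff_left hEU) hnull
    have h1 := measure_inter_add_diff E hTmeas (μ := μ)
    rw [h0, add_zero] at h1
    rw [Set.inter_comm, ← hTdef]
    exact h1
  · rw [← hTdef]
    exact (measure_mono hTU).trans hUlt.le
end

section
/- Let μ be a Borel probability measure on ℝ^d and (B_n) a μ-asymptotically covering sequence of balls with |B_n|→0. Then there exists a subsequence (B_{ψ(n)}) that is both μ-asymptotically covering and weakly redundant. -/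
open MeasureTheory Metric Set Filter
open scoped ENNReal Topology

/-- Weak redundancy: each ball belongs to a scale `T_k = {n : 2^{-k-1} < r n ≤ 2^{-k}}`,
and for each `k` the balls of `T_k` can be sorted into `J k` families of pairwise
disjoint balls, with `log₂ (J k) / k → 0`. -/
def WeaklyRedundant {d : ℕ} (x : ℕ → Fin d → ℝ) (r : ℕ → ℝ) : Prop :=
  (∀ n, ∃ k : ℕ, (2 : ℝ) ^ (-(k : ℤ) - 1) < r n ∧ r n ≤ 2 ^ (-(k : ℤ))) ∧
  ∃ (J : ℕ → ℕ) (ind : ℕ → ℕ),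
    (∀ k : ℕ, ∀ m n : ℕ,
      (2 : ℝ) ^ (-(k : ℤ) - 1) < r m → r m ≤ 2 ^ (-(k : ℤ)) →
      (2 : ℝ) ^ (-(k : ℤ) - 1) < r n → r n ≤ 2 ^ (-(k : ℤ)) →
      m ≠ n → ind m = ind n →
      Disjoint (closedBall (x m) (r m)) (closedBall (x n) (r n))) ∧
    (∀ k : ℕ, ∀ n : ℕ, (2 : ℝ) ^ (-(k : ℤ) - 1) < r n → r n ≤ 2 ^ (-(k : ℤ)) →
      ind n < J k) ∧
    Tendsto (fun k : ℕ => Real.logb 2 (J k) / k) atTop (𝓝 0)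

lemma stmt8_scale_exists {s : ℝ} (h0 : 0 < s) (h1 : s ≤ 1) :
    ∃ k : ℕ, (2:ℝ) ^ (-(k:ℤ) - 1) < s ∧ s ≤ 2 ^ (-(k:ℤ)) := by
  have hex : ∃ m : ℕ, (2:ℝ) ^ (-(m:ℤ) - 1) < s := by
    obtain ⟨n, hn⟩ := exists_pow_lt_of_lt_one h0 (one_half_lt_one (α := ℝ))
    have h2 : (2:ℝ) ^ (-(n:ℤ)) < s := by
      calc (2:ℝ) ^ (-(n:ℤ)) = (1/2:ℝ) ^ n := by
            rw [one_div, inv_pow, ← zpow_natCast, ← zpow_neg]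
        _ < s := hn
    have h3 : (2:ℝ) ^ (-(n:ℤ) - 1) ≤ 2 ^ (-(n:ℤ)) :=
      zpow_le_zpow_right₀ (by norm_num) (by omega)
    exact ⟨n, lt_of_le_of_lt h3 h2⟩
  classical
  refine ⟨Nat.find hex, Nat.find_spec hex, ?_⟩
  rcases Nat.eq_zero_or_pos (Nat.find hex) with hk | hk
  · rw [hk]; simpa using h1
  · have hmin := Nat.find_min hex (m := Nat.find hex - 1) (by omega)
    push_neg at hmin
    calc s ≤ (2:ℝ) ^ (-((Nat.find hex - 1 : ℕ):ℤ) - 1) := hmin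
      _ = 2 ^ (-(Nat.find hex : ℤ)) := by
          congr 1
          have : ((Nat.find hex - 1 : ℕ):ℤ) = (Nat.find hex : ℤ) - 1 := by omega
          rw [this]; ring

lemma stmt8_tendsto_logb : Tendsto (fun k : ℕ => Real.logb 2 k / k) atTop (𝓝 0) := by
  have h1 : Tendsto (fun k : ℕ => Real.log k / k) atTop (𝓝 0) := by
    have := (Real.isLittleO_log_id_atTop.comp_tendsto
      (tendsto_natCast_atTop_atTop (R := ℝ))).tendsto_div_nhds_zero
    simpa [Function.comp] using this
  have h2 := h1.mul_const (Real.log 2)⁻¹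
  rw [zero_mul] at h2
  convert h2 using 2 with k
  rw [Real.logb]; ring

/-- any `μ`-a.c. sequence of balls with diameters tending to `0` admits a
subsequence that is both `μ`-a.c. and weakly redundant. -/
theorem stmt8 {d : ℕ} (μ : Measure (Fin d → ℝ)) [IsProbabilityMeasure μ]
    (x : ℕ → Fin d → ℝ) (r : ℕ → ℝ) (hr0 : ∀ n, 0 < r n)
    (hr : Tendsto r atTop (𝓝 0)) (hac : muAC μ x r) :
    ∃ ψ : ℕ → ℕ, StrictMono ψ ∧ muAC μ (x ∘ ψ) (r ∘ ψ) ∧ WeaklyRedundant (x ∘ ψ) (r ∘ ψ) := by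
  classical
  obtain ⟨C, hC, hAC⟩ := hac
  -- enumerate a countable basis
  have hBne : (TopologicalSpace.countableBasis (Fin d → ℝ)).Nonempty := by
    have hcov := (TopologicalSpace.isBasis_countableBasis (Fin d → ℝ)).sUnion_eq
    have : (fun _ : Fin d => (0:ℝ)) ∈ ⋃₀ TopologicalSpace.countableBasis (Fin d → ℝ) := by
      rw [hcov]; trivial
    obtain ⟨b, hb, -⟩ := this
    exact ⟨b, hb⟩
  obtain ⟨Bf, hBf⟩ :=
    (TopologicalSpace.countable_countableBasis (Fin d → ℝ)).exists_eq_range hBne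
  have hBfopen : ∀ j, IsOpen (Bf j) := by
    intro j
    exact TopologicalSpace.isOpen_of_mem_countableBasis (by rw [hBf]; exact mem_range_self j)
  -- half lemma
  have half : ∀ Ω : Set (Fin d → ℝ), IsOpen Ω →
      ∃ t : Finset ℕ, (∀ j ∈ t, Bf j ⊆ Ω) ∧ μ Ω / 2 ≤ μ (⋃ j ∈ t, Bf j) := by
    intro Ω hΩ
    rcases eq_or_ne (μ Ω) 0 with h0 | h0
    · exact ⟨∅, by simp, by simp [h0]⟩
    have hlt : μ Ω / 2 < μ Ω := ENNReal.half_lt_self h0 (measure_ne_top μ Ω)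
    have hG : Ω = ⋃₀ {s | s ∈ TopologicalSpace.countableBasis (Fin d → ℝ) ∧ s ⊆ Ω} :=
      (TopologicalSpace.isBasis_countableBasis _).open_eq_sUnion' hΩ
    have hGc : {s | s ∈ TopologicalSpace.countableBasis (Fin d → ℝ) ∧ s ⊆ Ω}.Countable :=
      (TopologicalSpace.countable_countableBasis _).mono fun s hs => hs.1
    have hGne : {s | s ∈ TopologicalSpace.countableBasis (Fin d → ℝ) ∧ s ⊆ Ω}.Nonempty := by
      by_contra h
      rw [not_nonempty_iff_eq_empty] at h
      rw [hG, h] at h0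
      simp at h0
    obtain ⟨f, hf⟩ := hGc.exists_eq_range hGne
    have hmemG : ∀ i, f i ∈ {s | s ∈ TopologicalSpace.countableBasis (Fin d → ℝ) ∧ s ⊆ Ω} := by
      intro i; rw [hf]; exact mem_range_self i
    have hΩf : Ω = ⋃ n, f n := by rw [hG, hf, sUnion_range]
    have hsup : μ Ω = ⨆ n, μ (accumulate f n) := by
      rw [hΩf]; exact measure_iUnion_eq_iSup_accumulate
    have hlt2 : μ Ω / 2 < ⨆ n, μ (accumulate f n) := hlt.trans_le (le_of_eq hsup)
    obtain ⟨n, hn⟩ := lt_iSup_iff.mp hlt2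
    have hmem : ∀ i, ∃ j, Bf j = f i := by
      intro i
      have : f i ∈ range Bf := by rw [← hBf]; exact (hmemG i).1
      exact this
    choose jf hjf using hmem
    refine ⟨(Finset.range (n+1)).image jf, ?_, ?_⟩
    · intro j hj
      simp only [Finset.mem_image, Finset.mem_range] at hj
      obtain ⟨i, -, rfl⟩ := hj
      rw [hjf]
      exact (hmemG i).2
    · have hset : (⋃ j ∈ (Finset.range (n+1)).image jf, Bf j) = accumulate f n := by
        rw [Set.accumulate_def]
        ext p
        simp only [mem_iUnion, Finset.mem_image, Finset.mem_range, exists_prop]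
        constructor
        · rintro ⟨j, ⟨i, hi, rfl⟩, hp⟩
          exact ⟨i, by omega, by rwa [hjf] at hp⟩
        · rintro ⟨i, hi, hp⟩
          exact ⟨jf i, ⟨i, by omega, rfl⟩, by rwa [hjf]⟩
      rw [hset]
      exact hn.le
  -- radius control
  have hrad : ∀ i : ℕ, ∃ N : ℕ, ∀ n, N ≤ n → r n < 2 ^ (-(i:ℤ) - 1) := by
    intro i
    have hpos : (0:ℝ) < 2 ^ (-(i:ℤ) - 1) := by positivity
    have := hr.eventually_lt_const hpos
    exact eventually_atTop.mp this
  choose Nf hNf using hrad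
  -- enumeration of pairs
  obtain ⟨e, he⟩ := exists_surjective_nat (Finset ℕ × ℕ)
  -- the families
  have hFex : ∀ i : ℕ, ∃ Fi : Finset ℕ,
      (∀ n ∈ Fi, max (Nf i) (e i).2 ≤ n) ∧
      (∀ n ∈ Fi, closedBall (x n) (r n) ⊆ ⋃ j ∈ (e i).1, Bf j) ∧
      ((Fi : Set ℕ).Pairwise fun m n =>
        Disjoint (closedBall (x m) (r m)) (closedBall (x n) (r n))) ∧
      C * μ (⋃ j ∈ (e i).1, Bf j) ≤ μ (⋃ n ∈ Fi, closedBall (x n) (r n)) :=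
    fun i => hAC _ (isOpen_biUnion fun j _ => hBfopen j) _
  choose F hF1 hF2 hF3 hF4 using hFex
  -- the subsequence
  set pS : ℕ → Prop := fun n => ∃ i, n ∈ F i with hpS
  have hSinf : (setOf pS).Infinite := by
    apply Set.infinite_of_forall_exists_gt
    intro m
    obtain ⟨t0, -, ht0⟩ := half univ isOpen_univ
    obtain ⟨i, hi⟩ := he (t0, m + 1)
    have hU0 : μ univ / 2 ≤ μ (⋃ j ∈ (e i).1, Bf j) := by rw [hi]; exact ht0
    have hne : (F i).Nonempty := by
      rw [Finset.nonempty_iff_ne_empty]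
      intro h
      have h4 := hF4 i
      rw [h] at h4
      simp only [Finset.notMem_empty, iUnion_of_empty, iUnion_empty, measure_empty,
        le_zero_iff, mul_eq_zero] at h4
      have hμpos : μ (⋃ j ∈ (e i).1, Bf j) ≠ 0 := by
        intro h0
        rw [h0] at hU0
        have hhalf : (0:ℝ≥0∞) < μ (univ : Set (Fin d → ℝ)) / 2 :=
          ENNReal.half_pos (by simp [measure_univ])
        exact absurd (le_antisymm hU0 zero_le') hhalf.ne'
      rcases h4 with h4 | h4
      · exact hC.ne' h4
      · exact hμpos h4
    obtain ⟨n, hn⟩ := hne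
    refine ⟨n, ⟨i, hn⟩, ?_⟩
    have h1 := le_trans (le_max_right _ _) (hF1 i n hn)
    have h2 : (e i).2 = m + 1 := by rw [hi]
    omega
  have hψmem : ∀ j, pS (Nat.nth pS j) := fun j => Nat.nth_mem_of_infinite hSinf j
  have hmono : StrictMono (Nat.nth pS) := Nat.nth_strictMono hSinf
  set ψ := Nat.nth pS with hψ
  -- index of the family containing ψ j
  have hψmem' : ∀ j, ∃ i, ψ j ∈ F i := hψmem
  choose idx hidx using hψmem'
  have hradψ : ∀ j, r (ψ j) < 2 ^ (-(idx j : ℤ) - 1) := by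
    intro j
    have h1 := hF1 (idx j) (ψ j) (hidx j)
    exact hNf (idx j) (ψ j) (le_trans (le_max_left _ _) h1)
  refine ⟨ψ, hmono, ⟨C / 2, ?_, ?_⟩, ?_, ?_⟩
  · exact ENNReal.div_pos hC.ne' ENNReal.ofNat_ne_top
  · -- the covering property
    intro Ω hΩ g
    obtain ⟨t, htsub, htμ⟩ := half Ω hΩ
    obtain ⟨i, hi⟩ := he (t, ψ g)
    have ht1 : (e i).1 = t := by rw [hi]
    have ht2 : (e i).2 = ψ g := by rw [hi]
    have hUΩ : (⋃ j ∈ (e i).1, Bf j) ⊆ Ω := by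
      rw [ht1]
      exact iUnion₂_subset fun j hj => htsub j hj
    have hμU : μ Ω / 2 ≤ μ (⋃ j ∈ (e i).1, Bf j) := by rw [ht1]; exact htμ
    refine ⟨(F i).image (Nat.count pS), ?_, ?_, ?_, ?_⟩
    · intro j hj
      simp only [Finset.mem_image] at hj
      obtain ⟨n, hn, rfl⟩ := hj
      have hnS : pS n := ⟨i, hn⟩
      have hψn : ψ (Nat.count pS n) = n := Nat.nth_count hnS
      have : ψ g ≤ ψ (Nat.count pS n) := by
        rw [hψn]
        have h1 := le_trans (le_max_right _ _) (hF1 i n hn)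
        omega
      exact hmono.le_iff_le.mp this
    · intro j hj
      simp only [Finset.mem_image] at hj
      obtain ⟨n, hn, rfl⟩ := hj
      have hψn : ψ (Nat.count pS n) = n := Nat.nth_count ⟨i, hn⟩
      show closedBall (x (ψ (Nat.count pS n))) (r (ψ (Nat.count pS n))) ⊆ Ω
      rw [hψn]
      exact (hF2 i n hn).trans hUΩ
    · intro a ha b hb hab
      simp only [Finset.coe_image, mem_image, Finset.mem_coe] at ha hb
      obtain ⟨n, hn, rfl⟩ := ha
      obtain ⟨m, hm, rfl⟩ := hb
      have hψn : ψ (Nat.count pS n) = n := Nat.nth_count ⟨i, hn⟩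
      have hψm : ψ (Nat.count pS m) = m := Nat.nth_count ⟨i, hm⟩
      have hnm : n ≠ m := by
        intro h; exact hab (by rw [h])
      show Disjoint (closedBall (x (ψ (Nat.count pS n))) (r (ψ (Nat.count pS n))))
        (closedBall (x (ψ (Nat.count pS m))) (r (ψ (Nat.count pS m))))
      rw [hψn, hψm]
      exact hF3 i hn hm hnm
    · have hunion : (⋃ j ∈ (F i).image (Nat.count pS),
          closedBall ((x ∘ ψ) j) ((r ∘ ψ) j)) = ⋃ n ∈ F i, closedBall (x n) (r n) := by
        apply subset_antisymm
        · refine iUnion₂_subset fun j hj => ?_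
          simp only [Finset.mem_image] at hj
          obtain ⟨n, hn, rfl⟩ := hj
          have hψn : ψ (Nat.count pS n) = n := Nat.nth_count ⟨i, hn⟩
          refine subset_iUnion₂_of_subset n hn ?_
          simp only [Function.comp_apply, hψn]
          exact subset_rfl
        · refine iUnion₂_subset fun n hn => ?_
          have hψn : ψ (Nat.count pS n) = n := Nat.nth_count ⟨i, hn⟩
          refine subset_iUnion₂_of_subset (Nat.count pS n) (Finset.mem_image_of_mem _ hn) ?_
          simp only [Function.comp_apply, hψn]
          exact subset_rfl
      rw [hunion]
      calc C / 2 * μ Ω = C * (μ Ω / 2) := by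
            rw [div_eq_mul_inv, div_eq_mul_inv]; ring
        _ ≤ C * μ (⋃ j ∈ (e i).1, Bf j) := mul_le_mul_right hμU C
        _ ≤ μ (⋃ n ∈ F i, closedBall (x n) (r n)) := hF4 i
  · -- every ball has a scale
    intro n
    have h1 : r (ψ n) ≤ 1 := by
      have := hradψ n
      have h2 : (2:ℝ) ^ (-(idx n : ℤ) - 1) ≤ 1 := by
        calc (2:ℝ) ^ (-(idx n : ℤ) - 1) ≤ 2 ^ (0:ℤ) := zpow_le_zpow_right₀ (by norm_num) (by omega)
          _ = 1 := by norm_num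
      exact le_trans this.le h2
    exact stmt8_scale_exists (hr0 (ψ n)) h1
  · -- weak redundancy data
    refine ⟨id, idx, ?_, ?_, ?_⟩
    · intro k m n _ _ _ _ hmn hind
      have h1 := hidx m
      have h2 := hidx n
      rw [hind] at h1
      simp only [Function.comp_apply]
      exact hF3 (idx n) h1 h2 (fun h => hmn (hmono.injective h))
    · intro k n hlow _
      have h1 := hradψ n
      have h2 : (2:ℝ) ^ (-(k:ℤ) - 1) < 2 ^ (-(idx n : ℤ) - 1) := lt_trans hlow h1
      have h3 : -(k:ℤ) - 1 < -(idx n : ℤ) - 1 :=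
        (zpow_lt_zpow_iff_right₀ (by norm_num : (1:ℝ) < 2)).mp h2
      show idx n < k
      omega
    · simpa using stmt8_tendsto_logb
end

section
/- Let μ be a Borel probability measure on ℝ^d and (B_n = B(x_n,r_n)) a μ-asymptotically covering sequence of balls with r_n→0. Then for every ε>0, the subfamily B' = {B_n : μ(B_n) ≤ r_n^{dim_H(μ)−ε}} is itself μ-asymptotically covering. -/
open MeasureTheory Metric Set Filter
open scoped ENNReal Topology

/-- The subfamily of balls `{B_n : n ∈ S}` is `μ`-asymptotically covering. -/
def muACOn {d : ℕ} (μ : Measure (Fin d → ℝ)) (x : ℕ → Fin d → ℝ) (r : ℕ → ℝ)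
    (S : Set ℕ) : Prop :=
  ∃ C : ℝ≥0∞, 0 < C ∧ ∀ Ω : Set (Fin d → ℝ), IsOpen Ω → ∀ g : ℕ,
    ∃ F : Finset ℕ, (∀ n ∈ F, g ≤ n ∧ n ∈ S) ∧
      (∀ n ∈ F, closedBall (x n) (r n) ⊆ Ω) ∧
      ((F : Set ℕ).Pairwise fun m n =>
        Disjoint (closedBall (x m) (r m)) (closedBall (x n) (r n))) ∧
      C * μ Ω ≤ μ (⋃ n ∈ F, closedBall (x n) (r n))

/-- Lower local dimension of `μ` at `y`. -/
noncomputable def lowerLocalDim {d : ℕ} (μ : Measure (Fin d → ℝ)) (y : Fin d → ℝ) : ℝ :=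
  liminf (fun ρ : ℝ => Real.log (μ (closedBall y ρ)).toReal / Real.log ρ) (𝓝[>] 0)

/-- Lower Hausdorff dimension of `μ`: essential infimum of the lower local dimension. -/
noncomputable def dimHMeasure {d : ℕ} (μ : Measure (Fin d → ℝ)) : ℝ :=
  essInf (lowerLocalDim μ) μ

/-- A liminf of an eventually nonnegative real function is nonnegative. -/
lemma liminf_nonneg_aux {α : Type*} {F : Filter α} {u : α → ℝ}
    (h : ∀ᶠ x in F, 0 ≤ u x) : 0 ≤ Filter.liminf u F := by
  rw [Filter.liminf_eq]
  by_cases hb : BddAbove {a : ℝ | ∀ᶠ x in F, a ≤ u x}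
  · exact le_csSup hb h
  · rw [Real.sSup_of_not_bddAbove hb]

/-- for a `μ`-a.c. sequence of balls with radii tending to `0` and `ε > 0`,
the subfamily of balls with `μ(B_n) ≤ r_n^{dim_H(μ) - ε}` is itself `μ`-a.c. -/
theorem stmt9 {d : ℕ} (μ : Measure (Fin d → ℝ)) [IsProbabilityMeasure μ]
    (x : ℕ → Fin d → ℝ) (r : ℕ → ℝ) (hr0 : ∀ n, 0 < r n)
    (hr : Tendsto r atTop (𝓝 0)) (hac : muACOn μ x r Set.univ)
    (ε : ℝ) (hε : 0 < ε) :
    muACOn μ x r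
      {n | μ (closedBall (x n) (r n)) ≤ ENNReal.ofReal (r n ^ (dimHMeasure μ - ε))} := by
  classical
  set S : Set ℕ :=
    {n | μ (closedBall (x n) (r n)) ≤ ENNReal.ofReal (r n ^ (dimHMeasure μ - ε))} with hS
  set s : ℝ := dimHMeasure μ - ε with hs_def
  set s' : ℝ := dimHMeasure μ - ε / 2 with hs'_def
  set K : ℝ := max ((2 : ℝ) ^ s') ((3 : ℝ) ^ s') with hK_def
  have hK0 : 0 < K := lt_max_of_lt_left (Real.rpow_pos_of_pos two_pos s')
  -- the "good density" sets
  set A : ℕ → Set (Fin d → ℝ) := fun m =>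
    {y | ∀ q : ℚ, 0 < (q : ℝ) → (q : ℝ) ≤ 1 / (m + 1) →
      μ (closedBall y (q : ℝ)) ≤ ENNReal.ofReal ((q : ℝ) ^ s')} with hA_def
  -- measurability of the map y ↦ μ (closedBall y t)
  have hmeas : ∀ t : ℝ, Measurable fun y : Fin d → ℝ => μ (closedBall y t) := by
    intro t
    have hst : MeasurableSet {p : (Fin d → ℝ) × (Fin d → ℝ) | dist p.2 p.1 ≤ t} := by
      apply measurableSet_le
      · exact (continuous_dist.comp (continuous_snd.prodMk continuous_fst)).measurable
      · exact measurable_const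
    have h2 := measurable_measure_prodMk_left (ν := μ) hst
    have heq : (fun y : Fin d → ℝ => μ (closedBall y t)) =
        fun y => μ (Prod.mk y ⁻¹' {p : (Fin d → ℝ) × (Fin d → ℝ) | dist p.2 p.1 ≤ t}) := by
      funext y
      rfl
    rw [heq]
    exact h2
  have hAmeas : ∀ m, MeasurableSet (A m) := by
    intro m
    have : A m =
        ⋂ q : ℚ, {y | 0 < (q : ℝ) → (q : ℝ) ≤ 1 / (m + 1) →
          μ (closedBall y (q : ℝ)) ≤ ENNReal.ofReal ((q : ℝ) ^ s')} := by
      rw [hA_def]; ext y; simp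
    rw [this]
    refine MeasurableSet.iInter fun q => ?_
    by_cases h1 : 0 < (q : ℝ) ∧ (q : ℝ) ≤ 1 / (m + 1)
    · have : {y : Fin d → ℝ | 0 < (q : ℝ) → (q : ℝ) ≤ 1 / (m + 1) →
          μ (closedBall y (q : ℝ)) ≤ ENNReal.ofReal ((q : ℝ) ^ s')} =
          (fun y => μ (closedBall y (q : ℝ))) ⁻¹' Iic (ENNReal.ofReal ((q : ℝ) ^ s')) := by
        ext y
        simp only [mem_setOf_eq, mem_preimage, mem_Iic]
        exact ⟨fun h => h h1.1 h1.2, fun h _ _ => h⟩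
      rw [this]
      exact (hmeas q) measurableSet_Iic
    · have : {y : Fin d → ℝ | 0 < (q : ℝ) → (q : ℝ) ≤ 1 / (m + 1) →
          μ (closedBall y (q : ℝ)) ≤ ENNReal.ofReal ((q : ℝ) ^ s')} = univ := by
        ext y; simp only [mem_setOf_eq, mem_univ, iff_true]
        intro hq1 hq2; exact absurd ⟨hq1, hq2⟩ h1
      rw [this]; exact MeasurableSet.univ
  have hAmono : Monotone A := by
    intro m m' hmm' y hy q hq0 hq1
    refine hy q hq0 (hq1.trans ?_)
    apply one_div_le_one_div_of_le (by positivity)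
    have : (m : ℝ) ≤ m' := Nat.cast_le.2 hmm'
    linarith
  -- lower local dimension is nonnegative everywhere
  have hnonneg : ∀ y, 0 ≤ lowerLocalDim μ y := by
    intro y
    apply liminf_nonneg_aux
    filter_upwards [Ioo_mem_nhdsGT_of_mem (show (0:ℝ) ∈ Ico (0:ℝ) 1 by simp)] with ρ hρ
    apply div_nonneg_of_nonpos
    · apply Real.log_nonpos ENNReal.toReal_nonneg
      calc (μ (closedBall y ρ)).toReal ≤ (1 : ℝ≥0∞).toReal :=
            ENNReal.toReal_mono ENNReal.one_ne_top prob_le_one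
        _ = 1 := by simp
    · exact Real.log_nonpos hρ.1.le hρ.2.le
  -- a.e. every point is in some A m
  have haeA : ∀ᵐ y ∂μ, ∃ m : ℕ, y ∈ A m := by
    have h1 : s' < essInf (lowerLocalDim μ) μ := by
      have : essInf (lowerLocalDim μ) μ = dimHMeasure μ := rfl
      rw [this, hs'_def]; linarith
    have hb : IsBoundedUnder (· ≥ ·) (ae μ) (lowerLocalDim μ) :=
      Filter.isBoundedUnder_of_eventually_ge
        (a := (0:ℝ)) (Filter.Eventually.of_forall fun y => hnonneg y)
    have hae : ∀ᵐ y ∂μ, s' < lowerLocalDim μ y :=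
      Filter.eventually_lt_of_lt_liminf h1 hb
    filter_upwards [hae] with y hy
    have hb2 : IsBoundedUnder (· ≥ ·)  (𝓝[>] (0:ℝ))
        (fun ρ : ℝ => Real.log (μ (closedBall y ρ)).toReal / Real.log ρ) := by
      apply Filter.isBoundedUnder_of_eventually_ge (a := (0:ℝ))
      filter_upwards [Ioo_mem_nhdsGT_of_mem (show (0:ℝ) ∈ Ico (0:ℝ) 1 by simp)] with ρ hρ
      apply div_nonneg_of_nonpos
      · apply Real.log_nonpos ENNReal.toReal_nonneg
        calc (μ (closedBall y ρ)).toReal ≤ (1 : ℝ≥0∞).toReal :=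
              ENNReal.toReal_mono ENNReal.one_ne_top prob_le_one
          _ = 1 := by simp
      · exact Real.log_nonpos hρ.1.le hρ.2.le
    have hev : ∀ᶠ ρ in 𝓝[>] (0:ℝ),
        s' < Real.log (μ (closedBall y ρ)).toReal / Real.log ρ :=
      Filter.eventually_lt_of_lt_liminf hy hb2
    have hev2 : {ρ : ℝ | (s' < Real.log (μ (closedBall y ρ)).toReal / Real.log ρ) ∧
        ρ ∈ Ioo (0:ℝ) 1} ∈ 𝓝[>] (0:ℝ) := by
      filter_upwards [hev, Ioo_mem_nhdsGT_of_mem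
        (show (0:ℝ) ∈ Ico (0:ℝ) 1 by simp)] with ρ h1 h2
      exact ⟨h1, h2⟩
    rw [mem_nhdsGT_iff_exists_Ioo_subset] at hev2
    obtain ⟨δ, hδ, hsub⟩ := hev2
    obtain ⟨m, hm⟩ := exists_nat_one_div_lt (show (0:ℝ) < min δ 1 from lt_min hδ one_pos)
    refine ⟨m, fun q hq0 hq1 => ?_⟩
    have hqδ : (q : ℝ) ∈ Ioo (0:ℝ) δ :=
      ⟨hq0, lt_of_le_of_lt hq1 (hm.trans_le (min_le_left _ _))⟩
    obtain ⟨hrat, hq01⟩ := hsub hqδ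
    by_cases h0 : μ (closedBall y (q:ℝ)) = 0
    · simp [h0]
    have htop : μ (closedBall y (q:ℝ)) ≠ ⊤ := measure_ne_top μ _
    set t : ℝ := (μ (closedBall y (q:ℝ))).toReal with ht_def
    have ht0 : 0 < t := ENNReal.toReal_pos h0 htop
    have hlogq : Real.log (q:ℝ) < 0 := Real.log_neg hq0 hq01.2
    have h2 : Real.log t < s' * Real.log (q:ℝ) := by
      have := (lt_div_iff_of_neg hlogq).1 hrat
      linarith
    have h3 : Real.log t < Real.log ((q:ℝ) ^ s') := by
      rw [Real.log_rpow hq0]; exact h2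
    have h4 : t < (q:ℝ) ^ s' :=
      (Real.log_lt_log_iff ht0 (Real.rpow_pos_of_pos hq0 s')).1 h3
    calc μ (closedBall y (q:ℝ)) = ENNReal.ofReal t := (ENNReal.ofReal_toReal htop).symm
      _ ≤ ENNReal.ofReal ((q:ℝ) ^ s') := ENNReal.ofReal_le_ofReal h4.le
  -- main construction
  obtain ⟨C, hC, hCprop⟩ := hac
  set C' : ℝ≥0∞ := min C 1 / 2 with hC'_def
  have hC'0 : 0 < C' := ENNReal.div_pos (ne_of_gt (lt_min hC one_pos)) (by norm_num)
  have hC'top : C' ≠ ⊤ := by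
    apply ne_top_of_le_ne_top (b := (1:ℝ≥0∞)) ENNReal.one_ne_top
    calc C' ≤ min C 1 := ENNReal.half_le_self.trans_eq rfl
      _ ≤ 1 := min_le_right _ _
  refine ⟨C', hC'0, fun Ω hΩ g => ?_⟩
  by_cases hΩ0 : μ Ω = 0
  · refine ⟨∅, by simp, by simp, by simp, by simp [hΩ0]⟩
  -- choose m
  have htend : Tendsto (fun m => μ (Ω \ A m)) atTop (𝓝 (μ (⋂ m, Ω \ A m))) := by
    have := tendsto_measure_iInter_atTop (μ := μ) (s := fun m => Ω \ A m)
      (fun m => (hΩ.measurableSet.diff (hAmeas m)).nullMeasurableSet)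
      (fun i j hij => diff_subset_diff_right (hAmono hij))
      ⟨0, measure_ne_top μ _⟩
    exact this
  have hinter0 : μ (⋂ m, Ω \ A m) = 0 := by
    rw [← Set.diff_iUnion]
    apply measure_mono_null (t := {y | ¬ ∃ m, y ∈ A m})
    · intro z hz
      simp only [mem_diff, mem_iUnion] at hz
      simpa using hz.2
    · exact haeA
  rw [hinter0] at htend
  have hCμ : 0 < C' * μ Ω := ENNReal.mul_pos (ne_of_gt hC'0) hΩ0
  obtain ⟨m, hmΩ⟩ := (htend.eventually_lt_const hCμ).exists
  -- choose the cutoff radius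
  set δ1 : ℝ := (min 1 K⁻¹) ^ (2 / ε) with hδ1_def
  have hδ10 : 0 < δ1 := Real.rpow_pos_of_pos (lt_min one_pos (inv_pos.2 hK0)) _
  set δ2 : ℝ := min δ1 (1 / (3 * (m + 1))) with hδ2_def
  have hδ20 : 0 < δ2 := lt_min hδ10 (by positivity)
  obtain ⟨N, hN⟩ := (Filter.eventually_atTop).1 (hr.eventually_lt_const hδ20)
  -- apply the original a.c. property
  obtain ⟨F, hF1, hF2, hF3, hF4⟩ := hCprop Ω hΩ (max g N)
  -- bad balls avoid A m
  have hbad : ∀ n ∈ F, n ∉ S → closedBall (x n) (r n) ⊆ Ω \ A m := by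
    intro n hnF hnS z hz
    refine ⟨hF2 n hnF hz, ?_⟩
    intro hzA
    apply hnS
    have hrn : r n < δ2 := hN n (le_trans (le_max_right _ _) (hF1 n hnF).1)
    have hr0n : 0 < r n := hr0 n
    obtain ⟨q, hq2, hq3⟩ := exists_rat_btwn (show 2 * r n < 3 * r n by linarith)
    have hq0 : 0 < (q : ℝ) := by linarith
    have hq1m : (q : ℝ) ≤ 1 / (m + 1) := by
      have h1 : r n ≤ 1 / (3 * ((m:ℝ) + 1)) := le_of_lt (hrn.trans_le (min_le_right _ _))
      have h3 : (3:ℝ) * (1 / (3 * ((m:ℝ) + 1))) = 1 / ((m:ℝ) + 1) := by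
        have h2 : (0:ℝ) < (m:ℝ) + 1 := by positivity
        field_simp
      calc (q:ℝ) ≤ 3 * r n := hq3.le
        _ ≤ 3 * (1 / (3 * ((m:ℝ) + 1))) := by linarith
        _ = 1 / ((m:ℝ) + 1) := h3
    have hball : closedBall (x n) (r n) ⊆ closedBall z (q : ℝ) := by
      intro w hw
      rw [Metric.mem_closedBall] at *
      calc dist w z ≤ dist w (x n) + dist (x n) z := dist_triangle _ _ _
        _ ≤ r n + r n := by
            refine add_le_add hw ?_
            rw [dist_comm]; exact hz
        _ ≤ (q : ℝ) := by linarith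
    have hμq : μ (closedBall z (q:ℝ)) ≤ ENNReal.ofReal ((q:ℝ) ^ s') := hzA q hq0 hq1m
    -- the real inequality : q ^ s' ≤ r n ^ s
    have hqs : (q:ℝ) ^ s' ≤ r n ^ s := by
      have hqr : (q:ℝ) = ((q:ℝ) / r n) * r n := (div_mul_cancel₀ _ (ne_of_gt hr0n)).symm
      have h23a : 2 ≤ (q:ℝ) / r n := (le_div_iff₀ hr0n).2 (by linarith)
      have h23b : (q:ℝ) / r n ≤ 3 := (div_le_iff₀ hr0n).2 (by linarith)
      have hKb : ((q:ℝ) / r n) ^ s' ≤ K := by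
        rcases le_or_gt 0 s' with hs'0 | hs'0
        · exact le_trans (Real.rpow_le_rpow (by linarith) h23b hs'0) (le_max_right _ _)
        · exact le_trans (Real.rpow_le_rpow_of_nonpos two_pos h23a hs'0.le) (le_max_left _ _)
      have hrs' : r n ^ s' = r n ^ s * r n ^ (ε / 2) := by
        rw [← Real.rpow_add hr0n]
        congr 1
        rw [hs'_def, hs_def]; ring
      have hKr : K * r n ^ (ε / 2) ≤ 1 := by
        have hrδ1 : r n ≤ δ1 := le_of_lt (hrn.trans_le (min_le_left _ _))
        have h5 : r n ^ (ε / 2) ≤ δ1 ^ (ε / 2) :=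
          Real.rpow_le_rpow hr0n.le hrδ1 (by positivity)
        have h6 : δ1 ^ (ε / 2) = min 1 K⁻¹ := by
          rw [hδ1_def, ← Real.rpow_mul (le_of_lt (lt_min one_pos (inv_pos.2 hK0)))]
          rw [show 2 / ε * (ε / 2) = 1 by field_simp]
          exact Real.rpow_one _
        have h7 : r n ^ (ε / 2) ≤ K⁻¹ := by
          rw [h6] at h5; exact h5.trans (min_le_right _ _)
        calc K * r n ^ (ε / 2) ≤ K * K⁻¹ := by
              exact mul_le_mul_of_nonneg_left h7 hK0.le
          _ = 1 := mul_inv_cancel₀ hK0.ne'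
      calc (q:ℝ) ^ s' = ((q:ℝ) / r n) ^ s' * r n ^ s' := by
            conv_lhs => rw [hqr]
            exact Real.mul_rpow (by linarith) hr0n.le
        _ ≤ K * r n ^ s' := by
            apply mul_le_mul_of_nonneg_right hKb (Real.rpow_nonneg hr0n.le _)
        _ = r n ^ s * (K * r n ^ (ε / 2)) := by rw [hrs']; ring
        _ ≤ r n ^ s * 1 :=
            mul_le_mul_of_nonneg_left hKr (Real.rpow_nonneg hr0n.le _)
        _ = r n ^ s := mul_one _
    show μ (closedBall (x n) (r n)) ≤ ENNReal.ofReal (r n ^ (dimHMeasure μ - ε))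
    calc μ (closedBall (x n) (r n)) ≤ μ (closedBall z (q:ℝ)) := measure_mono hball
      _ ≤ ENNReal.ofReal ((q:ℝ) ^ s') := hμq
      _ ≤ ENNReal.ofReal (r n ^ s) := ENNReal.ofReal_le_ofReal hqs
  -- split F into good and bad parts
  set F' : Finset ℕ := F.filter (fun n => n ∈ S) with hF'_def
  set Fb : Finset ℕ := F.filter (fun n => n ∉ S) with hFb_def
  have hF'sub : ∀ n ∈ F', n ∈ F := fun n hn => (Finset.mem_filter.1 hn).1
  refine ⟨F', ?_, ?_, ?_, ?_⟩
  · intro n hn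
    exact ⟨le_trans (le_max_left _ _) (hF1 n (hF'sub n hn)).1,
      (Finset.mem_filter.1 hn).2⟩
  · intro n hn; exact hF2 n (hF'sub n hn)
  · exact hF3.mono (by intro n hn; exact hF'sub n hn)
  · -- the measure estimate
    have hsplit : (⋃ n ∈ F, closedBall (x n) (r n)) ⊆
        (⋃ n ∈ F', closedBall (x n) (r n)) ∪ (⋃ n ∈ Fb, closedBall (x n) (r n)) := by
      intro z hz
      rw [mem_iUnion₂] at hz
      obtain ⟨n, hnF, hzn⟩ := hz
      by_cases hnS : n ∈ S
      · left; exact mem_iUnion₂.2 ⟨n, Finset.mem_filter.2 ⟨hnF, hnS⟩, hzn⟩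
      · right; exact mem_iUnion₂.2 ⟨n, Finset.mem_filter.2 ⟨hnF, hnS⟩, hzn⟩
    have hUb : μ (⋃ n ∈ Fb, closedBall (x n) (r n)) ≤ C' * μ Ω := by
      refine le_of_lt (lt_of_le_of_lt ?_ hmΩ)
      apply measure_mono
      refine Set.iUnion₂_subset fun n hn => ?_
      obtain ⟨hnF, hnS⟩ := Finset.mem_filter.1 hn
      exact hbad n hnF hnS
    have hchain : C' * μ Ω + C' * μ Ω ≤
        μ (⋃ n ∈ F', closedBall (x n) (r n)) + C' * μ Ω := by
      have e1 : C' * μ Ω + C' * μ Ω = min C 1 * μ Ω := by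
        rw [hC'_def, ← add_mul, ENNReal.add_halves]
      rw [e1]
      calc min C 1 * μ Ω ≤ C * μ Ω := mul_le_mul_left (min_le_left _ _) _
        _ ≤ μ (⋃ n ∈ F, closedBall (x n) (r n)) := hF4
        _ ≤ μ ((⋃ n ∈ F', closedBall (x n) (r n)) ∪
              (⋃ n ∈ Fb, closedBall (x n) (r n))) := measure_mono hsplit
        _ ≤ μ (⋃ n ∈ F', closedBall (x n) (r n)) +
              μ (⋃ n ∈ Fb, closedBall (x n) (r n)) := measure_union_le _ _
        _ ≤ μ (⋃ n ∈ F', closedBall (x n) (r n)) + C' * μ Ω :=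
              add_le_add_right hUb _
    have hfin : C' * μ Ω ≠ ⊤ :=
      ENNReal.mul_ne_top hC'top (measure_ne_top μ _)
    exact (ENNReal.add_le_add_iff_right hfin).1 hchain
end

section
/- Let μ be an exact-dimensional Borel probability measure on ℝ^d of dimension α, and (B_n) a sequence of balls with |B_n|→0. Fix ε>0 and let B_>^ε = {B_n : μ(B_n) ≤ |B_n|^{α+ε}}. Then for every 0<v<1, μ(limsup_{B∈B_>^ε} vB) = 0. -/
open MeasureTheory Metric Set Filter
open scoped ENNReal Topology

/-- for an `α`-exact-dimensional measure `μ`, collecting those balls of the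
sequence whose measure is at most `|B_n|^{α+ε}`, the limsup of the `v`-contracted such
balls has `μ`-measure `0`, for any `0 < v < 1`. -/
theorem stmt12 {d : ℕ} (μ : Measure (Fin d → ℝ)) [IsProbabilityMeasure μ]
    (α : ℝ)
    (hexact : ∀ᵐ y ∂μ, Tendsto
      (fun ρ : ℝ => Real.log (μ (closedBall y ρ)).toReal / Real.log ρ)
      (𝓝[>] 0) (𝓝 α))
    (x : ℕ → Fin d → ℝ) (r : ℕ → ℝ) (hr0 : ∀ n, 0 < r n)
    (hr : Tendsto r atTop (𝓝 0)) (ε : ℝ) (hε : 0 < ε)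
    (v : ℝ) (hv0 : 0 < v) (hv1 : v < 1) :
    μ (⋂ g : ℕ, ⋃ n, ⋃ _ : g ≤ n ∧
        μ (closedBall (x n) (r n)) ≤ ENNReal.ofReal ((2 * r n) ^ (α + ε)),
        closedBall (x n) (v * r n)) = 0 := by
  have h1v : (0:ℝ) < 1 - v := by linarith
  -- a.e. point gives positive measure to all its closed balls
  have hpos : ∀ᵐ y ∂μ, ∀ ρ : ℝ, 0 < ρ → μ (closedBall y ρ) ≠ 0 := by
    rw [ae_iff]
    apply measure_null_of_locally_null
    intro y hy
    simp only [mem_setOf_eq] at hy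
    push_neg at hy
    obtain ⟨ρ, hρ, h0⟩ := hy
    exact ⟨closedBall y ρ, mem_nhdsWithin_of_mem_nhds (closedBall_mem_nhds y hρ), h0⟩
  rw [measure_eq_zero_iff_ae_notMem]
  filter_upwards [hexact, hpos] with y hy hyp hyA
  -- eventually (in ρ) the log-ratio is < α + ε/2 and ρ < 1
  have hev : ∀ᶠ ρ in 𝓝[>] (0:ℝ),
      Real.log (μ (closedBall y ρ)).toReal / Real.log ρ < α + ε / 2 ∧ ρ < 1 :=
    (hy.eventually_lt_const (by linarith)).and
      (Filter.Eventually.filter_mono nhdsWithin_le_nhds (eventually_lt_nhds zero_lt_one))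
  rw [eventually_nhdsWithin_iff, Metric.eventually_nhds_iff] at hev
  obtain ⟨δ, hδ0, hδ⟩ := hev
  -- lower bound on measures of small balls around y
  have hlow : ∀ ρ : ℝ, 0 < ρ → ρ < δ → ρ ^ (α + ε / 2) < (μ (closedBall y ρ)).toReal := by
    intro ρ hρ0 hρδ
    have hd : dist ρ (0:ℝ) < δ := by
      rw [Real.dist_eq, sub_zero, abs_of_pos hρ0]; exact hρδ
    obtain ⟨hf, hρ1⟩ := hδ hd hρ0
    have hμpos : 0 < (μ (closedBall y ρ)).toReal :=
      ENNReal.toReal_pos (hyp ρ hρ0) (measure_ne_top μ _)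
    have hlogρ : Real.log ρ < 0 := Real.log_neg hρ0 hρ1
    have hlog : (α + ε / 2) * Real.log ρ < Real.log (μ (closedBall y ρ)).toReal :=
      (div_lt_iff_of_neg hlogρ).mp hf
    calc ρ ^ (α + ε / 2) = Real.exp (Real.log ρ * (α + ε / 2)) :=
          Real.rpow_def_of_pos hρ0 _
      _ < Real.exp (Real.log (μ (closedBall y ρ)).toReal) := by
          apply Real.exp_lt_exp.mpr; rw [mul_comm]; exact hlog
      _ = (μ (closedBall y ρ)).toReal := Real.exp_log hμpos
  -- smallness of r n eventually
  have hc : (0:ℝ) < (1 - v) ^ (α + ε / 2) / 2 ^ (α + ε) := by positivity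
  have hrp : Tendsto (fun n => r n ^ (ε / 2)) atTop (𝓝 0) := by
    have hcont := (Real.continuousAt_rpow_const 0 (ε / 2) (Or.inr (by positivity))).tendsto.comp hr
    simpa [Function.comp_def, Real.zero_rpow (by positivity : (ε / 2 : ℝ) ≠ 0)] using hcont
  have hsm : ∀ᶠ n in atTop, r n ^ (ε / 2) < (1 - v) ^ (α + ε / 2) / 2 ^ (α + ε) :=
    hrp.eventually_lt_const hc
  have hsm2 : ∀ᶠ n in atTop, (1 - v) * r n < δ := by
    have : Tendsto (fun n => (1 - v) * r n) atTop (𝓝 0) := by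
      simpa using hr.const_mul (1 - v)
    exact this.eventually_lt_const hδ0
  obtain ⟨N, hN⟩ := eventually_atTop.mp (hsm.and hsm2)
  -- extract a suitable n ≥ N from membership in the limsup set
  simp only [mem_iInter, mem_iUnion] at hyA
  obtain ⟨n, ⟨hNn, hμn⟩, hymem⟩ := hyA N
  obtain ⟨hsmall, hδsmall⟩ := hN n hNn
  set ρ := (1 - v) * r n with hρdef
  have hρ0 : 0 < ρ := mul_pos h1v (hr0 n)
  have hsub : closedBall y ρ ⊆ closedBall (x n) (r n) := by
    apply closedBall_subset_closedBall'
    rw [mem_closedBall] at hymem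
    have : dist y (x n) ≤ v * r n := hymem
    nlinarith [this]
  have hA : ρ ^ (α + ε / 2) < (μ (closedBall y ρ)).toReal := hlow ρ hρ0 hδsmall
  have hB : (μ (closedBall y ρ)).toReal ≤ (μ (closedBall (x n) (r n))).toReal :=
    ENNReal.toReal_mono (measure_ne_top μ _) (measure_mono hsub)
  have hC : (μ (closedBall (x n) (r n))).toReal ≤ (2 * r n) ^ (α + ε) :=
    ENNReal.toReal_le_of_le_ofReal (Real.rpow_nonneg (by linarith [hr0 n]) _) hμn
  have hD : (2 * r n) ^ (α + ε) < ρ ^ (α + ε / 2) := by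
    have hrn := hr0 n
    have h2 : (2 * r n) ^ (α + ε) = 2 ^ (α + ε) * (r n ^ (α + ε / 2) * r n ^ (ε / 2)) := by
      rw [Real.mul_rpow (by norm_num) hrn.le, ← Real.rpow_add hrn]
      ring_nf
    have h3 : ρ ^ (α + ε / 2) = (1 - v) ^ (α + ε / 2) * r n ^ (α + ε / 2) :=
      Real.mul_rpow h1v.le hrn.le
    rw [h2, h3]
    have hkey : 2 ^ (α + ε) * r n ^ (ε / 2) < (1 - v) ^ (α + ε / 2) := by
      have := (mul_lt_mul_of_pos_left hsmall (by positivity : (0:ℝ) < 2 ^ (α + ε)))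
      rwa [mul_div_cancel₀ _ (by positivity : (2:ℝ) ^ (α + ε) ≠ 0)] at this
    have hpow : (0:ℝ) < r n ^ (α + ε / 2) := Real.rpow_pos_of_pos hrn _
    nlinarith [hpow, hkey]
  linarith
end

section
/- Let μ be a Borel probability measure on ℝ^d and (B_n) a sequence of closed balls with |B_n|→0. Suppose there exists C>1 such that for every open ball B there is a subsequence (L_{B,n}) of (B_n) with L_{B,n} ⊂ B for all n, ∑_n μ(L_{B,n}) = +∞, and for infinitely many Q, ∑_{s,t=1}^Q μ(L_{B,s} ∩ L_{B,t}) ≤ (C/μ(B)) (∑_{n=1}^Q μ(L_{B,n}))². Then μ(limsup_{n→∞} B_n) = 1, and consequently for any κ>1 the sequence (κB_n) is μ-asymptotically covering. -/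
open MeasureTheory Metric Set Filter
open scoped ENNReal Topology

lemma cs_ineq {α : Type*} [MeasurableSpace α] (μ : Measure α) (F : Finset ℕ) (A : ℕ → Set α)
    (hA : ∀ i, MeasurableSet (A i)) (U : Set α) (hU : MeasurableSet U)
    (hsub : ∀ i ∈ F, A i ⊆ U) :
    (∑ i ∈ F, μ (A i)) ^ 2 ≤ (∑ i ∈ F, ∑ j ∈ F, μ (A i ∩ A j)) * μ U := by
  classical
  set f : α → ℝ≥0∞ := fun z => ∑ i ∈ F, (A i).indicator (fun _ => (1:ℝ≥0∞)) z with hf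
  have hfm : Measurable f := by
    apply Finset.measurable_sum
    intro i _
    exact measurable_const.indicator (hA i)
  have hgm : Measurable (U.indicator (fun _ => (1:ℝ≥0∞))) := measurable_const.indicator hU
  have hint1 : ∫⁻ z, f z ∂μ = ∑ i ∈ F, μ (A i) := by
    rw [lintegral_finset_sum _ (fun i _ => measurable_const.indicator (hA i))]
    refine Finset.sum_congr rfl fun i _ => ?_
    rw [lintegral_indicator (hA i), setLIntegral_const, one_mul]
  have hint2 : ∫⁻ z, f z * f z ∂μ = ∑ i ∈ F, ∑ j ∈ F, μ (A i ∩ A j) := by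
    have : ∀ z, f z * f z = ∑ i ∈ F, ∑ j ∈ F, (A i ∩ A j).indicator (fun _ => (1:ℝ≥0∞)) z := by
      intro z
      rw [hf, Finset.sum_mul_sum]
      refine Finset.sum_congr rfl fun i _ => Finset.sum_congr rfl fun j _ => ?_
      by_cases hi : z ∈ A i <;> by_cases hj : z ∈ A j <;>
        simp [Set.indicator_apply, hi, hj, Set.mem_inter_iff]
    simp_rw [this]
    rw [lintegral_finset_sum _ (fun i _ => Finset.measurable_sum _
      (fun j _ => measurable_const.indicator ((hA i).inter (hA j))))]
    refine Finset.sum_congr rfl fun i _ => ?_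
    rw [lintegral_finset_sum _ (fun j _ => measurable_const.indicator ((hA i).inter (hA j)))]
    refine Finset.sum_congr rfl fun j _ => ?_
    rw [lintegral_indicator ((hA i).inter (hA j)), setLIntegral_const, one_mul]
  have hfg : ∀ z, f z = f z * U.indicator (fun _ => (1:ℝ≥0∞)) z := by
    intro z
    by_cases hz : z ∈ U
    · simp [Set.indicator_of_mem hz]
    · have : f z = 0 := by
        rw [hf]
        refine Finset.sum_eq_zero fun i hi => ?_
        exact Set.indicator_of_notMem (fun hzi => hz (hsub i hi hzi)) _
      simp [this]
  have hconj : Real.HolderConjugate 2 2 := Real.HolderConjugate.two_two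
  have CS := ENNReal.lintegral_mul_le_Lp_mul_Lq μ hconj hfm.aemeasurable hgm.aemeasurable
  have h2 : ∫⁻ z, f z ∂μ ≤ (∫⁻ z, f z ^ (2:ℝ) ∂μ) ^ (1/(2:ℝ)) *
      (∫⁻ z, (U.indicator (fun _ => (1:ℝ≥0∞)) z) ^ (2:ℝ) ∂μ) ^ (1/(2:ℝ)) := by
    calc ∫⁻ z, f z ∂μ = ∫⁻ z, f z * U.indicator (fun _ => (1:ℝ≥0∞)) z ∂μ := by
          simp_rw [← hfg]
      _ ≤ _ := CS
  have hU2 : ∫⁻ z, (U.indicator (fun _ => (1:ℝ≥0∞)) z) ^ (2:ℝ) ∂μ = μ U := by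
    have : ∀ z, (U.indicator (fun _ => (1:ℝ≥0∞)) z) ^ (2:ℝ) =
        U.indicator (fun _ => (1:ℝ≥0∞)) z := by
      intro z; by_cases hz : z ∈ U <;> simp [Set.indicator_apply, hz]
    simp_rw [this]
    rw [lintegral_indicator hU, setLIntegral_const, one_mul]
  have hf2 : ∫⁻ z, f z ^ (2:ℝ) ∂μ = ∑ i ∈ F, ∑ j ∈ F, μ (A i ∩ A j) := by
    rw [← hint2]
    congr 1
    ext z
    rw [show (2:ℝ) = ((2:ℕ):ℝ) by norm_num, ENNReal.rpow_natCast]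
    ring
  calc (∑ i ∈ F, μ (A i)) ^ 2 = (∫⁻ z, f z ∂μ) ^ 2 := by rw [hint1]
    _ ≤ ((∫⁻ z, f z ^ (2:ℝ) ∂μ) ^ (1/(2:ℝ)) *
        (∫⁻ z, (U.indicator (fun _ => (1:ℝ≥0∞)) z) ^ (2:ℝ) ∂μ) ^ (1/(2:ℝ))) ^ 2 :=
      pow_le_pow_left' h2 2
    _ = (∫⁻ z, f z ^ (2:ℝ) ∂μ) * μ U := by
        rw [mul_pow, hU2, ← ENNReal.rpow_natCast ((∫⁻ z, f z ^ (2:ℝ) ∂μ) ^ (1/(2:ℝ))) 2,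
          ← ENNReal.rpow_natCast ((μ U) ^ (1/(2:ℝ))) 2, ← ENNReal.rpow_mul, ← ENNReal.rpow_mul]
        norm_num
    _ = _ := by rw [hf2]

lemma ball_bound {d : ℕ} (μ : Measure (Fin d → ℝ)) [IsProbabilityMeasure μ]
    (x : ℕ → Fin d → ℝ) (r : ℕ → ℝ) (C : ℝ) (hC : 1 < C)
    (y : Fin d → ℝ) (ρ : ℝ)
    (φ : ℕ → ℕ) (hmono : StrictMono φ)
    (hsub : ∀ n, closedBall (x (φ n)) (r (φ n)) ⊆ ball y ρ)
    (hdiv : ∑' n, μ (closedBall (x (φ n)) (r (φ n))) = ⊤)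
    (hCE : ∀ Q₀ : ℕ, ∃ Q, Q₀ ≤ Q ∧
      ∑ s ∈ Finset.range Q, ∑ t ∈ Finset.range Q,
          μ (closedBall (x (φ s)) (r (φ s)) ∩ closedBall (x (φ t)) (r (φ t))) ≤
        ENNReal.ofReal C / μ (ball y ρ) *
          (∑ n ∈ Finset.range Q, μ (closedBall (x (φ n)) (r (φ n)))) ^ 2) :
    μ (ball y ρ) ≤ ENNReal.ofReal C *
      μ ((⋂ g : ℕ, ⋃ n, ⋃ _ : g ≤ n, closedBall (x n) (r n)) ∩ ball y ρ) := by
  classical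
  set L : ℕ → Set (Fin d → ℝ) := fun n => closedBall (x (φ n)) (r (φ n)) with hL
  have hLm : ∀ n, MeasurableSet (L n) := fun n => measurableSet_closedBall
  have honetop : (1:ℝ≥0∞) < ⊤ := ENNReal.one_lt_top
  set b := μ (ball y ρ) with hbdef
  have hb1 : b ≤ 1 := prob_le_one
  have hbtop : b ≠ ⊤ := (lt_of_le_of_lt hb1 honetop).ne
  have hb0 : b ≠ 0 := by
    intro h0
    have : ∀ n, μ (L n) = 0 := fun n => le_antisymm (h0 ▸ measure_mono (hsub n)) zero_le
    rw [tsum_congr this] at hdiv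
    simp at hdiv
  set Sphi : Set (Fin d → ℝ) := ⋂ g : ℕ, ⋃ n, ⋃ _ : g ≤ n, L n with hSphi
  have hSsub : Sphi ⊆ (⋂ g : ℕ, ⋃ n, ⋃ _ : g ≤ n, closedBall (x n) (r n)) ∩ ball y ρ := by
    intro z hz
    constructor
    · refine Set.mem_iInter.2 fun g => ?_
      obtain ⟨n, hn, hzn⟩ := Set.mem_iUnion₂.1 (Set.mem_iInter.1 hz g)
      exact Set.mem_iUnion₂.2 ⟨φ n, le_trans hn hmono.le_apply, hzn⟩
    · obtain ⟨n, _, hzn⟩ := Set.mem_iUnion₂.1 (Set.mem_iInter.1 hz 0)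
      exact hsub n hzn
  refine le_trans ?_ (mul_le_mul_right (measure_mono hSsub) _)
  set V : ℕ → ℝ≥0∞ := fun g => μ (⋃ n, ⋃ _ : g ≤ n, L n) with hV
  have htendsto : Tendsto V atTop (𝓝 (μ Sphi)) := by
    apply tendsto_measure_iInter_atTop
    · exact fun g => (MeasurableSet.iUnion fun n => MeasurableSet.iUnion fun _ =>
        hLm n).nullMeasurableSet
    · intro g g' hgg'
      exact Set.iUnion_mono fun n => Set.iUnion_subset fun hn =>
        Set.subset_iUnion_of_subset (le_trans hgg' hn) (by simp)
    · exact ⟨0, (lt_of_le_of_lt prob_le_one honetop).ne⟩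
  have key : ∀ g, b ≤ ENNReal.ofReal C * V g := by
    intro g
    by_contra hcon
    push_neg at hcon
    have hVfin : V g ≠ ⊤ := (lt_of_le_of_lt prob_le_one honetop).ne
    set S : ℕ → ℝ≥0∞ := fun Q => ∑ n ∈ Finset.range Q, μ (L n) with hS
    have hSfin : ∀ Q, S Q ≠ ⊤ :=
      fun Q => (ENNReal.sum_lt_top.mpr fun n _ => lt_of_le_of_lt prob_le_one honetop).ne
    have hSmono : Monotone S := fun Q Q' hQQ' =>
      Finset.sum_le_sum_of_subset (Finset.range_subset_range.2 hQQ')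
    have hStop : (⨆ Q, S Q) = ⊤ := by rw [← ENNReal.tsum_eq_iSup_nat]; exact hdiv
    -- real quantities
    set v : ℝ := (V g).toReal with hv
    set sg : ℝ := (S g).toReal with hsg
    have hvnn : 0 ≤ v := ENNReal.toReal_nonneg
    have hsgnn : 0 ≤ sg := ENNReal.toReal_nonneg
    set bR : ℝ := b.toReal with hbR
    have hbRpos : 0 < bR := ENNReal.toReal_pos hb0 hbtop
    have hcv : C * v < bR := by
      have := ENNReal.toReal_strict_mono hbtop hcon
      rwa [ENNReal.toReal_mul, ENNReal.toReal_ofReal (le_of_lt (lt_trans one_pos hC))] at this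
    set t : ℝ := C * v / bR with ht
    have htnn : 0 ≤ t := div_nonneg (mul_nonneg (le_of_lt (lt_trans one_pos hC)) hvnn) hbRpos.le
    have htlt : t < 1 := (div_lt_one hbRpos).2 hcv
    have hsqrtlt : Real.sqrt t < 1 := by
      rw [show (1:ℝ) = Real.sqrt 1 by simp]
      exact Real.sqrt_lt_sqrt htnn htlt
    set BND : ℝ := sg + Real.sqrt t * sg / (1 - Real.sqrt t) with hBND
    have hBNDnn : 0 ≤ BND := by
      apply add_nonneg hsgnn
      apply div_nonneg (mul_nonneg (Real.sqrt_nonneg _) hsgnn)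
      linarith
    -- choose a good Q with S Q large
    obtain ⟨Q₁, hQ₁⟩ : ∃ Q₁, ENNReal.ofReal BND < S Q₁ := by
      have : ENNReal.ofReal BND < ⨆ Q, S Q := by rw [hStop]; exact ENNReal.ofReal_lt_top
      exact lt_iSup_iff.1 this
    obtain ⟨Q, hQge, hQCE⟩ := hCE (max Q₁ g)
    have hgQ : g ≤ Q := le_trans (le_max_right _ _) hQge
    have hSQbig : ENNReal.ofReal BND < S Q :=
      lt_of_lt_of_le hQ₁ (hSmono (le_trans (le_max_left _ _) hQge))
    set F : Finset ℕ := Finset.range Q \ Finset.range g with hF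
    have hcs := cs_ineq μ F L hLm (⋃ n, ⋃ _ : g ≤ n, L n)
      (MeasurableSet.iUnion fun n => MeasurableSet.iUnion fun _ => hLm n)
      (fun i hi => by
        have : g ≤ i := by
          rw [hF, Finset.mem_sdiff, Finset.mem_range, Finset.mem_range] at hi
          exact not_lt.1 hi.2
        exact Set.subset_iUnion₂_of_subset i this (le_refl _))
    have hsplit : S Q = (∑ i ∈ F, μ (L i)) + S g := by
      rw [hS, hF]
      exact (Finset.sum_sdiff (Finset.range_subset_range.2 hgQ)).symm
    set a : ℝ≥0∞ := ∑ i ∈ F, μ (L i) with ha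
    have hafin : a ≠ ⊤ :=
      (ENNReal.sum_lt_top.mpr fun n _ => lt_of_le_of_lt prob_le_one honetop).ne
    have hTle : (∑ i ∈ F, ∑ j ∈ F, μ (L i ∩ L j)) ≤
        ∑ s ∈ Finset.range Q, ∑ t ∈ Finset.range Q, μ (L s ∩ L t) := by
      refine le_trans (Finset.sum_le_sum_of_subset (Finset.sdiff_subset)) ?_
      exact Finset.sum_le_sum fun i _ => Finset.sum_le_sum_of_subset (Finset.sdiff_subset)
    have hmain : a ^ 2 ≤ ENNReal.ofReal C / b * S Q ^ 2 * V g := by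
      calc a ^ 2 ≤ (∑ i ∈ F, ∑ j ∈ F, μ (L i ∩ L j)) * V g := hcs
        _ ≤ (ENNReal.ofReal C / b * S Q ^ 2) * V g :=
          mul_le_mul_left (le_trans hTle hQCE) _
    -- to real
    set aR : ℝ := a.toReal with haR
    set sQ : ℝ := (S Q).toReal with hsQ
    have haRnn : 0 ≤ aR := ENNReal.toReal_nonneg
    have hsQnn : 0 ≤ sQ := ENNReal.toReal_nonneg
    have hsplitR : sQ = aR + sg := by
      rw [hsQ, hsplit, ENNReal.toReal_add hafin (hSfin g)]
    have hmainR : aR ^ 2 ≤ t * sQ ^ 2 := by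
      have hfin : ENNReal.ofReal C / b * S Q ^ 2 * V g ≠ ⊤ := by
        apply ENNReal.mul_ne_top
        apply ENNReal.mul_ne_top
        · exact (ENNReal.div_lt_top ENNReal.ofReal_ne_top hb0).ne
        · exact ENNReal.pow_ne_top (hSfin Q)
        · exact hVfin
      have := ENNReal.toReal_mono hfin hmain
      rw [ENNReal.toReal_pow, ENNReal.toReal_mul, ENNReal.toReal_mul, ENNReal.toReal_div,
        ENNReal.toReal_pow, ENNReal.toReal_ofReal (le_of_lt (lt_trans one_pos hC))] at this
      calc aR ^ 2 ≤ C / bR * sQ ^ 2 * v := this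
        _ = t * sQ ^ 2 := by rw [ht]; ring
    have haRle : aR ≤ Real.sqrt t * sQ := by
      have h1 : aR = Real.sqrt (aR ^ 2) := (Real.sqrt_sq haRnn).symm
      rw [h1]
      calc Real.sqrt (aR ^ 2) ≤ Real.sqrt (t * sQ ^ 2) := Real.sqrt_le_sqrt hmainR
        _ = Real.sqrt t * sQ := by
            rw [Real.sqrt_mul htnn, Real.sqrt_sq hsQnn]
    -- contradiction
    have hsQle : sQ ≤ BND := by
      have h2 : aR ≤ Real.sqrt t * (aR + sg) := by rw [← hsplitR]; exact haRle
      have h3 : (1 - Real.sqrt t) * aR ≤ Real.sqrt t * sg := by nlinarith [Real.sqrt_nonneg t]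
      have h4 : aR ≤ Real.sqrt t * sg / (1 - Real.sqrt t) := by
        rw [le_div_iff₀ (by linarith : (0:ℝ) < 1 - Real.sqrt t)]
        linarith
      rw [hsplitR, hBND]; linarith
    have : BND < sQ := by
      have := ENNReal.toReal_strict_mono (hSfin Q) hSQbig
      rwa [ENNReal.toReal_ofReal hBNDnn] at this
    linarith
  exact ge_of_tendsto (ENNReal.Tendsto.const_mul htendsto (Or.inr ENNReal.ofReal_ne_top)) (Eventually.of_forall key)

lemma full_of_ball_bound {d : ℕ} (μ : Measure (Fin d → ℝ)) [IsProbabilityMeasure μ]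
    (C : ℝ) (hC : 1 < C) (S : Set (Fin d → ℝ)) (hSm : MeasurableSet S)
    (key : ∀ (y : Fin d → ℝ) (ρ : ℝ), 0 < ρ →
      μ (ball y ρ) ≤ ENNReal.ofReal C * μ (S ∩ ball y ρ)) :
    μ S = 1 := by
  classical
  by_contra hne
  have hCpos : (0:ℝ) < C := lt_trans one_pos hC
  have hT : 0 < μ Sᶜ := by
    rw [measure_compl hSm (measure_ne_top μ S)]
    have h1 : μ S < 1 := lt_of_le_of_ne prob_le_one hne
    simpa [pos_iff_ne_zero, tsub_eq_zero_iff_le] using not_le.2 h1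
  have hrne : μ.restrict Sᶜ ≠ 0 := by
    intro h0
    rw [← Measure.restrict_apply_univ Sᶜ] at hT
    rw [h0] at hT
    simp at hT
  have : (ae (μ.restrict Sᶜ)).NeBot := ae_neBot.2 hrne
  obtain ⟨z, hz⟩ := (Besicovitch.ae_tendsto_measure_inter_div μ Sᶜ).exists
  set β : ℝ := (C - 1) / C with hβdef
  have hβnn : 0 ≤ β := div_nonneg (by linarith) hCpos.le
  have hβlt : ENNReal.ofReal β < 1 := by
    rw [← ENNReal.ofReal_one]
    exact ENNReal.ofReal_lt_ofReal_iff_of_nonneg hβnn |>.2 (by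
      rw [hβdef, div_lt_one hCpos]; linarith)
  have ballver : ∀ ρ' : ℝ, 0 < ρ' →
      μ (Sᶜ ∩ ball z ρ') ≤ ENNReal.ofReal β * μ (ball z ρ') := by
    intro ρ' hρ'
    set m := μ (ball z ρ') with hm
    set a := μ (ball z ρ' ∩ S) with haa
    set t := μ (ball z ρ' \ S) with htt
    have hat : a + t = m := measure_inter_add_diff _ hSm
    have hkey : m ≤ ENNReal.ofReal C * a := by
      have := key z ρ' hρ'
      rwa [Set.inter_comm] at this
    have hmfin : m ≠ ⊤ := measure_ne_top μ _
    have h1 : m + ENNReal.ofReal C * t ≤ ENNReal.ofReal C * m := by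
      calc m + ENNReal.ofReal C * t ≤ ENNReal.ofReal C * a + ENNReal.ofReal C * t :=
            add_le_add hkey le_rfl
        _ = ENNReal.ofReal C * m := by rw [← mul_add, hat]
    have h2 : ENNReal.ofReal C * t ≤ ENNReal.ofReal C * m - m := ENNReal.le_sub_of_add_le_left hmfin h1
    have h3 : ENNReal.ofReal C * m - m = ENNReal.ofReal (C - 1) * m := by
      rw [ENNReal.ofReal_sub _ (zero_le_one), ENNReal.sub_mul (fun _ _ => hmfin),
        ENNReal.ofReal_one, one_mul]
    have h4 : ENNReal.ofReal C * t ≤ ENNReal.ofReal C * (ENNReal.ofReal β * m) := by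
      rw [← mul_assoc, ← ENNReal.ofReal_mul hCpos.le]
      have hCb : C * β = C - 1 := by rw [hβdef]; field_simp
      rw [hCb, ← h3]; exact h2
    have h5 : t ≤ ENNReal.ofReal β * m := by
      have := (ENNReal.mul_le_mul_iff_right (a := ENNReal.ofReal C)
        (by rw [Ne, ENNReal.ofReal_eq_zero]; push_neg; linarith) ENNReal.ofReal_ne_top).1 h4
      exact this
    calc μ (Sᶜ ∩ ball z ρ') = t := by rw [htt, Set.diff_eq, Set.inter_comm]
      _ ≤ ENNReal.ofReal β * m := h5
  have hbound : ∀ ρ : ℝ, 0 < ρ →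
      μ (Sᶜ ∩ closedBall z ρ) / μ (closedBall z ρ) ≤ ENNReal.ofReal β := by
    intro ρ hρ
    have hcb : μ (Sᶜ ∩ closedBall z ρ) ≤ ENNReal.ofReal β * μ (closedBall z ρ) := by
      have h1 : ∀ k : ℕ, μ (Sᶜ ∩ closedBall z ρ) ≤
          ENNReal.ofReal β * μ (ball z (ρ + 1/(k+1))) := by
        intro k
        have hsub : closedBall z ρ ⊆ ball z (ρ + 1/(k+1)) :=
          closedBall_subset_ball (by
          have hpos : (0:ℝ) < 1/((k:ℝ)+1) := by positivity
          linarith)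
        calc μ (Sᶜ ∩ closedBall z ρ) ≤ μ (Sᶜ ∩ ball z (ρ + 1/(k+1))) :=
              measure_mono (Set.inter_subset_inter_right _ hsub)
          _ ≤ ENNReal.ofReal β * μ (ball z (ρ + 1/(k+1))) :=
              ballver _ (by positivity)
      have h2 : Tendsto (fun k : ℕ => μ (ball z (ρ + 1/(k+1)))) atTop
          (𝓝 (μ (closedBall z ρ))) := by
        have hiInter : (⋂ k : ℕ, ball z (ρ + 1/(k+1))) = closedBall z ρ := by
          ext w
          simp only [Set.mem_iInter, mem_ball, mem_closedBall]
          constructor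
          · intro hw
            refine le_of_forall_pos_le_add fun ε hε => ?_
            obtain ⟨k, hk⟩ := exists_nat_one_div_lt hε
            exact le_trans (le_of_lt (hw k)) (by push_cast; linarith)
          · intro hw k
            have : (0:ℝ) < 1/(k+1) := by positivity
            linarith
        have := tendsto_measure_iInter_atTop (μ := μ)
          (s := fun k : ℕ => ball z (ρ + 1/(k+1)))
          (fun k => measurableSet_ball.nullMeasurableSet)
          (fun k k' hkk' => ball_subset_ball (by
            have h9 : (1:ℝ)/((k':ℝ)+1) ≤ 1/((k:ℝ)+1) :=
              one_div_le_one_div_of_le (by positivity) (by exact_mod_cast Nat.add_le_add_right hkk' 1)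
            linarith))
          ⟨0, measure_ne_top μ _⟩
        rwa [hiInter] at this
      exact ge_of_tendsto (ENNReal.Tendsto.const_mul h2 (Or.inr ENNReal.ofReal_ne_top))
        (Eventually.of_forall h1)
    exact ENNReal.div_le_of_le_mul hcb
  have hev : ∀ᶠ ρ in 𝓝[>] (0:ℝ),
      ENNReal.ofReal β < μ (Sᶜ ∩ closedBall z ρ) / μ (closedBall z ρ) :=
    hz.eventually (eventually_gt_nhds hβlt)
  obtain ⟨ρ, hρgt, hρpos⟩ := (hev.and self_mem_nhdsWithin).exists
  exact absurd (hbound ρ hρpos) (not_le.2 hρgt)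

lemma packing_bound {d : ℕ} (p : Fin d → ℝ) (R s : ℝ) (hs : 0 < s)
    (S : List ℕ) (hnd : S.Nodup) (pts : ℕ → Fin d → ℝ)
    (hR : ∀ a ∈ S, dist (pts a) p ≤ R)
    (hsep : S.Pairwise fun a b => s < dist (pts a) (pts b)) :
    S.length ≤ (Nat.floor (2 * R / s) + 1) ^ d := by
  classical
  set Q : ℤ := (Nat.floor (2 * R / s) : ℤ) with hQ
  set F : ℕ → (Fin d → ℤ) := fun a i => ⌊(pts a i - p i + R) / s⌋ with hF
  have hmaps : ∀ a ∈ S.toFinset, F a ∈ Fintype.piFinset fun _ : Fin d => Finset.Icc (0:ℤ) Q := by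
    intro a ha
    rw [Fintype.mem_piFinset]
    intro i
    have ha' : a ∈ S := List.mem_toFinset.1 ha
    have hcoord : |pts a i - p i| ≤ R := by
      rw [← Real.dist_eq]
      exact le_trans (dist_le_pi_dist (pts a) p i) (hR a ha')
    have hRnn : 0 ≤ R := le_trans (abs_nonneg _) hcoord
    have h1 : 0 ≤ (pts a i - p i + R) / s := by
      apply div_nonneg _ hs.le
      have := abs_le.1 hcoord
      linarith [this.1]
    have h2 : (pts a i - p i + R) / s ≤ 2 * R / s := by
      refine div_le_div_of_nonneg_right ?_ hs.le
      have := abs_le.1 hcoord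
      linarith [this.2]
    rw [Finset.mem_Icc]
    constructor
    · exact Int.floor_nonneg.2 h1
    · rw [hQ, Int.natCast_floor_eq_floor (by positivity)]
      exact Int.floor_le_floor h2
  have hinj : Set.InjOn F S.toFinset := by
    intro a ha b hb hab
    by_contra hne
    have hsep' : s < dist (pts a) (pts b) := by
      have hsymm : Symmetric fun a b : ℕ => s < dist (pts a) (pts b) := by
        intro u v huv; rwa [dist_comm]
      haveI : Std.Symm (fun a b : ℕ => s < dist (pts a) (pts b)) := ⟨fun u v huv => hsymm huv⟩
      exact hsep.forall (List.mem_toFinset.1 ha) (List.mem_toFinset.1 hb) hne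
    have : dist (pts a) (pts b) < s := by
      rw [dist_pi_lt_iff hs]
      intro i
      have hfl : ⌊(pts a i - p i + R) / s⌋ = ⌊(pts b i - p i + R) / s⌋ := congrFun hab i
      set u := (pts a i - p i + R) / s
      set v := (pts b i - p i + R) / s
      have h1 : u < v + 1 := lt_of_lt_of_le (Int.lt_floor_add_one u)
        (by rw [hfl]; exact add_le_add_left (Int.floor_le v) 1)
      have h2 : v < u + 1 := lt_of_lt_of_le (Int.lt_floor_add_one v)
        (by rw [← hfl]; exact add_le_add_left (Int.floor_le u) 1)
      have huv : |pts a i - pts b i| < s := by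
        have : u - v = (pts a i - pts b i) / s := by simp only [u, v]; ring
        have habs : |u - v| < 1 := abs_lt.2 ⟨by linarith, by linarith⟩
        rw [this, abs_div, abs_of_pos hs, div_lt_one hs] at habs
        exact habs
      rw [Real.dist_eq]
      exact huv
    linarith [hsep']
  have hcard := Finset.card_le_card_of_injOn F hmaps hinj
  rw [Fintype.card_piFinset] at hcard
  simp only [Int.card_Icc] at hcard
  rw [List.toFinset_card_of_nodup hnd] at hcard
  calc S.length ≤ ∏ _i : Fin d, (Q + 1 - 0).toNat := hcard
    _ = (Nat.floor (2 * R / s) + 1) ^ d := by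
        rw [Finset.prod_const, Finset.card_univ, Fintype.card_fin]
        have : (Q + 1 - 0).toNat = Nat.floor (2 * R / s) + 1 := by rw [hQ]; omega
        rw [this]

lemma coord_abs_le {d : ℕ} {q c : Fin d → ℝ} {R : ℝ} (h : q ∈ closedBall c R) (i : Fin d) :
    |q i - c i| ≤ R := by
  rw [← Real.dist_eq]
  exact le_trans (dist_le_pi_dist q c i) (mem_closedBall.1 h)

/-- violation: the witness of `a` sticks out of the κ-cube of `b` at face `f`. -/
def Viol {d : ℕ} (κ : ℝ) (x : ℕ → Fin d → ℝ) (r : ℕ → ℝ) (W : ℕ → Fin d → ℝ)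
    (f : Fin d × Bool) (b a : ℕ) : Prop :=
  if f.2 then x b f.1 + κ * r b < W a f.1 else W a f.1 < x b f.1 - κ * r b

/-- packing constant -/
noncomputable def PB (d : ℕ) (κ : ℝ) : ℕ := (Nat.floor (2 * ((1+κ)/(κ-1))^2) + 1) ^ d

/-- multiplicity bound by recursion on the number of allowed faces -/
noncomputable def gB (d : ℕ) (κ : ℝ) : ℕ → ℕ
  | 0 => 1
  | k+1 => 1 + (k+1) * (PB d κ + gB d κ k)

lemma filter_card_eq {l : List ℕ} (hnd : l.Nodup) (P : ℕ → Prop) [DecidablePred P] :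
    (l.toFinset.filter P).card = (l.filter (fun m => decide (P m))).length := by
  rw [← List.toFinset_card_of_nodup (hnd.filter _)]
  congr 1
  ext a
  simp [List.mem_filter]

lemma mult_bound {d : ℕ} {κ : ℝ} (hκ : 1 < κ) (x : ℕ → Fin d → ℝ) (r : ℕ → ℝ)
    (hr0 : ∀ n, 0 < r n) (W : ℕ → Fin d → ℝ) (p : Fin d → ℝ) :
    ∀ (k : ℕ) (A : Finset (Fin d × Bool)), A.card = k → ∀ S : List ℕ, S.Nodup →
    (∀ a ∈ S, W a ∈ closedBall (x a) (r a) ∧ p ∈ closedBall (x a) (κ * r a)) →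
    S.Pairwise (fun a b => r a ≤ r b ∧ W a ∉ closedBall (x b) (κ * r b) ∧
      ∃ f ∈ A, Viol κ x r W f b a) →
    S.length ≤ gB d κ k := by
  classical
  have hκ0 : (0:ℝ) < κ := lt_trans one_pos hκ
  have hκ1 : (0:ℝ) < κ - 1 := by linarith
  intro k
  induction k with
  | zero =>
    intro A hA S hnd hmem hpw
    match S, hpw with
    | [], _ => simp [gB]
    | [a], _ => simp [gB]
    | a :: b :: t, hpw =>
      exfalso
      obtain ⟨-, -, f, hf, -⟩ := (List.pairwise_cons.1 hpw).1 b (by simp)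
      rw [Finset.card_eq_zero.1 hA] at hf
      simp at hf
  | succ k IH =>
    intro A hA S hnd hmem hpw
    cases S with
    | nil => exact Nat.zero_le _
    | cons m0 rest =>
      obtain ⟨hhead, hrest⟩ := List.pairwise_cons.1 hpw
      obtain ⟨hWm0, hpm0⟩ := hmem m0 (by simp)
      set rm := r m0 with hrm
      have hrmpos : 0 < rm := hr0 m0
      set ε := (1 + κ) * rm with hε
      have hεpos : 0 < ε := by positivity
      have hAne : A.Nonempty := Finset.card_pos.1 (by omega)
      obtain ⟨fdef, hfdef⟩ := hAne
      have hdistWp : dist (W m0) p ≤ ε := by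
        calc dist (W m0) p ≤ dist (W m0) (x m0) + dist (x m0) p := dist_triangle _ _ _
          _ ≤ rm + κ * rm := add_le_add (mem_closedBall.1 hWm0)
              (by rw [dist_comm]; exact mem_closedBall.1 hpm0)
          _ = ε := by rw [hε]; ring
      set cl : ℕ → Fin d × Bool :=
        fun m => if h : ∃ f, f ∈ A ∧ Viol κ x r W f m m0 then h.choose else fdef with hcl
      have hclspec : ∀ m ∈ rest, cl m ∈ A ∧ Viol κ x r W (cl m) m m0 := by
        intro m hm
        obtain ⟨-, -, f, hfA, hviol⟩ := hhead m hm
        have hex : ∃ f, f ∈ A ∧ Viol κ x r W f m m0 := ⟨f, hfA, hviol⟩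
        simp only [hcl, dif_pos hex]
        exact ⟨hex.choose_spec.1, hex.choose_spec.2⟩
      have hndrest : rest.Nodup := (List.nodup_cons.1 hnd).2
      have hcount : rest.toFinset.card = ∑ f ∈ A, (rest.toFinset.filter (fun m => cl m = f)).card :=
        Finset.card_eq_sum_card_fiberwise (fun m hm => (hclspec m (List.mem_toFinset.1 hm)).1)
      have hfiber : ∀ f ∈ A, (rest.toFinset.filter (fun m => cl m = f)).card ≤
          PB d κ + gB d κ k := by
        rintro ⟨i, σ⟩ hfA
        -- split into small and big radii
        have hsplit : (rest.toFinset.filter (fun m => cl m = (i, σ))).card =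
            (rest.toFinset.filter (fun m => cl m = (i, σ) ∧ (κ-1) * r m < ε)).card +
            (rest.toFinset.filter (fun m => cl m = (i, σ) ∧ ¬ ((κ-1) * r m < ε))).card := by
          rw [← Finset.filter_filter, ← Finset.filter_filter,
            Finset.card_filter_add_card_filter_not]
        rw [hsplit]
        have hsmall : (rest.toFinset.filter
            (fun m => cl m = (i, σ) ∧ (κ-1) * r m < ε)).card ≤ PB d κ := by
          rw [filter_card_eq hndrest]
          set LS := rest.filter (fun m => decide (cl m = (i, σ) ∧ (κ-1) * r m < ε)) with hLS
          have hmemLS : ∀ a ∈ LS, a ∈ rest ∧ cl a = (i,σ) ∧ (κ-1) * r a < ε := by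
            intro a ha
            rw [hLS, List.mem_filter] at ha
            exact ⟨ha.1, of_decide_eq_true ha.2⟩
          have hpack := packing_bound p ((1+κ) * ((1+κ)/(κ-1) * rm)) ((κ-1) * rm)
            (by positivity) LS (hndrest.filter _) W
            (fun a ha => by
              obtain ⟨harest, -, hasmall⟩ := hmemLS a ha
              have haS : a ∈ m0 :: rest := List.mem_cons_of_mem _ harest
              obtain ⟨hWa, hpa⟩ := hmem a haS
              have hra : r a ≤ (1+κ)/(κ-1) * rm := by
                rw [div_mul_eq_mul_div, le_div_iff₀ hκ1]
                nlinarith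
              calc dist (W a) p ≤ dist (W a) (x a) + dist (x a) p := dist_triangle _ _ _
                _ ≤ r a + κ * r a := add_le_add (mem_closedBall.1 hWa)
                    (by rw [dist_comm]; exact mem_closedBall.1 hpa)
                _ = (1+κ) * r a := by ring
                _ ≤ (1+κ) * ((1+κ)/(κ-1) * rm) := by nlinarith)
            (by
              have hsub : LS.Sublist rest := List.filter_sublist
              refine (hrest.sublist hsub).imp_of_mem ?_
              intro a b ha hb hrel
              obtain ⟨hrab, hWnot, -⟩ := hrel
              have hbrest : b ∈ rest := hsub.mem hb -- wrong: need b ∈ rest from hb : b ∈ LS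
              have hrmb : rm ≤ r b := (hhead b hbrest).1
              have hWbxb : dist (W b) (x b) ≤ r b :=
                mem_closedBall.1 (hmem b (List.mem_cons_of_mem _ hbrest)).1
              have h1 : κ * r b < dist (W a) (x b) := not_le.1 (fun hc => hWnot (mem_closedBall.2 hc))
              have h2 : dist (W a) (x b) ≤ dist (W a) (W b) + dist (W b) (x b) := dist_triangle _ _ _
              nlinarith)
          calc LS.length ≤ (Nat.floor (2 * ((1+κ) * ((1+κ)/(κ-1) * rm)) / ((κ-1) * rm)) + 1) ^ d :=
              hpack
            _ = PB d κ := by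
                have harg : 2 * ((1 + κ) * ((1 + κ) / (κ - 1) * rm)) / ((κ - 1) * rm)
                    = 2 * ((1+κ)/(κ-1))^2 := by
                  field_simp
                rw [PB, harg]
        have hbig : (rest.toFinset.filter
            (fun m => cl m = (i, σ) ∧ ¬ ((κ-1) * r m < ε))).card ≤ gB d κ k := by
          rw [filter_card_eq hndrest]
          set LB := rest.filter (fun m => decide (cl m = (i, σ) ∧ ¬ ((κ-1) * r m < ε))) with hLB
          have hsub : LB.Sublist rest := List.filter_sublist
          have hmemLB : ∀ a ∈ LB, a ∈ rest ∧ cl a = (i,σ) ∧ ¬ ((κ-1) * r a < ε) := by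
            intro a ha
            rw [hLB, List.mem_filter] at ha
            exact ⟨ha.1, of_decide_eq_true ha.2⟩
          refine IH (A.erase (i,σ)) (by rw [Finset.card_erase_of_mem hfA, hA]; omega) LB
            (hndrest.filter _)
            (fun a ha => hmem a (List.mem_cons_of_mem _ (hsub.mem ha))) ?_
          refine (hrest.sublist hsub).imp_of_mem ?_
          intro a b ha hb hrel
          obtain ⟨hrab, hWnot, f', hf'A, hviol'⟩ := hrel
          refine ⟨hrab, hWnot, f', Finset.mem_erase.2 ⟨?_, hf'A⟩, hviol'⟩
          -- show f' ≠ (i, σ)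
          intro hf'eq
          subst hf'eq
          obtain ⟨harest, hacl, habig⟩ := hmemLB a ha
          obtain ⟨hbrest, hbcl, -⟩ := hmemLB b hb
          apply habig
          have hclA := (hclspec a harest).2
          rw [hacl] at hclA
          have hWm0i : |W m0 i - p i| ≤ ε := by
            rw [← Real.dist_eq]
            exact le_trans (dist_le_pi_dist (W m0) p i) hdistWp
          have hpKb : |p i - x b i| ≤ κ * r b :=
            coord_abs_le (hmem b (List.mem_cons_of_mem _ hbrest)).2 i
          have hWaBa : |W a i - x a i| ≤ r a :=
            coord_abs_le (hmem a (List.mem_cons_of_mem _ harest)).1 i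
          obtain ⟨hWm0il, hWm0ir⟩ := abs_le.1 hWm0i
          obtain ⟨hpKbl, hpKbr⟩ := abs_le.1 hpKb
          obtain ⟨hWaBal, hWaBar⟩ := abs_le.1 hWaBa
          cases σ with
          | true =>
            simp only [Viol] at hclA hviol'
            norm_num at hclA hviol'
            linarith
          | false =>
            simp only [Viol] at hclA hviol'
            norm_num at hclA hviol'
            linarith
        omega
      have htotal : rest.toFinset.card ≤ (k+1) * (PB d κ + gB d κ k) := by
        rw [hcount]
        calc ∑ f ∈ A, (rest.toFinset.filter (fun m => cl m = f)).card ≤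
            ∑ _f ∈ A, (PB d κ + gB d κ k) := Finset.sum_le_sum hfiber
          _ = (k+1) * (PB d κ + gB d κ k) := by rw [Finset.sum_const, hA, smul_eq_mul]
      have hlen : rest.length = rest.toFinset.card := (List.toFinset_card_of_nodup hndrest).symm
      simp only [List.length_cons, gB]
      omega

open Classical in
noncomputable def greedyAux {d : ℕ} (κ : ℝ) (x : ℕ → Fin d → ℝ) (r : ℕ → ℝ) :
    List ℕ → List ℕ → (ℕ → Fin d → ℝ) → List ℕ × (ℕ → Fin d → ℝ)
  | acc, [], W => (acc, W)
  | acc, n :: l, W =>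
    if h : closedBall (x n) (r n) ⊆ ⋃ m ∈ acc, closedBall (x m) (κ * r m)
    then greedyAux κ x r acc l W
    else greedyAux κ x r (n :: acc) l (Function.update W n (Set.not_subset.1 h).choose)

lemma greedyAux_spec {d : ℕ} (κ : ℝ) (hκ : 1 < κ) (x : ℕ → Fin d → ℝ) (r : ℕ → ℝ)
    (hr0 : ∀ n, 0 < r n) :
    ∀ (l acc : List ℕ) (W : ℕ → Fin d → ℝ),
    (l ++ acc).Nodup →
    l.Pairwise (fun a b => r b ≤ r a) →
    (∀ m ∈ l, ∀ a ∈ acc, r m ≤ r a) →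
    acc.Pairwise (fun a b => r a ≤ r b ∧ W a ∉ closedBall (x b) (κ * r b)) →
    (∀ a ∈ acc, W a ∈ closedBall (x a) (r a)) →
    (greedyAux κ x r acc l W).1.Nodup ∧
    (∀ a ∈ (greedyAux κ x r acc l W).1, a ∈ l ∨ a ∈ acc) ∧
    (∀ a ∈ acc, a ∈ (greedyAux κ x r acc l W).1) ∧
    (greedyAux κ x r acc l W).1.Pairwise
      (fun a b => r a ≤ r b ∧ (greedyAux κ x r acc l W).2 a ∉ closedBall (x b) (κ * r b)) ∧
    (∀ a ∈ (greedyAux κ x r acc l W).1,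
      (greedyAux κ x r acc l W).2 a ∈ closedBall (x a) (r a)) ∧
    (∀ n ∈ l, closedBall (x n) (r n) ⊆
      ⋃ m ∈ (greedyAux κ x r acc l W).1, closedBall (x m) (κ * r m)) := by
  intro l
  induction l with
  | nil =>
    intro acc W hnd hdesc hsmall hpw hWB
    rw [greedyAux]
    exact ⟨by simpa using hnd, fun a ha => Or.inr ha, fun a ha => ha, hpw, hWB, by simp⟩
  | cons n l IHl =>
    intro acc W hnd hdesc hsmaller hpw hWB
    rw [greedyAux]
    by_cases hc : closedBall (x n) (r n) ⊆ ⋃ m ∈ acc, closedBall (x m) (κ * r m)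
    · rw [dif_pos hc]
      have hnd' : (l ++ acc).Nodup := by
        have : ((n :: l) ++ acc).Nodup := hnd
        rw [List.cons_append, List.nodup_cons] at this
        exact this.2
      have IH := IHl acc W hnd' (List.pairwise_cons.1 hdesc).2
        (fun m hm a ha => hsmaller m (List.mem_cons_of_mem _ hm) a ha) hpw hWB
      obtain ⟨h1, h2, h3, h4, h5, h6⟩ := IH
      refine ⟨h1, fun a ha => ?_, h3, h4, h5, fun m hm => ?_⟩
      · rcases h2 a ha with h | h
        · exact Or.inl (List.mem_cons_of_mem _ h)
        · exact Or.inr h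
      · rcases List.mem_cons.1 hm with rfl | hm'
        · -- n is covered by acc, and acc ⊆ result
          refine hc.trans (Set.iUnion₂_subset fun a ha => ?_)
          exact Set.subset_iUnion₂_of_subset a (h3 a ha) (le_refl _)
        · exact h6 m hm'
    · rw [dif_neg hc]
      set pt := (Set.not_subset.1 hc).choose with hpt
      have hptspec := (Set.not_subset.1 hc).choose_spec
      obtain ⟨hptB, hptnot⟩ := hptspec
      have hnacc : n ∉ acc := by
        have : ((n :: l) ++ acc).Nodup := hnd
        rw [List.cons_append, List.nodup_cons] at this
        intro hna
        exact this.1 (List.mem_append.2 (Or.inr hna))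
      set W' := Function.update W n pt with hW'
      have hW'acc : ∀ a ∈ acc, W' a = W a := by
        intro a ha
        rw [hW', Function.update_of_ne (fun hh => hnacc (by rw [← hh]; exact ha))]
      have hnd' : (l ++ n :: acc).Nodup := by
        have h0 : ((n :: l) ++ acc).Nodup := hnd
        rw [List.cons_append] at h0
        exact (List.perm_middle.nodup_iff).2 h0
      have hdesc' := (List.pairwise_cons.1 hdesc).2
      have hsmaller' : ∀ m ∈ l, ∀ a ∈ n :: acc, r m ≤ r a := by
        intro m hm a ha
        rcases List.mem_cons.1 ha with rfl | ha'
        · exact (List.pairwise_cons.1 hdesc).1 m hm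
        · exact hsmaller m (List.mem_cons_of_mem _ hm) a ha'
      have hpw' : (n :: acc).Pairwise
          (fun a b => r a ≤ r b ∧ W' a ∉ closedBall (x b) (κ * r b)) := by
        rw [List.pairwise_cons]
        constructor
        · intro b hb
          refine ⟨hsmaller n (List.mem_cons_self) b hb, ?_⟩
          rw [hW', Function.update_self]
          intro hmem
          exact hptnot (Set.mem_biUnion hb hmem)
        · refine hpw.imp_of_mem ?_
          intro a b ha hb hab
          exact ⟨hab.1, by rw [hW'acc a ha]; exact hab.2⟩
      have hWB' : ∀ a ∈ n :: acc, W' a ∈ closedBall (x a) (r a) := by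
        intro a ha
        rcases List.mem_cons.1 ha with rfl | ha'
        · rw [hW', Function.update_self]; exact hptB
        · rw [hW'acc a ha']; exact hWB a ha'
      have IH := IHl (n :: acc) W' hnd' hdesc' hsmaller' hpw' hWB'
      obtain ⟨h1, h2, h3, h4, h5, h6⟩ := IH
      refine ⟨h1, fun a ha => ?_, fun a ha => h3 a (List.mem_cons_of_mem _ ha), h4, h5,
        fun m hm => ?_⟩
      · rcases h2 a ha with h | h
        · exact Or.inl (List.mem_cons_of_mem _ h)
        · rcases List.mem_cons.1 h with rfl | h'
          · exact Or.inl (List.mem_cons_self)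
          · exact Or.inr h'
      · rcases List.mem_cons.1 hm with hrfl | hm'
        · subst hrfl
          have hmemres : m ∈ (greedyAux κ x r (m :: acc) l W').1 :=
            h3 m (List.mem_cons_self)
          have hsub : closedBall (x m) (r m) ⊆ closedBall (x m) (κ * r m) :=
            closedBall_subset_closedBall (by nlinarith [hr0 m])
          exact hsub.trans (Set.subset_iUnion₂_of_subset m hmemres (le_refl _))
        · exact h6 m hm'

lemma coord_abs_le' {d : ℕ} {q c : Fin d → ℝ} {R : ℝ} (h : q ∈ closedBall c R) (i : Fin d) :
    |q i - c i| ≤ R := by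
  rw [← Real.dist_eq]
  exact le_trans (dist_le_pi_dist q c i) (mem_closedBall.1 h)

/-- A larger cube meeting a smaller cube contains one of its `2^d` corners. -/
lemma corner_lemma {d : ℕ} {κ : ℝ} (hκ0 : 0 < κ) {x : ℕ → Fin d → ℝ} {r : ℕ → ℝ}
    {n m : ℕ} (hle : r n ≤ r m)
    (hne : (closedBall (x m) (κ * r m) ∩ closedBall (x n) (κ * r n)).Nonempty) :
    ∃ v : Fin d → Bool,
      (fun i => x n i + (if v i then κ * r n else -(κ * r n))) ∈ closedBall (x m) (κ * r m) := by
  obtain ⟨q, hqm, hqn⟩ := hne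
  have hrm0 : 0 ≤ κ * r m := by
    have := (coord_abs_le' hqm)
    by_contra hneg
    push_neg at hneg
    have := mem_closedBall.1 hqm
    have := dist_nonneg (x := q) (y := x m)
    linarith
  refine ⟨fun i => decide (x n i ≤ x m i), ?_⟩
  rw [mem_closedBall, dist_pi_le_iff hrm0]
  intro i
  have h1 : |q i - x m i| ≤ κ * r m := coord_abs_le' hqm i
  have h2 : |q i - x n i| ≤ κ * r n := coord_abs_le' hqn i
  obtain ⟨h1l, h1r⟩ := abs_le.1 h1
  obtain ⟨h2l, h2r⟩ := abs_le.1 h2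
  have hrr : κ * r n ≤ κ * r m := by nlinarith
  rw [Real.dist_eq]
  by_cases hcase : x n i ≤ x m i
  · rw [if_pos (by simp [hcase]), abs_le]
    constructor <;> linarith
  · push_neg at hcase
    rw [if_neg (by simp [hcase.not_ge]), abs_le]
    constructor <;> linarith

noncomputable def colorAux (nbr : ℕ → ℕ → Bool) (M : ℕ) : List ℕ → (ℕ → ℕ)
  | [] => fun _ => 0
  | n :: right =>
    let c := colorAux nbr M right
    let used : Finset ℕ := ((right.filter (fun m => nbr n m)).map c).toFinset
    Function.update c n
      (if h : (Finset.range M \ used).Nonempty then (Finset.range M \ used).min' h else 0)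

lemma colorAux_spec (nbr : ℕ → ℕ → Bool) (M : ℕ) :
    ∀ S : List ℕ, S.Nodup →
    (∀ n right, (n :: right) <:+ S → ((right.filter (fun m => nbr n m)).length < M)) →
    (∀ m ∈ S, colorAux nbr M S m < M) ∧
    S.Pairwise (fun a b => nbr a b = true → colorAux nbr M S a ≠ colorAux nbr M S b) := by
  classical
  intro S
  induction S with
  | nil => intro _ _; exact ⟨by simp, List.Pairwise.nil⟩
  | cons n right IH =>
    intro hnd HB
    have hndr : right.Nodup := (List.nodup_cons.1 hnd).2
    have hnr : n ∉ right := (List.nodup_cons.1 hnd).1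
    have HBr : ∀ n' right', (n' :: right') <:+ right →
        ((right'.filter (fun m => nbr n' m)).length < M) :=
      fun n' right' hsuf => HB n' right' (hsuf.trans (List.suffix_cons n right))
    obtain ⟨IH1, IH2⟩ := IH hndr HBr
    set c := colorAux nbr M right with hc
    set used : Finset ℕ := ((right.filter (fun m => nbr n m)).map c).toFinset with hused
    have husedcard : used.card < M := by
      calc used.card ≤ ((right.filter (fun m => nbr n m)).map c).length :=
            List.toFinset_card_le _
        _ = (right.filter (fun m => nbr n m)).length := List.length_map _
        _ < M := HB n right (List.suffix_refl _)
    have hne : (Finset.range M \ used).Nonempty := by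
      rw [← Finset.card_pos]
      have h1 : M - used.card ≤ (Finset.range M \ used).card := by
        have := Finset.le_card_sdiff used (Finset.range M)
        rwa [Finset.card_range] at this
      omega
    have hcol : colorAux nbr M (n :: right) = Function.update c n
        ((Finset.range M \ used).min' hne) := by
      rw [colorAux]
      simp only [← hc, ← hused, dif_pos hne]
    set pick := (Finset.range M \ used).min' hne with hpick
    have hpickmem : pick ∈ Finset.range M \ used := Finset.min'_mem _ _
    have hpickM : pick < M := Finset.mem_range.1 (Finset.mem_sdiff.1 hpickmem).1
    have hpicknot : pick ∉ used := (Finset.mem_sdiff.1 hpickmem).2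
    have hstable : ∀ m ∈ right, colorAux nbr M (n :: right) m = c m := by
      intro m hm
      rw [hcol, Function.update_of_ne (fun hh => hnr (by rw [← hh]; exact hm))]
    have hn' : colorAux nbr M (n :: right) n = pick := by
      rw [hcol, Function.update_self]
    constructor
    · intro m hm
      rcases List.mem_cons.1 hm with hrfl | hm'
      · rw [hrfl, hn']
        exact hpickM
      · rw [hstable m hm']
        exact IH1 m hm'
    · rw [List.pairwise_cons]
      constructor
      · intro b hb hnbr
        rw [hn', hstable b hb]
        intro heq
        apply hpicknot
        rw [heq, hused]
        apply List.mem_toFinset.2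
        apply List.mem_map.2
        refine ⟨b, ?_, rfl⟩
        rw [List.mem_filter]
        exact ⟨hb, hnbr⟩
      · refine IH2.imp_of_mem ?_
        intro a b ha hb hab hnbr
        rw [hstable a ha, hstable b hb]
        exact hab hnbr

noncomputable def NB (d : ℕ) (κ : ℝ) : ℕ := gB d κ (d * 2)
noncomputable def MB (d : ℕ) (κ : ℝ) : ℕ := 2^d * NB d κ + 1

lemma MB_pos (d : ℕ) (κ : ℝ) : 0 < MB d κ := by rw [MB]; omega

theorem cube_selection {d : ℕ} {κ : ℝ} (hκ : 1 < κ) (x : ℕ → Fin d → ℝ) (r : ℕ → ℝ)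
    (hr0 : ∀ n, 0 < r n) (μ : Measure (Fin d → ℝ)) (G : Finset ℕ) :
    ∃ T : Finset ℕ, (∀ n ∈ T, n ∈ G) ∧
      ((T : Set ℕ).Pairwise fun m n =>
        Disjoint (closedBall (x m) (κ * r m)) (closedBall (x n) (κ * r n))) ∧
      μ (⋃ n ∈ G, closedBall (x n) (r n)) ≤
        (MB d κ : ℝ≥0∞) * μ (⋃ n ∈ T, closedBall (x n) (κ * r n)) := by
  classical
  have hκ0 : (0:ℝ) < κ := lt_trans one_pos hκ
  set l : List ℕ := G.toList.mergeSort (fun a b => decide (r b ≤ r a)) with hl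
  have hperm : l.Perm G.toList := List.mergeSort_perm _ _
  have hlnd : l.Nodup := hperm.nodup_iff.2 G.nodup_toList
  have hlmem : ∀ a : ℕ, a ∈ l ↔ a ∈ G := fun a => by rw [hperm.mem_iff, Finset.mem_toList]
  have hldesc : l.Pairwise (fun a b => r b ≤ r a) := by
    have h := List.pairwise_mergeSort (le := fun a b => decide (r b ≤ r a))
      (fun a b c h₁ h₂ => by simp only [decide_eq_true_eq] at *; linarith)
      (fun a b => by
        simp only [Bool.or_eq_true, decide_eq_true_eq]
        exact le_total (r b) (r a)) G.toList
    exact h.imp (fun h => by simpa using h)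
  obtain ⟨hSnd, hSsub, -, hSpw, hSW, hScov⟩ := greedyAux_spec κ hκ x r hr0 l []
    (fun _ _ => 0) (by simpa using hlnd) hldesc (by simp) (by simp) (by simp)
  set S := (greedyAux κ x r [] l (fun _ _ => 0)).1 with hS
  set W := (greedyAux κ x r [] l (fun _ _ => 0)).2 with hW
  have hSsubG : ∀ a ∈ S, a ∈ G := fun a ha =>
    (hlmem a).1 ((hSsub a ha).resolve_right (by simp))
  -- multiplicity bound at an arbitrary point
  have hmult : ∀ p : Fin d → ℝ,
      (S.filter (fun m => decide (p ∈ closedBall (x m) (κ * r m)))).length ≤ NB d κ := by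
    intro p
    refine mult_bound hκ x r hr0 W p (d*2) Finset.univ
      (by rw [Finset.card_univ]; simp [Fintype.card_prod, mul_comm]) _ (hSnd.filter _) ?_ ?_
    · intro a ha
      rw [List.mem_filter] at ha
      exact ⟨hSW a ha.1, of_decide_eq_true ha.2⟩
    · refine (hSpw.sublist List.filter_sublist).imp_of_mem ?_
      intro a b ha hb hab
      obtain ⟨hr1, hr2⟩ := hab
      refine ⟨hr1, hr2, ?_⟩
      have hnotle : ¬ dist (W a) (x b) ≤ κ * r b := fun hc => hr2 (mem_closedBall.2 hc)
      have hex : ∃ i, κ * r b < |W a i - x b i| := by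
        by_contra hcon
        push_neg at hcon
        apply hnotle
        rw [dist_pi_le_iff (mul_nonneg hκ0.le (hr0 b).le)]
        intro i; rw [Real.dist_eq]; exact hcon i
      obtain ⟨i, hi⟩ := hex
      rcases lt_abs.1 hi with hpos | hneg
      · refine ⟨(i, true), Finset.mem_univ _, ?_⟩
        simp only [Viol]
        norm_num
        linarith
      · refine ⟨(i, false), Finset.mem_univ _, ?_⟩
        simp only [Viol]
        norm_num
        linarith
  -- neighbour count bound
  set nbr : ℕ → ℕ → Bool := fun n m => decide
    ((closedBall (x m) (κ * r m) ∩ closedBall (x n) (κ * r n)).Nonempty) with hnbr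
  have HB : ∀ n right, (n :: right) <:+ S →
      ((right.filter (fun m => nbr n m)).length < MB d κ) := by
    intro n right hsuf
    have hsubS : (n :: right).Sublist S := hsuf.sublist
    have hndnr : (n :: right).Nodup := hSnd.sublist hsubS
    have hndright : right.Nodup := (List.nodup_cons.1 hndnr).2
    set L := right.filter (fun m => nbr n m) with hL
    have hLnd : L.Nodup := hndright.filter _
    have hLprop : ∀ m ∈ L, r n ≤ r m ∧ m ∈ S ∧
        (closedBall (x m) (κ * r m) ∩ closedBall (x n) (κ * r n)).Nonempty := by
      intro m hm
      rw [hL, List.mem_filter] at hm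
      have hpw' := hSpw.sublist hsubS
      exact ⟨((List.pairwise_cons.1 hpw').1 m hm.1).1,
        hsubS.mem (List.mem_cons_of_mem _ hm.1), of_decide_eq_true hm.2⟩
    have hcard : L.toFinset.card ≤ 2^d * NB d κ := by
      have hsubB : L.toFinset ⊆ Finset.univ.biUnion (fun v : Fin d → Bool =>
          S.toFinset.filter (fun m =>
            (fun i => x n i + (if v i then κ * r n else -(κ * r n))) ∈
              closedBall (x m) (κ * r m))) := by
        intro m hm
        have hm' := hLprop m (List.mem_toFinset.1 hm)
        obtain ⟨v, hv⟩ := corner_lemma hκ0 hm'.1 hm'.2.2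
        exact Finset.mem_biUnion.2 ⟨v, Finset.mem_univ _,
          Finset.mem_filter.2 ⟨List.mem_toFinset.2 hm'.2.1, hv⟩⟩
      calc L.toFinset.card ≤ _ := Finset.card_le_card hsubB
        _ ≤ ∑ _v : Fin d → Bool, NB d κ := by
            refine le_trans (Finset.card_biUnion_le) (Finset.sum_le_sum ?_)
            intro v _
            rw [filter_card_eq hSnd]
            exact hmult _
        _ = 2^d * NB d κ := by
            rw [Finset.sum_const, Finset.card_univ]
            simp [smul_eq_mul]
    have : L.length = L.toFinset.card := (List.toFinset_card_of_nodup hLnd).symm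
    rw [MB]
    omega
  -- coloring
  obtain ⟨hcolM, hcolprop⟩ := colorAux_spec nbr (MB d κ) S hSnd HB
  set col := colorAux nbr (MB d κ) S with hcol
  -- union decomposition
  set Uc : ℕ → Set (Fin d → ℝ) := fun c =>
    ⋃ m ∈ (S.filter (fun m => decide (col m = c))).toFinset, closedBall (x m) (κ * r m)
    with hUc
  have hcover : μ (⋃ n ∈ G, closedBall (x n) (r n)) ≤
      ∑ c ∈ Finset.range (MB d κ), μ (Uc c) := by
    refine le_trans (measure_mono ?_) (measure_biUnion_finset_le _ _)
    intro z hz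
    obtain ⟨n, hn, hzn⟩ := Set.mem_iUnion₂.1 hz
    have hzS := hScov n ((hlmem n).2 hn) hzn
    obtain ⟨m, hm, hzm⟩ := Set.mem_iUnion₂.1 hzS
    refine Set.mem_iUnion₂.2 ⟨col m, Finset.mem_range.2 (hcolM m hm), ?_⟩
    rw [hUc]
    refine Set.mem_iUnion₂.2 ⟨m, ?_, hzm⟩
    rw [List.mem_toFinset, List.mem_filter]
    exact ⟨hm, by simp⟩
  -- best color
  have hMBpos : 0 < MB d κ := by rw [MB]; omega
  obtain ⟨cmax, -, hcmax⟩ := Finset.exists_max_image (Finset.range (MB d κ))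
    (fun c => μ (Uc c)) ⟨0, Finset.mem_range.2 hMBpos⟩
  have hsum : ∑ c ∈ Finset.range (MB d κ), μ (Uc c) ≤ (MB d κ : ℝ≥0∞) * μ (Uc cmax) := by
    calc ∑ c ∈ Finset.range (MB d κ), μ (Uc c) ≤
        ∑ _c ∈ Finset.range (MB d κ), μ (Uc cmax) := Finset.sum_le_sum (fun c hc => hcmax c hc)
      _ = (MB d κ : ℝ≥0∞) * μ (Uc cmax) := by
          rw [Finset.sum_const, Finset.card_range, nsmul_eq_mul]
  refine ⟨(S.filter (fun m => decide (col m = cmax))).toFinset, ?_, ?_, ?_⟩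
  · intro a ha
    rw [List.mem_toFinset, List.mem_filter] at ha
    exact hSsubG a ha.1
  · intro a ha b hb hne
    simp only [Finset.coe_sort_coe, Finset.mem_coe, List.mem_toFinset, List.mem_filter] at ha hb
    have hcols : col a = col b := by
      have h1 := of_decide_eq_true ha.2
      have h2 := of_decide_eq_true hb.2
      rw [h1, h2]
    have hsym : Symmetric (fun a b : ℕ => col a = col b →
        Disjoint (closedBall (x a) (κ * r a)) (closedBall (x b) (κ * r b))) := by
      intro u v huv hvu
      exact (huv hvu.symm).symm
    have hpw2 : S.Pairwise (fun a b : ℕ => col a = col b →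
        Disjoint (closedBall (x a) (κ * r a)) (closedBall (x b) (κ * r b))) := by
      refine hcolprop.imp_of_mem ?_
      intro u v hu hv huv hcoluv
      by_contra hdis
      rw [Set.not_disjoint_iff_nonempty_inter] at hdis
      have : nbr u v = true := by
        rw [hnbr]
        exact decide_eq_true (by rwa [Set.inter_comm] at hdis)
      exact huv this hcoluv
    haveI : Std.Symm (fun a b : ℕ => col a = col b →
        Disjoint (closedBall (x a) (κ * r a)) (closedBall (x b) (κ * r b))) := ⟨fun u v huv => hsym huv⟩
    exact hpw2.forall ha.1 hb.1 hne hcols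
  · exact le_trans hcover hsum

/-- Borel–Cantelli type: if there is `C > 1` such that in every open ball
`B` one can find a subsequence of `(B_n)` contained in `B`, with divergent measure series
and the Chung–Erdős quasi-independence estimate, then `μ(limsup B_n) = 1` and for any
`κ > 1` the sequence `(κ B_n)` is `μ`-asymptotically covering. -/
theorem stmt17 {d : ℕ} (μ : Measure (Fin d → ℝ)) [IsProbabilityMeasure μ]
    (x : ℕ → Fin d → ℝ) (r : ℕ → ℝ) (hr0 : ∀ n, 0 < r n)
    (hr : Tendsto r atTop (𝓝 0)) (C : ℝ) (hC : 1 < C)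
    (h : ∀ (y : Fin d → ℝ) (ρ : ℝ), 0 < ρ →
      ∃ φ : ℕ → ℕ, StrictMono φ ∧
        (∀ n, closedBall (x (φ n)) (r (φ n)) ⊆ ball y ρ) ∧
        (∑' n, μ (closedBall (x (φ n)) (r (φ n))) = ⊤) ∧
        (∀ Q₀ : ℕ, ∃ Q, Q₀ ≤ Q ∧
          ∑ s ∈ Finset.range Q, ∑ t ∈ Finset.range Q,
              μ (closedBall (x (φ s)) (r (φ s)) ∩ closedBall (x (φ t)) (r (φ t))) ≤
            ENNReal.ofReal C / μ (ball y ρ) *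
              (∑ n ∈ Finset.range Q, μ (closedBall (x (φ n)) (r (φ n)))) ^ 2)) :
    μ (⋂ g : ℕ, ⋃ n, ⋃ _ : g ≤ n, closedBall (x n) (r n)) = 1 ∧
    ∀ κ : ℝ, 1 < κ → muAC μ x fun n => κ * r n := by
  classical
  set Sset : Set (Fin d → ℝ) := ⋂ g : ℕ, ⋃ n, ⋃ _ : g ≤ n, closedBall (x n) (r n) with hSset
  have hSm : MeasurableSet Sset :=
    MeasurableSet.iInter fun g => MeasurableSet.iUnion fun n => MeasurableSet.iUnion fun _ =>
      measurableSet_closedBall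
  have hfull : μ Sset = 1 := by
    apply full_of_ball_bound μ C hC Sset hSm
    intro y ρ hρ
    obtain ⟨φ, hmono, hsub, hdiv, hCE⟩ := h y ρ hρ
    exact ball_bound μ x r C hC y ρ φ hmono hsub hdiv hCE
  refine ⟨hfull, ?_⟩
  intro κ hκ
  have hκ0 : (0:ℝ) < κ := lt_trans one_pos hκ
  refine ⟨(((2 * MB d κ : ℕ)) : ℝ≥0∞)⁻¹, ?_, ?_⟩
  · rw [ENNReal.inv_pos]
    exact ENNReal.natCast_ne_top _
  intro Ω hΩ g
  by_cases hμΩ : μ Ω = 0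
  · refine ⟨∅, by simp, by simp, by simp, ?_⟩
    rw [hμΩ, mul_zero]
    exact zero_le
  -- admissible indices
  set Adm : Set ℕ := {n | g ≤ n ∧ closedBall (x n) (κ * r n) ⊆ Ω} with hAdm
  have hcov : Ω ∩ Sset ⊆ ⋃ n ∈ Adm, closedBall (x n) (r n) := by
    intro z hz
    obtain ⟨hzΩ, hzS⟩ := hz
    obtain ⟨ε, hε, hball⟩ := Metric.isOpen_iff.1 hΩ z hzΩ
    have hεκ : (0:ℝ) < ε / (κ + 1) := by positivity
    have hev : ∀ᶠ n in atTop, r n < ε / (κ + 1) := hr.eventually (gt_mem_nhds hεκ)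
    obtain ⟨g', hg'⟩ := eventually_atTop.1 hev
    obtain ⟨n, hn, hzn⟩ := Set.mem_iUnion₂.1 (Set.mem_iInter.1 hzS (max g g'))
    have hrn : r n < ε / (κ + 1) := hg' n (le_trans (le_max_right _ _) hn)
    have hKn : closedBall (x n) (κ * r n) ⊆ Ω := by
      refine Set.Subset.trans ?_ hball
      intro w hw
      rw [mem_ball]
      calc dist w z ≤ dist w (x n) + dist (x n) z := dist_triangle _ _ _
        _ ≤ κ * r n + r n := add_le_add (mem_closedBall.1 hw)
            (by rw [dist_comm]; exact mem_closedBall.1 hzn)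
        _ = (κ + 1) * r n := by ring
        _ < (κ + 1) * (ε / (κ + 1)) := by
            apply mul_lt_mul_of_pos_left hrn
            linarith
        _ = ε := by field_simp
    exact Set.mem_iUnion₂.2 ⟨n, ⟨le_trans (le_max_left _ _) hn, hKn⟩, hzn⟩
  have hΩS : μ (Ω ∩ Sset) = μ Ω := by
    have h1 : μ (Ω ∩ Sset) + μ (Ω \ Sset) = μ Ω := measure_inter_add_diff Ω hSm
    have h2 : μ (Ω \ Sset) = 0 := by
      have : μ Ssetᶜ = 0 := by
        rw [measure_compl hSm (measure_ne_top μ _), hfull, measure_univ, tsub_self]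
      exact measure_mono_null (Set.diff_subset_compl _ _) this
    rw [h2, add_zero] at h1
    exact h1
  have hbig : μ Ω ≤ μ (⋃ n ∈ Adm, closedBall (x n) (r n)) := by
    rw [← hΩS]
    exact measure_mono hcov
  -- pass to a finite subfamily
  set V : ℕ → Set (Fin d → ℝ) := fun m =>
    ⋃ n ∈ (Finset.range m).filter (· ∈ Adm), closedBall (x n) (r n) with hV
  have hVmono : Monotone V := by
    intro m m' hmm'
    apply Set.iUnion₂_subset
    intro n hn
    refine Set.subset_iUnion₂_of_subset n ?_ (le_refl _)
    rw [Finset.mem_filter] at hn ⊢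
    exact ⟨Finset.mem_range.2 (lt_of_lt_of_le (Finset.mem_range.1 hn.1) hmm'), hn.2⟩
  have hVU : ⋃ m, V m = ⋃ n ∈ Adm, closedBall (x n) (r n) := by
    ext z
    constructor
    · intro hz
      obtain ⟨m', hm'⟩ := Set.mem_iUnion.1 hz
      obtain ⟨n, hn, hzn⟩ := Set.mem_iUnion₂.1 hm'
      rw [Finset.mem_filter] at hn
      exact Set.mem_iUnion₂.2 ⟨n, hn.2, hzn⟩
    · intro hz
      obtain ⟨n, hn, hzn⟩ := Set.mem_iUnion₂.1 hz
      refine Set.mem_iUnion.2 ⟨n + 1, Set.mem_iUnion₂.2 ⟨n, ?_, hzn⟩⟩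
      rw [Finset.mem_filter]
      exact ⟨Finset.mem_range.2 (Nat.lt_succ_self n), hn⟩
  have htend : Tendsto (fun m => μ (V m)) atTop (𝓝 (μ (⋃ m, V m))) :=
    tendsto_measure_iUnion_atTop hVmono
  have hhalf : μ Ω / 2 < μ (⋃ m, V m) := by
    rw [hVU]
    calc μ Ω / 2 < μ Ω := ENNReal.half_lt_self hμΩ (measure_ne_top μ _)
      _ ≤ _ := hbig
  obtain ⟨m, hm⟩ := (htend.eventually (eventually_gt_nhds hhalf)).exists
  set G : Finset ℕ := (Finset.range m).filter (· ∈ Adm) with hG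
  obtain ⟨T, hTG, hTdisj, hTμ⟩ := cube_selection hκ x r hr0 μ G
  refine ⟨T, ?_, ?_, hTdisj, ?_⟩
  · intro n hn
    have := hTG n hn
    rw [hG, Finset.mem_filter] at this
    exact this.2.1
  · intro n hn
    have := hTG n hn
    rw [hG, Finset.mem_filter] at this
    exact this.2.2
  · -- measure bound
    have h1 : μ Ω ≤ 2 * μ (V m) := by
      have h2 : μ Ω = 2 * (μ Ω / 2) := by
        rw [ENNReal.mul_div_cancel' (by norm_num) (by norm_num)]
      rw [h2]
      exact mul_le_mul_right hm.le _
    have h3 : μ (V m) ≤ (MB d κ : ℝ≥0∞) * μ (⋃ n ∈ T, closedBall (x n) (κ * r n)) := hTμ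
    have h4 : μ Ω ≤ ((2 * MB d κ : ℕ) : ℝ≥0∞) * μ (⋃ n ∈ T, closedBall (x n) (κ * r n)) := by
      calc μ Ω ≤ 2 * μ (V m) := h1
        _ ≤ 2 * ((MB d κ : ℝ≥0∞) * μ (⋃ n ∈ T, closedBall (x n) (κ * r n))) :=
            mul_le_mul_right h3 _
        _ = ((2 * MB d κ : ℕ) : ℝ≥0∞) * μ (⋃ n ∈ T, closedBall (x n) (κ * r n)) := by
            push_cast
            ring
    have hMBpos : 0 < 2 * MB d κ := by have := MB_pos d κ; omega
    calc (((2 * MB d κ : ℕ)) : ℝ≥0∞)⁻¹ * μ Ω ≤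
        (((2 * MB d κ : ℕ)) : ℝ≥0∞)⁻¹ * (((2 * MB d κ : ℕ) : ℝ≥0∞) *
          μ (⋃ n ∈ T, closedBall (x n) (κ * r n))) := mul_le_mul_right h4 _
      _ = μ (⋃ n ∈ T, closedBall (x n) (κ * r n)) := by
          rw [← mul_assoc, ENNReal.inv_mul_cancel (by exact_mod_cast hMBpos.ne')
            (ENNReal.natCast_ne_top _), one_mul]
end
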